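/- arXiv:1507.04046 — 8 statements merged into one kernel-verified Lean document; each statement's English description precedes it below -/
import Mathlib

section
/- There exists a constant C > 0 such that for all integers n ≥ 2 and k ≥ 2 there is a distance labeling scheme, with labels of length at most ((k−1)/k)·log₂ n + log₂ k + C·log₂(1 + log₂ k), for paths with k nodes, positive integer edge weights, and total weight (diameter) less than n. Precisely: there exists a decoder d : List Bool → List Bool → ℕ such that for every weight function w : Fin (k−1) → ℕ with w t ≥ 1 for all t and Σ_t w t < n, there exists an encoder e : Fin k → List Bool with d (e i) (e j) = dist_w(i,j) for all i, j, and (e i).length ≤ ((k−1)/k)·log₂ n + log₂ k + C·log₂(1 + log₂ k) for all i. -/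
/-- The distance from node 0 to node `i` on a weighted path with `k` nodes and
edge weights `w`. -/
def pathD {k : ℕ} (w : Fin (k - 1) → ℕ) (i : Fin k) : ℕ :=
  ∑ t : Fin (k - 1), if (t : ℕ) < (i : ℕ) then w t else 0

/-- The distance between nodes `i` and `j` on a weighted path. -/
def pathDist {k : ℕ} (w : Fin (k - 1) → ℕ) (i j : Fin k) : ℕ :=
  ((pathD w j : ℤ) - (pathD w i : ℤ)).natAbs

namespace WPL

/-! ### Fixed-width binary encoding -/

def enc : ℕ → ℕ → List Bool
  | 0, _ => []
  | W + 1, v => (decide (v % 2 = 1)) :: enc W (v / 2)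

def dec : List Bool → ℕ
  | [] => 0
  | b :: l => (if b then 1 else 0) + 2 * dec l

lemma enc_length (W v : ℕ) : (enc W v).length = W := by
  induction W generalizing v with
  | zero => rfl
  | succ W ih => simp [enc, ih]

lemma mod_two_mul (v b : ℕ) : v % (2 * b) = v % 2 + 2 * (v / 2 % b) := by
  have h1 : v % (2 * b) % 2 = v % 2 := Nat.mod_mul_right_mod v 2 b
  have h2 : v % (2 * b) / 2 = v / 2 % b := Nat.mod_mul_right_div_self v 2 b
  have h3 : 2 * (v % (2 * b) / 2) + v % (2 * b) % 2 = v % (2 * b) :=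
    Nat.div_add_mod _ 2
  omega

lemma dec_enc (W v : ℕ) : dec (enc W v) = v % 2 ^ W := by
  induction W generalizing v with
  | zero => simp [enc, dec, Nat.mod_one]
  | succ W ih =>
    have hp : (2:ℕ) ^ (W + 1) = 2 * 2 ^ W := by ring
    rw [hp, mod_two_mul]
    simp only [enc, dec, ih]
    rcases Nat.mod_two_eq_zero_or_one v with h | h <;> simp [h]

lemma dec_enc_lt {W v : ℕ} (h : v < 2 ^ W) : dec (enc W v) = v := by
  rw [dec_enc, Nat.mod_eq_of_lt h]

/-! ### Choice of the mixed radix system -/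

lemma MEx (n k : ℕ) : ∃ m : ℕ, n ≤ (m + 1) * (m + 2) ^ (k - 1) :=
  ⟨n, le_trans (Nat.le_succ n)
    (Nat.le_mul_of_pos_right _ (Nat.pow_pos (by omega)))⟩

/-- The base `M`. -/
def Mm (n k : ℕ) : ℕ := Nat.find (MEx n k) + 1

lemma Mm_pos (n k : ℕ) : 0 < Mm n k := Nat.succ_pos _

lemma Mm_spec (n k : ℕ) : n ≤ Mm n k * (Mm n k + 1) ^ (k - 1) :=
  Nat.find_spec (MEx n k)

lemma Mm_min (n k : ℕ) (h : 2 ≤ Mm n k) :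
    (Mm n k - 1) * (Mm n k) ^ (k - 1) < n := by
  have h0 : 1 ≤ Nat.find (MEx n k) := by
    have : Mm n k = Nat.find (MEx n k) + 1 := rfl
    omega
  have := Nat.find_min (MEx n k) (m := Nat.find (MEx n k) - 1) (by omega)
  have e1 : Nat.find (MEx n k) - 1 + 1 = Mm n k - 1 := by
    unfold Mm; omega
  have e2 : Nat.find (MEx n k) - 1 + 2 = Mm n k := by
    unfold Mm; omega
  rw [e1, e2] at this
  omega

lemma bEx (n k : ℕ) :
    ∃ b : ℕ, b ≤ k - 1 ∧
      n ≤ Mm n k * ((Mm n k) ^ (k - 1 - b) * (Mm n k + 1) ^ b) := by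
  refine ⟨k - 1, le_rfl, ?_⟩
  simpa using Mm_spec n k

/-- The number of radices equal to `M+1`. -/
def bb (n k : ℕ) : ℕ := Nat.find (bEx n k)

lemma bb_le (n k : ℕ) : bb n k ≤ k - 1 := (Nat.find_spec (bEx n k)).1

lemma bb_spec (n k : ℕ) :
    n ≤ Mm n k * ((Mm n k) ^ (k - 1 - bb n k) * (Mm n k + 1) ^ bb n k) :=
  (Nat.find_spec (bEx n k)).2

lemma bb_min (n k : ℕ) (h : 1 ≤ bb n k) :
    Mm n k * ((Mm n k) ^ (k - 1 - (bb n k - 1)) * (Mm n k + 1) ^ (bb n k - 1)) < n := by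
  have hbb : bb n k = Nat.find (bEx n k) := rfl
  have := Nat.find_min (bEx n k) (m := bb n k - 1) (by omega)
  push_neg at this
  exact this (le_trans (by omega) (bb_le n k))

/-- The radix at position `t` (for `t < k-1`). -/
def Sr (n k t : ℕ) : ℕ := if t < bb n k then Mm n k + 1 else Mm n k

lemma Sr_pos (n k t : ℕ) : 0 < Sr n k t := by
  unfold Sr; split <;> [omega; exact Mm_pos n k]

lemma Mm_le_Sr (n k t : ℕ) : Mm n k ≤ Sr n k t := by
  unfold Sr; split <;> omega

/-- Products of the radices. -/
def PP (n k : ℕ) : ℕ → ℕ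
  | 0 => 1
  | t + 1 => PP n k t * Sr n k t

lemma PP_pos (n k : ℕ) : ∀ t, 0 < PP n k t
  | 0 => Nat.one_pos
  | t + 1 => Nat.mul_pos (PP_pos n k t) (Sr_pos n k t)

lemma PP_mul_of_le (n k : ℕ) {s t : ℕ} (h : s ≤ t) :
    ∃ c, PP n k t = PP n k s * c := by
  induction t with
  | zero =>
    refine ⟨1, ?_⟩
    have : s = 0 := by omega
    simp [this, PP]
  | succ t ih =>
    rcases Nat.lt_or_ge s (t + 1) with h' | h'
    · obtain ⟨c, hc⟩ := ih (by omega)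
      exact ⟨c * Sr n k t, by rw [PP, hc]; ring⟩
    · have : s = t + 1 := by omega
      exact ⟨1, by simp [this]⟩

lemma PP_closed (n k : ℕ) : ∀ j, j ≤ k - 1 →
    PP n k j = (Mm n k) ^ (j - min j (bb n k)) * (Mm n k + 1) ^ (min j (bb n k)) := by
  intro j
  induction j with
  | zero => simp [PP]
  | succ j ih =>
    intro hj
    rw [PP, ih (by omega)]
    unfold Sr
    rcases Nat.lt_or_ge j (bb n k) with h | h
    · have e1 : min j (bb n k) = j := by omega
      have e2 : min (j + 1) (bb n k) = j + 1 := by omega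
      simp only [if_pos h, e1, e2]
      rw [Nat.sub_self, Nat.sub_self, pow_zero, pow_succ]
      ring
    · have e1 : min j (bb n k) = bb n k := by omega
      have e2 : min (j + 1) (bb n k) = bb n k := by omega
      simp only [if_neg (by omega : ¬ j < bb n k), e1, e2]
      have e3 : j + 1 - bb n k = (j - bb n k) + 1 := by omega
      rw [e3, pow_succ]
      ring

lemma Q_ge (n k : ℕ) : n ≤ Mm n k * PP n k (k - 1) := by
  rw [PP_closed n k (k - 1) le_rfl]
  have : min (k - 1) (bb n k) = bb n k := by
    have := bb_le n k; omega
  rw [this]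
  exact bb_spec n k

lemma Q_le (n k : ℕ) (hn : 1 ≤ n) : Mm n k * PP n k (k - 1) ≤ 2 * n := by
  have hM := Mm_pos n k
  rw [PP_closed n k (k - 1) le_rfl]
  have hmin : min (k - 1) (bb n k) = bb n k := by
    have := bb_le n k; omega
  rw [hmin]
  rcases Nat.lt_or_ge (bb n k) 1 with hb | hb
  · -- bb = 0
    have hb0 : bb n k = 0 := by omega
    rw [hb0]
    simp only [pow_zero, mul_one, Nat.sub_zero]
    rcases Nat.lt_or_ge (Mm n k) 2 with hM1 | hM2
    · have : Mm n k = 1 := by omega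
      simp [this]; omega
    · have hmin2 := Mm_min n k hM2
      -- (M-1) * M^(k-1) < n, want M * M^(k-1) ≤ 2n
      have h1 : Mm n k * Mm n k ^ (k - 1) ≤ 2 * ((Mm n k - 1) * Mm n k ^ (k - 1)) := by
        have : Mm n k ≤ 2 * (Mm n k - 1) := by omega
        calc Mm n k * Mm n k ^ (k - 1) ≤ (2 * (Mm n k - 1)) * Mm n k ^ (k - 1) :=
              Nat.mul_le_mul_right _ this
          _ = 2 * ((Mm n k - 1) * Mm n k ^ (k - 1)) := by ring
      omega
  · -- bb ≥ 1
    have hmin1 := bb_min n k hb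
    have hble := bb_le n k
    obtain ⟨c, hc⟩ : ∃ c, bb n k = c + 1 := ⟨bb n k - 1, by omega⟩
    have e1 : k - 1 - (bb n k - 1) = (k - 1 - bb n k) + 1 := by omega
    have e2 : bb n k - 1 = c := by omega
    rw [e1, e2] at hmin1
    rw [hc]
    set M := Mm n k
    set A := k - 1 - bb n k with hA
    set P := M * (M ^ (A + 1) * (M + 1) ^ c) with hP
    have hPn : P + 1 ≤ n := hmin1
    have key : M * (M ^ A * (M + 1) ^ (c + 1)) * M = P * (M + 1) := by
      rw [hP, pow_succ, pow_succ]; ring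
    have k2 : P * (M + 1) ≤ n * (M + 1) :=
      Nat.mul_le_mul_right _ (by omega)
    have k3 : n * (M + 1) ≤ 2 * n * M := by
      have : n * 1 ≤ n * M := Nat.mul_le_mul_left _ hM
      nlinarith
    have h3 : M * (M ^ A * (M + 1) ^ (c + 1)) * M ≤ (2 * n) * M := by
      calc M * (M ^ A * (M + 1) ^ (c + 1)) * M = P * (M + 1) := key
        _ ≤ n * (M + 1) := k2
        _ ≤ 2 * n * M := k3
        _ = (2 * n) * M := by ring
    have hc2 : k - 1 - (c + 1) = A := by rw [hA, hc]
    rw [hc2]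
    exact Nat.le_of_mul_le_mul_right h3 hM

lemma n_le_pow (n k : ℕ) (hk : 1 ≤ k) : n ≤ (Mm n k + 1) ^ k := by
  have h := Mm_spec n k
  have : Mm n k * (Mm n k + 1) ^ (k - 1) ≤ (Mm n k + 1) * (Mm n k + 1) ^ (k - 1) :=
    Nat.mul_le_mul_right _ (by omega)
  have e : (Mm n k + 1) * (Mm n k + 1) ^ (k - 1) = (Mm n k + 1) ^ k := by
    rw [← pow_succ']
    congr 1
    omega
  omega

/-! ### Digit manipulation -/

lemma digit_add_high (y a c P R : ℕ) (hP : 0 < P) :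
    (y + a * (P * R * c)) / P % R = y / P % R := by
  have e : a * (P * R * c) = a * (R * c) * P := by ring
  rw [e, Nat.add_mul_div_right _ _ hP]
  have e2 : y / P + a * (R * c) = y / P + a * c * R := by ring
  rw [e2, Nat.add_mul_mod_self_right]

lemma digit_add_set (y s P R : ℕ) (hP : 0 < P) :
    (y + s * P) / P % R = (y / P + s) % R := by
  rw [Nat.add_mul_div_right _ _ hP]

/-! ### The shift construction -/

def Fsh (n k : ℕ) (DD : ℕ → ℕ) : ℕ → ℕ
  | 0 => 0
  | t + 1 =>
    Fsh n k DD t +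
      ((DD (t + 1) % Mm n k +
        (Sr n k t - (DD (t + 1) + Fsh n k DD t) / (Mm n k * PP n k t) % Sr n k t))
          % Sr n k t) *
        (Mm n k * PP n k t)

lemma Fsh_inv (n k : ℕ) (DD : ℕ → ℕ) : ∀ t : ℕ,
    (Mm n k ∣ Fsh n k DD t) ∧ Fsh n k DD t < Mm n k * PP n k t ∧
    ∀ s, s < t →
      (DD (s + 1) + Fsh n k DD t) / (Mm n k * PP n k s) % Sr n k s
        = DD (s + 1) % Mm n k := by
  intro t
  induction t with
  | zero =>
    refine ⟨dvd_zero _, ?_, by omega⟩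
    simpa [PP, Fsh] using Mm_pos n k
  | succ t ih =>
    obtain ⟨ih1, ih2, ih3⟩ := ih
    have hMP : 0 < Mm n k * PP n k t := Nat.mul_pos (Mm_pos n k) (PP_pos n k t)
    have hS : 0 < Sr n k t := Sr_pos n k t
    set σs : ℕ :=
      (DD (t + 1) % Mm n k +
        (Sr n k t - (DD (t + 1) + Fsh n k DD t) / (Mm n k * PP n k t) % Sr n k t))
          % Sr n k t with hσs
    have hF1 : Fsh n k DD (t + 1) = Fsh n k DD t + σs * (Mm n k * PP n k t) := rfl
    have hσlt : σs < Sr n k t := Nat.mod_lt _ hS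
    refine ⟨?_, ?_, ?_⟩
    · rw [hF1]
      exact dvd_add ih1 (Dvd.dvd.mul_left (Dvd.intro _ rfl) σs)
    · rw [hF1]
      have : Fsh n k DD t + σs * (Mm n k * PP n k t)
          < (1 + σs) * (Mm n k * PP n k t) := by
        have := ih2; nlinarith
      have h2 : (1 + σs) * (Mm n k * PP n k t) ≤ Sr n k t * (Mm n k * PP n k t) :=
        Nat.mul_le_mul_right _ (by omega)
      have e : Sr n k t * (Mm n k * PP n k t) = Mm n k * PP n k (t + 1) := by
        rw [PP]; ring
      omega
    · intro s hs
      rcases Nat.lt_or_ge s t with h' | h'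
      · -- old digits are preserved
        obtain ⟨c, hc⟩ := PP_mul_of_le n k (show s + 1 ≤ t by omega)
        rw [hF1, ← Nat.add_assoc]
        have e : Mm n k * PP n k t = (Mm n k * PP n k s) * Sr n k s * c := by
          rw [hc, PP]; ring
        rw [e]
        rw [digit_add_high _ _ _ _ _ (Nat.mul_pos (Mm_pos n k) (PP_pos n k s))]
        exact ih3 s h'
      · -- s = t : the new digit is set correctly
        have hst : s = t := by omega
        subst hst
        rw [hF1, ← Nat.add_assoc]
        set dg : ℕ := (DD (s + 1) + Fsh n k DD s) / (Mm n k * PP n k s) % Sr n k s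
          with hdg
        have hdglt : dg < Sr n k s := Nat.mod_lt _ hS
        have hl : DD (s + 1) % Mm n k < Sr n k s :=
          lt_of_lt_of_le (Nat.mod_lt _ (Mm_pos n k)) (Mm_le_Sr n k s)
        rw [digit_add_set _ _ _ _ hMP] at *
        rw [← Nat.mod_add_mod, ← hdg, hσs, Nat.add_mod_mod]
        have e2 : dg + (DD (s + 1) % Mm n k + (Sr n k s - dg))
            = DD (s + 1) % Mm n k + Sr n k s := by omega
        rw [e2, Nat.add_mod_right, Nat.mod_eq_of_lt (by omega)]

/-! ### Decoder -/

def Klen (k : ℕ) : ℕ := Nat.log 2 k + 1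

def Wlen (n k : ℕ) : ℕ := Nat.log 2 (2 * PP n k (k - 1)) + 1

def Xrec (n k i H : ℕ) : ℕ :=
  Mm n k * H + (if i = 0 then 0 else H / PP n k (i - 1) % Sr n k (i - 1))

def dec2 (n k : ℕ) (l : List Bool) : ℕ :=
  Xrec n k (dec (l.take (Klen k))) (dec (l.drop (Klen k)))

def dFun (n k : ℕ) (l1 l2 : List Bool) : ℕ :=
  max (dec2 n k l1) (dec2 n k l2) - min (dec2 n k l1) (dec2 n k l2)

lemma Xrec_eq (n k : ℕ) (DD : ℕ → ℕ) (hDD0 : DD 0 = 0) (i : ℕ) (hik : i ≤ k - 1) :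
    Xrec n k i ((DD i + Fsh n k DD (k - 1)) / Mm n k) = DD i + Fsh n k DD (k - 1) := by
  obtain ⟨h1, h2, h3⟩ := Fsh_inv n k DD (k - 1)
  set σ := Fsh n k DD (k - 1)
  have hM := Mm_pos n k
  rcases Nat.eq_zero_or_pos i with hi | hi
  · subst hi
    simp only [Xrec, if_pos rfl, Nat.add_zero, hDD0, Nat.zero_add]
    exact Nat.mul_div_cancel' h1
  · have hi0 : i ≠ 0 := by omega
    simp only [Xrec, if_neg hi0]
    have hdd : (DD i + σ) / Mm n k / PP n k (i - 1)
        = (DD i + σ) / (Mm n k * PP n k (i - 1)) :=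
      Nat.div_div_eq_div_mul _ _ _
    rw [hdd]
    have hs : i - 1 < k - 1 := by omega
    have hdig := h3 (i - 1) hs
    have e : i - 1 + 1 = i := by omega
    rw [e] at hdig
    rw [hdig]
    obtain ⟨c, hc⟩ := h1
    have e2 : DD i % Mm n k = (DD i + σ) % Mm n k := by
      rw [hc, Nat.add_mul_mod_self_left]
    rw [e2]
    exact Nat.div_add_mod _ _

lemma pathD_lt {k n : ℕ} (w : Fin (k - 1) → ℕ) (hw : (∑ t : Fin (k - 1), w t) < n)
    (i : Fin k) : pathD w i < n := by
  refine lt_of_le_of_lt ?_ hw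
  unfold pathD
  refine Finset.sum_le_sum ?_
  intro t _
  split <;> simp

lemma natAbs_sub_cast (a b : ℕ) : ((a : ℤ) - b).natAbs = max a b - min a b := by
  rcases le_total a b with h | h
  · rw [max_eq_right h, min_eq_left h]; omega
  · rw [max_eq_left h, min_eq_right h]; omega

/-! ### Nat.log vs logb -/

lemma logb_mono {x y : ℝ} (hx : 0 < x) (h : x ≤ y) : Real.logb 2 x ≤ Real.logb 2 y :=
  Real.logb_le_logb_of_le (by norm_num) hx h

lemma logb_two : Real.logb 2 (2:ℝ) = 1 := Real.logb_self_eq_one (by norm_num)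

lemma natlog_le_logb (m : ℕ) (hm : 1 ≤ m) : (Nat.log 2 m : ℝ) ≤ Real.logb 2 m := by
  have h1 : (2:ℝ) ^ (Nat.log 2 m) ≤ m := by
    exact_mod_cast Nat.pow_log_le_self 2 (by omega)
  have h2 : Real.logb 2 ((2:ℝ) ^ (Nat.log 2 m)) ≤ Real.logb 2 m :=
    logb_mono (by positivity) h1
  rwa [Real.logb_pow, logb_two, mul_one] at h2

end WPL

open WPL in
theorem weighted_path_bounded_diameter_upper_bound :
    ∃ C : ℝ, 0 < C ∧ ∀ n k : ℕ, 2 ≤ n → 2 ≤ k →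
      ∃ d : List Bool → List Bool → ℕ,
        ∀ w : Fin (k - 1) → ℕ,
          (∀ t, 1 ≤ w t) → (∑ t : Fin (k - 1), w t) < n →
          ∃ e : Fin k → List Bool,
            (∀ i j : Fin k, d (e i) (e j) = pathDist w i j) ∧
            ∀ i : Fin k, ((e i).length : ℝ) ≤
              ((k : ℝ) - 1) / (k : ℝ) * Real.logb 2 n + Real.logb 2 k +
                C * Real.logb 2 (1 + Real.logb 2 k) := by
  refine ⟨5, by norm_num, ?_⟩
  intro n k hn hk
  refine ⟨dFun n k, ?_⟩
  intro w hw1 hwsum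
  classical
  -- the distances from node 0
  set DD : ℕ → ℕ := fun t => if h : t < k then pathD w ⟨t, h⟩ else 0 with hDD
  have hDD0 : DD 0 = 0 := by
    simp only [hDD, dif_pos (by omega : 0 < k)]
    unfold pathD
    apply Finset.sum_eq_zero
    intro t _
    simp
  have hDDi : ∀ i : Fin k, DD i.val = pathD w i := by
    intro i
    simp only [hDD, dif_pos i.isLt]
  have hDDlt : ∀ i : Fin k, DD i.val < n := by
    intro i
    rw [hDDi]
    exact pathD_lt w hwsum i
  set M := Mm n k with hM
  set Q := PP n k (k - 1) with hQ
  set σ := Fsh n k DD (k - 1) with hσ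
  obtain ⟨hinv1, hinv2, hinv3⟩ := Fsh_inv n k DD (k - 1)
  have hMpos : 0 < M := Mm_pos n k
  have hQpos : 0 < Q := PP_pos n k (k - 1)
  have hnMQ : n ≤ M * Q := Q_ge n k
  have hMQ2n : M * Q ≤ 2 * n := Q_le n k (by omega)
  -- the labels
  set H : Fin k → ℕ := fun i => (DD i.val + σ) / M with hH
  set e : Fin k → List Bool :=
    fun i => enc (Klen k) i.val ++ enc (Wlen n k) (H i) with he
  have hXlt : ∀ i : Fin k, DD i.val + σ < 2 * (M * Q) := by
    intro i
    have h1 := hDDlt i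
    have h2 : σ < M * Q := hinv2
    omega
  have hHlt : ∀ i : Fin k, H i < 2 * Q := by
    intro i
    rw [hH]
    rw [Nat.div_lt_iff_lt_mul hMpos]
    have := hXlt i
    have e2 : 2 * Q * M = 2 * (M * Q) := by ring
    omega
  -- decoding
  have hdec2 : ∀ i : Fin k, dec2 n k (e i) = DD i.val + σ := by
    intro i
    have hlen : (enc (Klen k) i.val).length = Klen k := enc_length _ _
    have htake : (e i).take (Klen k) = enc (Klen k) i.val := by
      have h : List.take (enc (Klen k) i.val).length (enc (Klen k) i.val ++ enc (Wlen n k) (H i))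
          = enc (Klen k) i.val := List.take_left
      rw [enc_length] at h
      rw [he]
      exact h
    have hdrop : (e i).drop (Klen k) = enc (Wlen n k) (H i) := by
      have h : List.drop (enc (Klen k) i.val).length (enc (Klen k) i.val ++ enc (Wlen n k) (H i))
          = enc (Wlen n k) (H i) := List.drop_left
      rw [enc_length] at h
      rw [he]
      exact h
    have hiv : dec ((e i).take (Klen k)) = i.val := by
      rw [htake]
      apply dec_enc_lt
      calc i.val < k := i.isLt
        _ < 2 ^ (Nat.log 2 k + 1) := Nat.lt_pow_succ_log_self (by norm_num) k
    have hHv : dec ((e i).drop (Klen k)) = H i := by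
      rw [hdrop]
      apply dec_enc_lt
      calc H i < 2 * Q := hHlt i
        _ < 2 ^ (Nat.log 2 (2 * Q) + 1) := Nat.lt_pow_succ_log_self (by norm_num) _
    unfold dec2
    rw [hiv, hHv]
    have := Xrec_eq n k DD hDD0 i.val (by have := i.isLt; omega)
    rw [← hσ, ← hM] at this
    rw [hH]
    exact this
  refine ⟨e, ?_, ?_⟩
  · intro i j
    unfold dFun
    rw [hdec2 i, hdec2 j]
    unfold pathDist
    rw [← hDDi i, ← hDDi j]
    rw [natAbs_sub_cast]
    omega
  · intro i
    -- length bound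
    have hlen : ((e i).length : ℝ) = (Klen k : ℝ) + (Wlen n k : ℝ) := by
      rw [he]
      simp only [List.length_append, enc_length]
      push_cast
      ring
    rw [hlen]
    have hklen : (Klen k : ℝ) ≤ Real.logb 2 k + 1 := by
      unfold Klen
      push_cast
      have := natlog_le_logb k (by omega)
      linarith
    have hQ1 : (1:ℕ) ≤ 2 * Q := by omega
    have hwlen : (Wlen n k : ℝ) ≤ Real.logb 2 (2 * Q) + 1 := by
      unfold Wlen
      push_cast
      have := natlog_le_logb (2 * Q) hQ1
      push_cast at this
      linarith
    -- logb A := logb 2 n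
    have hn1R : (1:ℝ) < (n:ℝ) := by exact_mod_cast (by omega : 1 < n)
    have hk1R : (1:ℝ) < (k:ℝ) := by exact_mod_cast (by omega : 1 < k)
    have hMR : (1:ℝ) ≤ (M:ℝ) := by exact_mod_cast hMpos
    have hQR : (1:ℝ) ≤ (Q:ℝ) := by exact_mod_cast hQpos
    have hlogM : 0 ≤ Real.logb 2 (M:ℝ) := Real.logb_nonneg (by norm_num : (1:ℝ) < 2) hMR
    have hlogQ : 0 ≤ Real.logb 2 (Q:ℝ) := Real.logb_nonneg (by norm_num : (1:ℝ) < 2) hQR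
    have hlogn : 0 < Real.logb 2 (n:ℝ) := Real.logb_pos (by norm_num : (1:ℝ) < 2) hn1R
    -- logb(2Q) = 1 + logb Q
    have hlog2Q : Real.logb 2 ((2 * Q : ℕ) : ℝ) = 1 + Real.logb 2 (Q:ℝ) := by
      push_cast
      rw [Real.logb_mul (by norm_num) (by positivity)]
      rw [logb_two]
    -- logb M + logb Q ≤ 1 + logb n
    have hMQle : Real.logb 2 (M:ℝ) + Real.logb 2 (Q:ℝ) ≤ 1 + Real.logb 2 (n:ℝ) := by
      have h1 : Real.logb 2 ((M:ℝ) * Q) ≤ Real.logb 2 ((2*n : ℕ) : ℝ) := by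
        apply logb_mono (by positivity)
        exact_mod_cast hMQ2n
      rw [Real.logb_mul (by positivity) (by positivity)] at h1
      have h2 : Real.logb 2 ((2*n : ℕ) : ℝ) = 1 + Real.logb 2 (n:ℝ) := by
        push_cast
        rw [Real.logb_mul (by norm_num) (by positivity)]
        rw [logb_two]
      linarith [h1, h2.le]
    -- logb n ≤ k * (1 + logb M)
    have hnM : Real.logb 2 (n:ℝ) ≤ (k:ℝ) * (1 + Real.logb 2 (M:ℝ)) := by
      have h1 : (n:ℝ) ≤ ((M + 1 : ℕ) : ℝ) ^ k := by
        exact_mod_cast n_le_pow n k (by omega)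
      have h2 : Real.logb 2 (n:ℝ) ≤ Real.logb 2 (((M + 1 : ℕ) : ℝ) ^ k) :=
        logb_mono (by positivity) h1
      rw [Real.logb_pow] at h2
      have h3 : Real.logb 2 ((M + 1 : ℕ) : ℝ) ≤ 1 + Real.logb 2 (M:ℝ) := by
        have h4 : ((M + 1 : ℕ) : ℝ) ≤ 2 * (M:ℝ) := by
          push_cast; linarith
        have h5 : Real.logb 2 ((M + 1 : ℕ) : ℝ) ≤ Real.logb 2 (2 * (M:ℝ)) :=
          logb_mono (by positivity) h4
        rw [Real.logb_mul (by norm_num) (by positivity), logb_two] at h5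
        linarith
      calc Real.logb 2 (n:ℝ) ≤ (k:ℝ) * Real.logb 2 ((M + 1 : ℕ) : ℝ) := h2
        _ ≤ (k:ℝ) * (1 + Real.logb 2 (M:ℝ)) := by
            apply mul_le_mul_of_nonneg_left h3
            positivity
    -- logb Q ≤ (k-1)/k * logb n + 2
    have hQbound : Real.logb 2 (Q:ℝ) ≤ ((k:ℝ) - 1) / (k:ℝ) * Real.logb 2 (n:ℝ) + 2 := by
      have hkpos : (0:ℝ) < (k:ℝ) := by linarith
      have h1 : Real.logb 2 (n:ℝ) / (k:ℝ) - 1 ≤ Real.logb 2 (M:ℝ) := by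
        have hdiv : Real.logb 2 (n:ℝ) / (k:ℝ) ≤ 1 + Real.logb 2 (M:ℝ) := by
          rw [div_le_iff₀ hkpos]
          nlinarith [hnM]
        linarith
      have h2 : Real.logb 2 (Q:ℝ) ≤ 1 + Real.logb 2 (n:ℝ) - Real.logb 2 (M:ℝ) := by
        linarith
      have h3 : ((k:ℝ) - 1) / (k:ℝ) * Real.logb 2 (n:ℝ)
          = Real.logb 2 (n:ℝ) - Real.logb 2 (n:ℝ) / (k:ℝ) := by
        field_simp
      linarith
    -- 1 ≤ logb 2 (1 + logb 2 k)
    have hlogk1 : (1:ℝ) ≤ Real.logb 2 (k:ℝ) := by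
      have : Real.logb 2 (2:ℝ) ≤ Real.logb 2 (k:ℝ) := by
        apply logb_mono (by norm_num)
        exact_mod_cast (by omega : 2 ≤ k)
      rwa [logb_two] at this
    have hfinal5 : (1:ℝ) ≤ Real.logb 2 (1 + Real.logb 2 (k:ℝ)) := by
      have h1 : (2:ℝ) ≤ 1 + Real.logb 2 (k:ℝ) := by linarith
      have h2 : Real.logb 2 (2:ℝ) ≤ Real.logb 2 (1 + Real.logb 2 (k:ℝ)) :=
        logb_mono (by norm_num) h1
      rwa [logb_two] at h2
    have hwq : (Wlen n k : ℝ) ≤ Real.logb 2 (Q:ℝ) + 2 := by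
      have := hwlen
      have e2 : Real.logb 2 ((2 * Q : ℕ) : ℝ) = 1 + Real.logb 2 (Q:ℝ) := hlog2Q
      push_cast at this e2 ⊢
      linarith
    calc (Klen k : ℝ) + (Wlen n k : ℝ)
        ≤ (Real.logb 2 k + 1) + (Real.logb 2 (Q:ℝ) + 2) := by linarith
      _ ≤ (Real.logb 2 k + 1) + (((k:ℝ) - 1) / (k:ℝ) * Real.logb 2 (n:ℝ) + 2 + 2) := by
          linarith
      _ = ((k:ℝ) - 1) / (k:ℝ) * Real.logb 2 n + Real.logb 2 k + 5 := by ring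
      _ ≤ ((k:ℝ) - 1) / (k:ℝ) * Real.logb 2 n + Real.logb 2 k +
            5 * Real.logb 2 (1 + Real.logb 2 k) := by linarith
end

section
/- Let k ≥ 1 and ℓ ≥ 1 be integers. For every function d : Fin k → ℕ there exists a natural number x with 2^ℓ ∣ x and x < 2^(k·ℓ) such that for every i with 1 ≤ i < k, the i-th block of ℓ binary digits of d i + x is all zeros, i.e. (⌊(d i + x) / 2^(i·ℓ)⌋) % 2^ℓ = 0. -/
private def segX (ℓ : ℕ) (f : ℕ → ℕ) : ℕ → ℕ
  | 0 => 0
  | n+1 => segX ℓ f n +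
      ((2^ℓ - (f (n+1) + segX ℓ f n) / 2^((n+1)*ℓ) % 2^ℓ) % 2^ℓ) * 2^((n+1)*ℓ)

private lemma segX_dvd (ℓ : ℕ) (f : ℕ → ℕ) (hℓ : 1 ≤ ℓ) (n : ℕ) :
    2^ℓ ∣ segX ℓ f n := by
  induction n with
  | zero => simp [segX]
  | succ n ih =>
      refine Dvd.dvd.add ih (Dvd.dvd.mul_left ?_ _)
      exact pow_dvd_pow 2 (Nat.le_mul_of_pos_left ℓ (Nat.succ_pos n))

private lemma segX_lt (ℓ : ℕ) (f : ℕ → ℕ) (n : ℕ) :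
    segX ℓ f n < 2^((n+1)*ℓ) := by
  induction n with
  | zero => simpa [segX] using Nat.pos_pow_of_pos ℓ (by norm_num)
  | succ n ih =>
      have hc : (2^ℓ - (f (n+1) + segX ℓ f n) / 2^((n+1)*ℓ) % 2^ℓ) % 2^ℓ < 2^ℓ :=
        Nat.mod_lt _ (Nat.pow_pos (by norm_num))
      have h2 : 2^((n+1+1)*ℓ) = 2^ℓ * 2^((n+1)*ℓ) := by
        rw [← pow_add]; ring_nf
      have := Nat.add_lt_add_of_lt_of_le ih
        (Nat.mul_le_mul_right (2^((n+1)*ℓ)) (Nat.le_pred_of_lt hc))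
      rw [segX, h2]
      calc segX ℓ f n +
          ((2^ℓ - (f (n+1) + segX ℓ f n) / 2^((n+1)*ℓ) % 2^ℓ) % 2^ℓ) * 2^((n+1)*ℓ)
          < 2^((n+1)*ℓ) + (2^ℓ - 1) * 2^((n+1)*ℓ) := this
        _ = 2^ℓ * 2^((n+1)*ℓ) := by
            rw [Nat.sub_one_mul]
            have : 2^((n+1)*ℓ) ≤ 2^ℓ * 2^((n+1)*ℓ) :=
              Nat.le_mul_of_pos_left _ (Nat.pow_pos (by norm_num))
            omega

private lemma segX_ge (ℓ : ℕ) (f : ℕ → ℕ) {n m : ℕ} (h : n ≤ m) :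
    ∃ t, segX ℓ f m = segX ℓ f n + t * 2^((n+1)*ℓ) := by
  induction m with
  | zero =>
      interval_cases n
      exact ⟨0, by simp⟩
  | succ m ih =>
      rcases Nat.lt_or_ge n (m+1) with h' | h'
      · obtain ⟨t, ht⟩ := ih (Nat.lt_succ_iff.mp h')
        have hd : 2^((n+1)*ℓ) ∣ 2^((m+1)*ℓ) :=
          pow_dvd_pow 2 (Nat.mul_le_mul_right ℓ (by omega))
        obtain ⟨s, hs⟩ := hd
        refine ⟨t + ((2^ℓ - (f (m+1) + segX ℓ f m) / 2^((m+1)*ℓ) % 2^ℓ) % 2^ℓ) * s, ?_⟩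
        rw [segX, ht, hs]; ring
      · have : n = m + 1 := le_antisymm h h'
        subst this
        exact ⟨0, by simp⟩

private lemma segX_block (ℓ : ℕ) (f : ℕ → ℕ) (n m : ℕ) (hm : n + 1 ≤ m) :
    (f (n+1) + segX ℓ f m) / 2^((n+1)*ℓ) % 2^ℓ = 0 := by
  set P := 2^((n+1)*ℓ) with hP
  have hPpos : 0 < P := Nat.pow_pos (by norm_num)
  have hLpos : 0 < 2^ℓ := Nat.pow_pos (by norm_num)
  set a := f (n+1) + segX ℓ f n with ha
  set c := (2^ℓ - a / P % 2^ℓ) % 2^ℓ with hc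
  -- step result at m = n+1
  have hstep : (f (n+1) + segX ℓ f (n+1)) / P % 2^ℓ = 0 := by
    have : f (n+1) + segX ℓ f (n+1) = a + c * P := by
      rw [segX]; ring
    rw [this, Nat.add_mul_div_right _ _ hPpos, Nat.add_mod]
    have hclt : c < 2^ℓ := Nat.mod_lt _ hLpos
    rw [Nat.mod_eq_of_lt hclt]
    set r := a / P % 2^ℓ with hr
    have hrlt : r < 2^ℓ := Nat.mod_lt _ hLpos
    rcases Nat.eq_zero_or_pos r with h0 | h0
    · simp [hc, ← hr, h0]
    · have hceq : c = 2^ℓ - r := by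
        rw [hc]; exact Nat.mod_eq_of_lt (by omega)
      rw [hceq]
      have : r + (2^ℓ - r) = 2^ℓ := by omega
      rw [this, Nat.mod_self]
  obtain ⟨t, ht⟩ := segX_ge ℓ f hm
  have h2 : 2^((n+1+1)*ℓ) = 2^ℓ * P := by rw [hP, ← pow_add]; ring_nf
  rw [ht, h2]
  have heq : f (n+1) + (segX ℓ f (n+1) + t * (2^ℓ * P)) =
      (f (n+1) + segX ℓ f (n+1)) + (t * 2^ℓ) * P := by ring
  rw [heq, Nat.add_mul_div_right _ _ hPpos, Nat.add_mul_mod_self_right]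
  exact hstep

theorem exists_shift_zeroing_segments (k ℓ : ℕ) (hk : 1 ≤ k) (hℓ : 1 ≤ ℓ)
    (d : Fin k → ℕ) :
    ∃ x : ℕ, 2 ^ ℓ ∣ x ∧ x < 2 ^ (k * ℓ) ∧
      ∀ i : Fin k, 1 ≤ (i : ℕ) →
        ((d i + x) / 2 ^ ((i : ℕ) * ℓ)) % 2 ^ ℓ = 0 := by
  set f : ℕ → ℕ := fun n => if h : n < k then d ⟨n, h⟩ else 0 with hf
  refine ⟨segX ℓ f (k-1), segX_dvd ℓ f hℓ _, ?_, ?_⟩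
  · have := segX_lt ℓ f (k-1)
    have hk1 : k - 1 + 1 = k := by omega
    rwa [hk1] at this
  · intro i hi
    obtain ⟨n, hn⟩ : ∃ n, (i : ℕ) = n + 1 := ⟨(i : ℕ) - 1, by omega⟩
    have hik : (i : ℕ) < k := i.isLt
    have hd : d i = f (n + 1) := by
      rw [hf]
      simp only
      rw [dif_pos (hn ▸ hik)]
      congr 1
      exact Fin.ext hn
    rw [hn, hd]
    exact segX_block ℓ f n (k-1) (by omega)
end

section
/- There exists a constant C > 0 such that for all integers n ≥ 2 and k ≥ 2 the following holds: for every decoder d : List Bool → List Bool → ℕ and every family of encoders assigning to each weight function w : Fin (k−1) → ℕ with 1 ≤ w t ≤ n an encoder e_w : Fin k → List Bool satisfying d (e_w i) (e_w j) = dist_w(i,j) for all i, j, there exist a weight function w and a node i such that (e_w i).length ≥ ((k−1)/k)·log₂ n + log₂ k − C. -/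
/-- Encode a list of booleans as a natural number (binary with leading 1). -/
def encW : List Bool → ℕ
  | [] => 1
  | b :: l => 2 * encW l + cond b 1 0

lemma one_le_encW : ∀ l, 1 ≤ encW l
  | [] => le_refl 1
  | b :: l => by
    have := one_le_encW l
    cases b <;> simp [encW] <;> omega

lemma encW_lt : ∀ l : List Bool, encW l < 2 ^ (l.length + 1)
  | [] => by simp [encW]
  | b :: l => by
    have := encW_lt l
    cases b <;> simp [encW, pow_succ] <;> omega

lemma encW_injective : Function.Injective encW := by
  intro l1
  induction l1 with
  | nil =>
    intro l2 h
    cases l2 with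
    | nil => rfl
    | cons b t =>
      exfalso
      have := one_le_encW t
      cases b <;> simp [encW] at h <;> omega
  | cons b t ih =>
    intro l2 h
    cases l2 with
    | nil =>
      exfalso
      have := one_le_encW t
      cases b <;> simp [encW] at h <;> omega
    | cons b' t' =>
      have hbt : b = b' ∧ encW t = encW t' := by
        cases b <;> cases b' <;> simp [encW] at h ⊢ <;> omega
      rw [hbt.1, ih hbt.2]

lemma pathD_lt_pathD {k : ℕ} {w : Fin (k - 1) → ℕ} (hw : ∀ t, 1 ≤ w t)
    {i j : Fin k} (hij : (i : ℕ) < (j : ℕ)) : pathD w i < pathD w j := by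
  have hik : (i : ℕ) < k - 1 := by have := j.isLt; omega
  apply Finset.sum_lt_sum
  · intro t _
    by_cases h : (t : ℕ) < (i : ℕ)
    · simp [h, h.trans hij]
    · simp [h]
  · refine ⟨⟨(i : ℕ), hik⟩, Finset.mem_univ _, ?_⟩
    have h1 : ¬ ((i : ℕ) < (i : ℕ)) := lt_irrefl _
    simp only [h1, if_false, hij, if_true]
    exact hw _

lemma pathD_zero {k : ℕ} (w : Fin (k - 1) → ℕ) (h0 : 0 < k) :
    pathD w ⟨0, h0⟩ = 0 := by
  apply Finset.sum_eq_zero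
  intro t _
  simp

lemma pathD_succ {k : ℕ} (w : Fin (k - 1) → ℕ) (t : Fin (k - 1))
    (h1 : (t : ℕ) + 1 < k) (h0 : (t : ℕ) < k) :
    pathD w ⟨(t : ℕ) + 1, h1⟩ = pathD w ⟨(t : ℕ), h0⟩ + w t := by
  unfold pathD
  have : ∀ t' : Fin (k - 1),
      (if (t' : ℕ) < (t : ℕ) + 1 then w t' else 0)
      = (if (t' : ℕ) < (t : ℕ) then w t' else 0) + (if t' = t then w t' else 0) := by
    intro t'
    rcases lt_trichotomy (t' : ℕ) (t : ℕ) with h | h | h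
    · have : t' ≠ t := by intro he; rw [he] at h; exact lt_irrefl _ h
      simp [h, Nat.lt_succ_of_lt h, this]
    · have he : t' = t := Fin.ext h
      simp [he]
    · have h2 : ¬ ((t' : ℕ) < (t : ℕ) + 1) := by omega
      have h3 : ¬ ((t' : ℕ) < (t : ℕ)) := by omega
      have : t' ≠ t := by intro he; rw [he] at h; exact lt_irrefl _ h
      simp [h2, h3, this]
  simp only [this, Finset.sum_add_distrib, Finset.sum_ite_eq' Finset.univ t,
    Finset.mem_univ, if_true]

/-- pathD determines w. -/
lemma pathD_ext {k : ℕ} {w w' : Fin (k - 1) → ℕ}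
    (h : ∀ i : Fin k, pathD w i = pathD w' i) : w = w' := by
  funext t
  have h1 : (t : ℕ) + 1 < k := by have := t.isLt; omega
  have h0 : (t : ℕ) < k := by omega
  have e1 := pathD_succ w t h1 h0
  have e2 := pathD_succ w' t h1 h0
  have := h ⟨(t : ℕ) + 1, h1⟩
  have := h ⟨(t : ℕ), h0⟩
  omega

lemma pow_le_factorial_mul_exp (k : ℕ) :
    (k : ℝ) ^ k ≤ (Nat.factorial k : ℝ) * Real.exp 1 ^ k := by
  induction k with
  | zero => simp
  | succ k ih =>
    have hexp1 : (1 : ℝ) ≤ Real.exp 1 := by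
      have := Real.add_one_le_exp (1 : ℝ); linarith
    rcases Nat.eq_zero_or_pos k with hk | hk
    · subst hk; simpa using hexp1
    · have hkR : (0 : ℝ) < k := by exact_mod_cast hk
      have hstep : ((k : ℝ) + 1) ≤ (k : ℝ) * Real.exp (1 / k) := by
        have h1 : (1 : ℝ) / k + 1 ≤ Real.exp (1 / k) := Real.add_one_le_exp _
        have := mul_le_mul_of_nonneg_left h1 (le_of_lt hkR)
        calc (k : ℝ) + 1 = (k : ℝ) * ((1 : ℝ) / k + 1) := by field_simp; ring
        _ ≤ (k : ℝ) * Real.exp (1 / k) := this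
      have hpow : ((k : ℝ) + 1) ^ k ≤ ((k : ℝ) * Real.exp (1 / k)) ^ k :=
        pow_le_pow_left₀ (by positivity) hstep k
      have hexpk : Real.exp (1 / k) ^ k = Real.exp 1 := by
        rw [← Real.exp_nat_mul]
        congr 1
        field_simp
      have h2 : ((k : ℝ) + 1) ^ k ≤ (k : ℝ) ^ k * Real.exp 1 := by
        rw [mul_pow, hexpk] at hpow; exact hpow
      have hfk : (0 : ℝ) ≤ (k : ℝ) + 1 := by positivity
      calc ((k + 1 : ℕ) : ℝ) ^ (k + 1)
          = ((k : ℝ) + 1) * ((k : ℝ) + 1) ^ k := by push_cast; ring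
        _ ≤ ((k : ℝ) + 1) * ((k : ℝ) ^ k * Real.exp 1) := by
            apply mul_le_mul_of_nonneg_left h2 hfk
        _ ≤ ((k : ℝ) + 1) * ((Nat.factorial k : ℝ) * Real.exp 1 ^ k * Real.exp 1) := by
            apply mul_le_mul_of_nonneg_left _ hfk
            apply mul_le_mul_of_nonneg_right ih (by positivity)
        _ = (Nat.factorial (k + 1) : ℝ) * Real.exp 1 ^ (k + 1) := by
            rw [Nat.factorial_succ]; push_cast; ring

theorem weighted_path_lower_bound :
    ∃ C : ℝ, 0 < C ∧ ∀ n k : ℕ, 2 ≤ n → 2 ≤ k →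
      ∀ d : List Bool → List Bool → ℕ,
      ∀ e : (Fin (k - 1) → ℕ) → Fin k → List Bool,
        (∀ w : Fin (k - 1) → ℕ, (∀ t, 1 ≤ w t ∧ w t ≤ n) →
          ∀ i j : Fin k, d (e w i) (e w j) = pathDist w i j) →
        ∃ w : Fin (k - 1) → ℕ, (∀ t, 1 ≤ w t ∧ w t ≤ n) ∧
          ∃ i : Fin k, ((e w i).length : ℝ) ≥
            ((k : ℝ) - 1) / (k : ℝ) * Real.logb 2 n + Real.logb 2 k - C := by
  refine ⟨4, by norm_num, ?_⟩
  intro n k hn hk d e hspec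
  by_contra hcon
  push_neg at hcon
  set B : ℝ := ((k : ℝ) - 1) / (k : ℝ) * Real.logb 2 n + Real.logb 2 k - 4 with hBdef
  have hk0 : 0 < k := by omega
  set i0 : Fin k := ⟨0, hk0⟩ with hi0
  -- every valid weight function has short labels
  have hvalid1 : ∀ t : Fin (k - 1), 1 ≤ (fun _ => 1 : Fin (k-1) → ℕ) t ∧ (fun _ => 1 : Fin (k-1) → ℕ) t ≤ n := by
    intro t
    refine ⟨le_refl 1, ?_⟩
    show (1 : ℕ) ≤ n
    omega
  have hBpos : 0 < B := by
    have := hcon (fun _ => 1) hvalid1 i0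
    have h0 : (0 : ℝ) ≤ ((e (fun _ => 1) i0).length : ℝ) := by positivity
    linarith
  set m : ℕ := ⌊B⌋₊ with hmdef
  have hmB : (m : ℝ) ≤ B := Nat.floor_le (le_of_lt hBpos)
  set N : ℕ := 2 ^ (m + 1) with hNdef
  -- weight functions from Fin n
  set wt : (Fin (k - 1) → Fin n) → (Fin (k - 1) → ℕ) := fun v t => (v t : ℕ) + 1 with hwt
  have hwt_valid : ∀ v, ∀ t, 1 ≤ wt v t ∧ wt v t ≤ n := by
    intro v t
    have := (v t).isLt
    simp only [hwt]
    omega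
  have hwt_inj : Function.Injective wt := by
    intro v v' h
    funext t
    have := congrFun h t
    simp only [hwt] at this
    exact Fin.ext (by omega)
  -- labels are distinct
  have hlab_inj : ∀ v, Function.Injective (e (wt v)) := by
    intro v i j hij
    by_contra hne
    have hd0 : pathDist (wt v) i i = 0 := by simp [pathDist]
    have h1 : d (e (wt v) i) (e (wt v) i) = pathDist (wt v) i i := hspec _ (hwt_valid v) i i
    have h2 : d (e (wt v) i) (e (wt v) j) = pathDist (wt v) i j := hspec _ (hwt_valid v) i j
    have hdist_ne : pathDist (wt v) i j ≠ 0 := by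
      have hw1 : ∀ t, 1 ≤ wt v t := fun t => (hwt_valid v t).1
      rcases Ne.lt_or_gt (fun h : (i:ℕ) = (j:ℕ) => hne (Fin.ext h)) with h | h
      all_goals {
        have := pathD_lt_pathD hw1 h
        simp only [pathDist]
        omega }
    apply hdist_ne
    rw [← h2, ← hij, h1]
    exact hd0
  -- encoded labels
  have hlen : ∀ v (i : Fin k), (e (wt v) i).length ≤ m := by
    intro v i
    exact Nat.le_floor (le_of_lt (hcon (wt v) (hwt_valid v) i))
  have hencN : ∀ v (i : Fin k), encW (e (wt v) i) < N := by
    intro v i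
    calc encW (e (wt v) i) < 2 ^ ((e (wt v) i).length + 1) := encW_lt _
      _ ≤ 2 ^ (m + 1) := Nat.pow_le_pow_right (by norm_num) (by have := hlen v i; omega)
  set L : (Fin (k - 1) → Fin n) → Fin k → Fin N :=
    fun v i => ⟨encW (e (wt v) i), hencN v i⟩ with hL
  have hL_inj : ∀ v, Function.Injective (L v) := by
    intro v i j hij
    apply hlab_inj v
    exact encW_injective (congrArg Fin.val hij)
  -- the injection into (set of labels, label of node 0)
  set Ψ : (Fin (k - 1) → Fin n) → ((_ : Finset (Fin N)) × Fin N) :=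
    fun v => ⟨Finset.univ.image (L v), L v i0⟩ with hΨ
  set T : Finset ((_ : Finset (Fin N)) × Fin N) :=
    (Finset.univ.powersetCard k).sigma (fun S => S) with hT
  have hΨT : ∀ v, Ψ v ∈ T := by
    intro v
    rw [hT, Finset.mem_sigma]
    constructor
    · rw [Finset.mem_powersetCard]
      refine ⟨Finset.subset_univ _, ?_⟩
      rw [Finset.card_image_of_injective _ (hL_inj v), Finset.card_univ, Fintype.card_fin]
    · exact Finset.mem_image_of_mem _ (Finset.mem_univ i0)
  -- injectivity of Ψ
  have hΨ_inj : Function.Injective Ψ := by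
    intro v v' hvv
    simp only [hΨ, Sigma.mk.inj_iff, heq_eq_eq] at hvv
    obtain ⟨hS, hx⟩ := hvv
    -- construct σ
    have hex : ∀ i : Fin k, ∃ j : Fin k, L v' j = L v i := by
      intro i
      have : L v i ∈ Finset.univ.image (L v') := by
        rw [← hS]; exact Finset.mem_image_of_mem _ (Finset.mem_univ i)
      obtain ⟨j, _, hj⟩ := Finset.mem_image.mp this
      exact ⟨j, hj⟩
    choose σ hσ using hex
    have hlabels : ∀ i : Fin k, e (wt v') (σ i) = e (wt v) i := by
      intro i
      exact encW_injective (congrArg Fin.val (hσ i))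
    have hσ0 : σ i0 = i0 := by
      apply hL_inj v'
      rw [hσ i0]
      exact hx
    have hlab0 : e (wt v') i0 = e (wt v) i0 := by
      have h := hlabels i0
      rw [hσ0] at h
      exact h
    -- distances from node 0
    have hdist : ∀ i : Fin k, pathD (wt v) i = pathD (wt v') (σ i) := by
      intro i
      have h1 : d (e (wt v) i0) (e (wt v) i) = pathDist (wt v) i0 i :=
        hspec _ (hwt_valid v) i0 i
      have h2 : d (e (wt v') i0) (e (wt v') (σ i)) = pathDist (wt v') i0 (σ i) :=
        hspec _ (hwt_valid v') i0 (σ i)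
      rw [hlab0, hlabels i] at h2
      have h3 : pathDist (wt v) i0 i = pathDist (wt v') i0 (σ i) := by rw [← h1, ← h2]
      have hz : pathD (wt v) i0 = 0 := by rw [hi0]; exact pathD_zero _ hk0
      have hz' : pathD (wt v') i0 = 0 := by rw [hi0]; exact pathD_zero _ hk0
      simp only [pathDist, hz, hz'] at h3
      simpa using h3
    -- σ is strictly monotone, hence the identity
    have hσ_inj : Function.Injective σ := by
      intro i j hij
      apply hlab_inj v
      show e (wt v) i = e (wt v) j
      rw [← hlabels i, ← hlabels j, hij]
    have hσ_mono : StrictMono σ := by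
      intro i j hij
      have hw' : ∀ t, 1 ≤ wt v' t := fun t => (hwt_valid v' t).1
      have hw : ∀ t, 1 ≤ wt v t := fun t => (hwt_valid v t).1
      have h1 : pathD (wt v) i < pathD (wt v) j := pathD_lt_pathD hw hij
      rw [hdist i, hdist j] at h1
      rcases lt_trichotomy ((σ i : ℕ)) ((σ j : ℕ)) with h | h | h
      · exact h
      · exact absurd (Fin.ext h : σ i = σ j) (fun he => by rw [he] at h1; omega)
      · have := pathD_lt_pathD hw' h
        omega
    have hσ_id : σ = id := by
      have hσ_surj : Function.Surjective σ :=
        Finite.surjective_of_injective hσ_inj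
      apply (StrictMono.range_inj hσ_mono strictMono_id).mp
      rw [Set.range_id]
      exact Set.range_eq_univ.mpr hσ_surj
    have hDeq : ∀ i : Fin k, pathD (wt v) i = pathD (wt v') i := by
      intro i
      rw [hdist i, hσ_id]; rfl
    exact hwt_inj (pathD_ext hDeq)
  -- counting
  have hcard1 : Fintype.card (Fin (k - 1) → Fin n) ≤ T.card := by
    rw [← Finset.card_univ]
    apply Finset.card_le_card_of_injOn Ψ (fun v _ => hΨT v)
    exact fun a _ b _ h => hΨ_inj h
  have hcardT : T.card = N.choose k * k := by
    rw [hT, Finset.card_sigma]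
    rw [Finset.sum_congr rfl (fun S hS => (Finset.mem_powersetCard.mp hS).2)]
    rw [Finset.sum_const, smul_eq_mul, Finset.card_powersetCard, Finset.card_univ,
      Fintype.card_fin]
  have hcount : n ^ (k - 1) ≤ N.choose k * k := by
    rw [← hcardT]
    calc n ^ (k - 1) = Fintype.card (Fin (k - 1) → Fin n) := by
          rw [Fintype.card_fun, Fintype.card_fin, Fintype.card_fin]
      _ ≤ T.card := hcard1
  -- from choose to powers
  have hchoose : N.choose k * Nat.factorial k ≤ N ^ k := by
    rw [mul_comm, ← Nat.descFactorial_eq_factorial_mul_choose]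
    exact Nat.descFactorial_le_pow _ _
  have hnat : n ^ (k - 1) * Nat.factorial k ≤ N ^ k * k := by
    calc n ^ (k - 1) * Nat.factorial k ≤ (N.choose k * k) * Nat.factorial k :=
          Nat.mul_le_mul_right _ hcount
      _ = (N.choose k * Nat.factorial k) * k := by ring
      _ ≤ N ^ k * k := Nat.mul_le_mul_right _ hchoose
  -- move to the reals
  have hreal : ((n : ℝ)) ^ (k - 1) * (k : ℝ) ^ k ≤ (N : ℝ) ^ k * k * Real.exp 1 ^ k := by
    have h1 : ((n : ℝ)) ^ (k - 1) * (Nat.factorial k : ℝ) ≤ (N : ℝ) ^ k * k := by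
      exact_mod_cast hnat
    have h2 := pow_le_factorial_mul_exp k
    calc ((n : ℝ)) ^ (k - 1) * (k : ℝ) ^ k
        ≤ ((n : ℝ)) ^ (k - 1) * ((Nat.factorial k : ℝ) * Real.exp 1 ^ k) := by
          apply mul_le_mul_of_nonneg_left h2 (by positivity)
      _ = (((n : ℝ)) ^ (k - 1) * (Nat.factorial k : ℝ)) * Real.exp 1 ^ k := by ring
      _ ≤ ((N : ℝ) ^ k * k) * Real.exp 1 ^ k := by
          apply mul_le_mul_of_nonneg_right h1 (by positivity)
  -- take logs
  have hn0 : (0 : ℝ) < n := by positivity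
  have hk0R : (0 : ℝ) < k := by exact_mod_cast hk0
  have hN0 : (0 : ℝ) < N := by positivity
  have hlog := Real.logb_le_logb_of_le (b := 2) one_lt_two (by positivity) hreal
  have hlogL : Real.logb 2 (((n : ℝ)) ^ (k - 1) * (k : ℝ) ^ k)
      = ((k : ℝ) - 1) * Real.logb 2 n + (k : ℝ) * Real.logb 2 k := by
    rw [Real.logb_mul (by positivity) (by positivity), Real.logb_pow, Real.logb_pow]
    have : (((k : ℕ) - 1 : ℕ) : ℝ) = (k : ℝ) - 1 := by
      have : 1 ≤ k := by omega
      push_cast [Nat.cast_sub this]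
      ring
    rw [this]
  have hlogR : Real.logb 2 ((N : ℝ) ^ k * k * Real.exp 1 ^ k)
      = (k : ℝ) * ((m : ℝ) + 1) + Real.logb 2 k + (k : ℝ) * Real.logb 2 (Real.exp 1) := by
    rw [Real.logb_mul (by positivity) (by positivity),
      Real.logb_mul (by positivity) (by positivity), Real.logb_pow, Real.logb_pow]
    have hNlog : Real.logb 2 (N : ℝ) = (m : ℝ) + 1 := by
      rw [hNdef]
      push_cast
      rw [Real.logb_pow, Real.logb_self_eq_one (by norm_num) ]
      push_cast; ring
    rw [hNlog]
  rw [hlogL, hlogR] at hlog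
  -- numeric estimates
  have hlogE : Real.logb 2 (Real.exp 1) ≤ 2 := by
    have h2 : (0.6931471803 : ℝ) < Real.log 2 := Real.log_two_gt_d9
    rw [Real.logb, Real.log_exp]
    rw [div_le_iff₀ (by linarith)]
    linarith
  have hlogk_lt : Real.logb 2 (k : ℝ) < (k : ℝ) := by
    have h1 : (k : ℝ) < (2 : ℝ) ^ k := by
      exact_mod_cast Nat.lt_two_pow_self (n := k)
    calc Real.logb 2 (k : ℝ) < Real.logb 2 ((2 : ℝ) ^ k) :=
          Real.logb_lt_logb one_lt_two hk0R h1
      _ = (k : ℝ) := by rw [Real.logb_pow, Real.logb_self_eq_one (by norm_num)]; ring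
  have hlogE0 : 0 ≤ Real.logb 2 (Real.exp 1) := by
    apply Real.logb_nonneg one_lt_two
    have := Real.add_one_le_exp (1:ℝ); linarith
  have hkB : (k : ℝ) * B = ((k : ℝ) - 1) * Real.logb 2 n + (k : ℝ) * Real.logb 2 k
      - 4 * k := by
    rw [hBdef]
    field_simp
  have hmB1 : (k : ℝ) * ((m : ℝ) + 1) ≤ (k : ℝ) * B + k := by
    nlinarith
  have hE : (k : ℝ) * Real.logb 2 (Real.exp 1) ≤ 2 * k := by
    nlinarith
  linarith
end

section
/- There exists a constant C > 0 such that for every integer n ≥ 2 there is a distance labeling scheme for caterpillars on n vertices with all labels of length at most 2·log₂ n + C. Precisely: there exists a decoder d : List Bool → List Bool → ℕ such that for every caterpillar G on Fin n there exists an encoder e : Fin n → List Bool with d (e u) (e v) = G.dist u v for all u, v, and (e u).length ≤ 2·log₂ n + C for all u. -/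
open SimpleGraph

section Bits

/-- Fixed-width little-endian binary encoding. -/
def toBits : ℕ → ℕ → List Bool
  | 0, _ => []
  | L + 1, k => (decide (k % 2 = 1)) :: toBits L (k / 2)

def ofBits : List Bool → ℕ
  | [] => 0
  | b :: l => (cond b 1 0) + 2 * ofBits l

lemma length_toBits (L k : ℕ) : (toBits L k).length = L := by
  induction L generalizing k with
  | zero => rfl
  | succ L ih => simp [toBits, ih]

lemma ofBits_toBits (L k : ℕ) (h : k < 2 ^ L) : ofBits (toBits L k) = k := by
  induction L generalizing k with
  | zero => simp at h; simp [h, toBits, ofBits]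
  | succ L ih =>
    have h2 : (2:ℕ) ^ (L+1) = 2 * 2 ^ L := by rw [pow_succ]; ring
    have hk : k / 2 < 2 ^ L := by omega
    have hco : (cond (decide (k % 2 = 1)) 1 0 : ℕ) = k % 2 := by
      rcases Nat.mod_two_eq_zero_or_one k with h' | h' <;> simp [h']
    simp only [toBits, ofBits, ih _ hk, hco]
    omega

end Bits

section SpineWalk

variable {n m : ℕ} (G : SimpleGraph (Fin n)) (p : Fin m → Fin n)

/-- The walk along the spine from position `i` to position `i + k`. -/
def spineWalk (hadj : ∀ i : Fin m, ∀ h : (i : ℕ) + 1 < m, G.Adj (p i) (p ⟨(i : ℕ) + 1, h⟩)) :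
    (k i : ℕ) → (h : i + k < m) → G.Walk (p ⟨i, by omega⟩) (p ⟨i + k, h⟩)
  | 0, i, h => Walk.nil
  | k + 1, i, h =>
      (Walk.cons (hadj ⟨i, by omega⟩ (show i + 1 < m by omega))
        (spineWalk hadj k (i + 1) (show i + 1 + k < m by omega))).copy rfl
        (congrArg p (Fin.ext (show i + 1 + k = i + (k + 1) by omega)))

variable {G p} (hadj : ∀ i : Fin m, ∀ h : (i : ℕ) + 1 < m, G.Adj (p i) (p ⟨(i : ℕ) + 1, h⟩))

lemma spineWalk_length (k i : ℕ) (h : i + k < m) : (spineWalk G p hadj k i h).length = k := by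
  induction k generalizing i with
  | zero => rfl
  | succ k ih => simp [spineWalk, Walk.length_copy, ih]

lemma spineWalk_support (k i : ℕ) (h : i + k < m) :
    ∀ x ∈ (spineWalk G p hadj k i h).support,
      ∃ j : Fin m, i ≤ (j : ℕ) ∧ (j : ℕ) ≤ i + k ∧ x = p j := by
  induction k generalizing i with
  | zero =>
    intro x hx
    simp [spineWalk] at hx
    exact ⟨⟨i, by omega⟩, le_refl _, by simp, hx⟩
  | succ k ih =>
    intro x hx
    simp only [spineWalk, Walk.support_copy, Walk.support_cons, List.mem_cons] at hx
    rcases hx with rfl | hx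
    · exact ⟨⟨i, by omega⟩, le_refl _, by simp, rfl⟩
    · obtain ⟨j, h1, h2, h3⟩ := ih (i + 1) (by omega) x hx
      exact ⟨j, by omega, by omega, h3⟩

lemma spineWalk_isPath (hpinj : Function.Injective p) (k i : ℕ) (h : i + k < m) :
    (spineWalk G p hadj k i h).IsPath := by
  induction k generalizing i with
  | zero => exact Walk.IsPath.nil
  | succ k ih =>
    simp only [spineWalk, Walk.isPath_copy]
    rw [Walk.cons_isPath_iff]
    refine ⟨ih (i + 1) (by omega), fun hmem => ?_⟩
    obtain ⟨j, h1, h2, h3⟩ := spineWalk_support hadj k (i + 1) (by omega) _ hmem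
    have := hpinj h3
    have : i = (j : ℕ) := congrArg Fin.val this
    omega

end SpineWalk

/-- In a tree, the distance equals the length of any path between the endpoints. -/
lemma treeDistEq {V : Type*} {G : SimpleGraph V} (ht : G.IsTree) {u v : V}
    (W : G.Walk u v) (hW : W.IsPath) : G.dist u v = W.length := by
  obtain ⟨q, hq, hql⟩ := W.reachable.exists_path_of_dist
  obtain ⟨r, hr, hru⟩ := ht.existsUnique_path u v
  have : W = q := (hru W hW).trans (hru q hq).symm
  rw [← hql, this]

/-- The unique neighbor of a non-spine vertex lies on the spine. -/
lemma leaf_nb {n m : ℕ} {G : SimpleGraph (Fin n)} (hconn : G.Connected) (hm : 1 ≤ m)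
    {p : Fin m → Fin n} (hleaf : ∀ v : Fin n, v ∉ Set.range p → (G.neighborSet v).ncard = 1)
    {v : Fin n} (hv : v ∉ Set.range p) {w : Fin n} (hw : G.neighborSet v = {w}) :
    w ∈ Set.range p := by
  by_contra hwp
  obtain ⟨w', hw'⟩ := Set.ncard_eq_one.mp (hleaf w hwp)
  have hvw : G.Adj v w := by
    have : w ∈ G.neighborSet v := by rw [hw]; exact Set.mem_singleton _
    exact this
  have hw'v : w' = v := by
    have hmem : v ∈ G.neighborSet w := hvw.symm
    rw [hw'] at hmem
    exact hmem.symm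
  rw [hw'v] at hw'
  have step : ∀ x y : Fin n, G.Adj x y → (x = v ∨ x = w) → (y = v ∨ y = w) := by
    intro x y hxy hx
    rcases hx with rfl | rfl
    · right
      have : y ∈ G.neighborSet x := hxy
      rw [hw] at this
      exact this
    · left
      have : y ∈ G.neighborSet x := hxy
      rw [hw'] at this
      exact this
  have reach : ∀ x y : Fin n, G.Walk x y → (x = v ∨ x = w) → (y = v ∨ y = w) := by
    intro x y wk
    induction wk with
    | nil => exact id
    | cons h q ih => intro hx; exact ih (step _ _ h hx)
  obtain ⟨wk⟩ := hconn.preconnected v (p ⟨0, hm⟩)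
  rcases reach _ _ wk (Or.inl rfl) with h | h
  · exact hv ⟨_, h⟩
  · exact hwp ⟨_, h⟩

/-- Distance formula in a caterpillar. -/
lemma main_dist {n m : ℕ} {G : SimpleGraph (Fin n)} (htree : G.IsTree)
    {p : Fin m → Fin n} (hpinj : Function.Injective p)
    (hadj : ∀ i : Fin m, ∀ h : (i : ℕ) + 1 < m, G.Adj (p i) (p ⟨(i : ℕ) + 1, h⟩))
    {a : Fin n → Fin m} {ℓ : Fin n → Bool}
    (hspec : ∀ v : Fin n,
      (ℓ v = false ∧ p (a v) = v) ∨ (ℓ v = true ∧ v ∉ Set.range p ∧ G.Adj v (p (a v))))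
    (u v : Fin n) (huv : u ≠ v) (hle : (a u : ℕ) ≤ (a v : ℕ)) :
    G.dist u v = ((a v : ℕ) - (a u : ℕ)) + (cond (ℓ u) 1 0) + (cond (ℓ v) 1 0) := by
  have hav : (a v : ℕ) < m := (a v).isLt
  have hb : (a u : ℕ) + ((a v : ℕ) - (a u : ℕ)) < m := by omega
  have hev : (⟨(a u : ℕ) + ((a v : ℕ) - (a u : ℕ)), hb⟩ : Fin m) = a v :=
    Fin.ext (show (a u : ℕ) + ((a v : ℕ) - (a u : ℕ)) = (a v : ℕ) by omega)
  set B : G.Walk (p (a u)) (p (a v)) :=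
    (spineWalk G p hadj ((a v : ℕ) - (a u : ℕ)) (a u : ℕ) hb).copy rfl (congrArg p hev) with hBdef
  have hBpath : B.IsPath := by
    rw [hBdef, Walk.isPath_copy]
    exact spineWalk_isPath hadj hpinj _ _ _
  have hBlen : B.length = (a v : ℕ) - (a u : ℕ) := by
    rw [hBdef, Walk.length_copy, spineWalk_length]
  have hBsupp : ∀ x ∈ B.support, x ∈ Set.range p := by
    intro x hx
    rw [hBdef, Walk.support_copy] at hx
    obtain ⟨j, _, _, h3⟩ := spineWalk_support hadj _ _ hb x hx
    exact ⟨j, h3.symm⟩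
  obtain ⟨W1, h1p, h1len, h1supp⟩ :
      ∃ W1 : G.Walk u (p (a v)), W1.IsPath ∧
        W1.length = ((a v : ℕ) - (a u : ℕ)) + cond (ℓ u) 1 0 ∧
        ∀ x ∈ W1.support, x ∈ Set.range p ∨ x = u := by
    rcases hspec u with ⟨hℓ, hpe⟩ | ⟨hℓ, hnr, hadju⟩
    · refine ⟨B.copy hpe rfl, by rwa [Walk.isPath_copy], ?_, ?_⟩
      · rw [Walk.length_copy, hBlen, hℓ]; simp
      · intro x hx
        rw [Walk.support_copy] at hx
        exact Or.inl (hBsupp x hx)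
    · refine ⟨Walk.cons hadju B, ?_, ?_, ?_⟩
      · rw [Walk.cons_isPath_iff]
        exact ⟨hBpath, fun h => hnr (hBsupp u h)⟩
      · rw [Walk.length_cons, hBlen, hℓ]; simp
      · intro x hx
        rw [Walk.support_cons, List.mem_cons] at hx
        rcases hx with rfl | hx
        · exact Or.inr rfl
        · exact Or.inl (hBsupp x hx)
  rcases hspec v with ⟨hℓv, hpev⟩ | ⟨hℓv, hnrv, hadjv⟩
  · have := treeDistEq htree (W1.copy rfl hpev) (by rwa [Walk.isPath_copy])
    rw [this, Walk.length_copy, h1len, hℓv]; simp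
  · set W2 : G.Walk u v := (Walk.cons hadjv W1.reverse).reverse with hW2def
    have h2p : W2.IsPath := by
      rw [hW2def, Walk.isPath_reverse_iff, Walk.cons_isPath_iff]
      refine ⟨by rwa [Walk.isPath_reverse_iff], fun h => ?_⟩
      rw [Walk.support_reverse, List.mem_reverse] at h
      rcases h1supp v h with hr | hr
      · exact hnrv hr
      · exact huv hr.symm
    have h2len : W2.length = ((a v : ℕ) - (a u : ℕ)) + cond (ℓ u) 1 0 + 1 := by
      rw [hW2def, Walk.length_reverse, Walk.length_cons, Walk.length_reverse, h1len]
    rw [treeDistEq htree W2 h2p, h2len, hℓv]; simp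

/-- A caterpillar on `Fin n`: a tree in which the non-leaf vertices form a path
(the spine). Formally: a tree together with an injective path `p : Fin m → Fin n`
(`m ≥ 1`) of consecutively adjacent vertices such that every vertex outside the
range of `p` has degree 1. -/
def IsCaterpillar {n : ℕ} (G : SimpleGraph (Fin n)) : Prop :=
  G.IsTree ∧ ∃ m : ℕ, 1 ≤ m ∧ ∃ p : Fin m → Fin n, Function.Injective p ∧
    (∀ i : Fin m, ∀ h : (i : ℕ) + 1 < m, G.Adj (p i) (p ⟨(i : ℕ) + 1, h⟩)) ∧
    ∀ v : Fin n, v ∉ Set.range p → (G.neighborSet v).ncard = 1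

theorem caterpillar_simple_upper_bound :
    ∃ C : ℝ, 0 < C ∧ ∀ n : ℕ, 2 ≤ n →
      ∃ d : List Bool → List Bool → ℕ,
        ∀ G : SimpleGraph (Fin n), IsCaterpillar G →
          ∃ e : Fin n → List Bool,
            (∀ u v : Fin n, d (e u) (e v) = G.dist u v) ∧
            ∀ u : Fin n, ((e u).length : ℝ) ≤ 2 * Real.logb 2 n + C := by
  refine ⟨3, by norm_num, fun n hn => ?_⟩
  set L := Nat.log 2 n + 1 with hL
  refine ⟨fun x y => if x = y then 0 else
      (max (ofBits ((x.drop L).take L)) (ofBits ((y.drop L).take L))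
        - min (ofBits ((x.drop L).take L)) (ofBits ((y.drop L).take L)))
      + (if (x.drop L).drop L = [true] then 1 else 0)
      + (if (y.drop L).drop L = [true] then 1 else 0), ?_⟩
  intro G hG
  obtain ⟨htree, m, hm, p, hpinj, hadj, hleaf⟩ := hG
  have hmn : m ≤ n := by simpa using Fintype.card_le_of_injective p hpinj
  have hex : ∀ v : Fin n, ∃ j : Fin m, ∃ b : Bool,
      (b = false ∧ p j = v) ∨ (b = true ∧ v ∉ Set.range p ∧ G.Adj v (p j)) := by
    intro v
    by_cases hv : v ∈ Set.range p
    · obtain ⟨j, hj⟩ := hv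
      exact ⟨j, false, Or.inl ⟨rfl, hj⟩⟩
    · obtain ⟨w, hw⟩ := Set.ncard_eq_one.mp (hleaf v hv)
      obtain ⟨j, hj⟩ := leaf_nb htree.isConnected hm hleaf hv hw
      have hadjv : G.Adj v w := by
        have : w ∈ G.neighborSet v := by rw [hw]; exact Set.mem_singleton _
        exact this
      exact ⟨j, true, Or.inr ⟨rfl, hv, by rw [hj]; exact hadjv⟩⟩
  choose a ℓ hspec using hex
  set e : Fin n → List Bool := fun u => toBits L u.val ++ (toBits L (a u : ℕ) ++ [ℓ u]) with he
  have h2L : n < 2 ^ L := Nat.lt_pow_succ_log_self (by norm_num) n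
  have hid : ∀ w : Fin n, ofBits ((e w).take L) = (w : ℕ) := by
    intro w
    simp only [he]
    rw [List.take_left' (length_toBits L _), ofBits_toBits _ _ (lt_trans w.isLt h2L)]
  have hsp : ∀ w : Fin n, ofBits (((e w).drop L).take L) = (a w : ℕ) := by
    intro w
    simp only [he]
    rw [List.drop_left' (length_toBits L _), List.take_left' (length_toBits L _),
      ofBits_toBits _ _ (lt_of_lt_of_le (lt_of_lt_of_le (a w).isLt hmn) h2L.le)]
  have hfl : ∀ w : Fin n, ((e w).drop L).drop L = [ℓ w] := by
    intro w
    simp only [he]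
    rw [List.drop_left' (length_toBits L _), List.drop_left' (length_toBits L _)]
  refine ⟨e, ?_, ?_⟩
  · intro u v
    by_cases huv : u = v
    · subst huv; simp [SimpleGraph.dist_self]
    · have hne : e u ≠ e v := by
        intro h
        apply huv
        have := congrArg (fun l => ofBits (l.take L)) h
        simp only [hid] at this
        exact Fin.ext this
      simp only [if_neg hne, hsp, hfl]
      have hcond : ∀ w : Fin n, (if ([ℓ w] : List Bool) = [true] then 1 else 0) = cond (ℓ w) 1 0 := by
        intro w; cases hh : ℓ w <;> simp
      rw [hcond u, hcond v]
      rcases le_total (a u : ℕ) (a v : ℕ) with h | h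
      · rw [main_dist htree hpinj hadj hspec u v huv h]
        omega
      · rw [SimpleGraph.dist_comm, main_dist htree hpinj hadj hspec v u (Ne.symm huv) h]
        omega
  · intro u
    have hlen : (e u).length = 2 * L + 1 := by
      simp only [he, List.length_append, List.length_cons, List.length_nil, length_toBits]
      omega
    rw [hlen, hL]
    have hlog : (Nat.log 2 n : ℝ) ≤ Real.logb 2 n := by
      have := Real.natLog_le_logb n 2
      norm_num at this
      exact this
    push_cast
    linarith
end

section
/- There exists a constant C > 0 such that for every integer n ≥ 16 there is a distance labeling scheme for caterpillars on n vertices with all labels of length at most 2·log₂ n − log₂ log₂ n + C·log₂ log₂ log₂ n. Precisely: there exists a decoder d : List Bool → List Bool → ℕ such that for every caterpillar G on Fin n there exists an encoder e : Fin n → List Bool with d (e u) (e v) = G.dist u v for all u, v, and (e u).length ≤ 2·log₂ n − log₂ log₂ n + C·log₂ log₂ log₂ n for all u. -/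
namespace CatLab
open SimpleGraph



/-! ### Bit encodings -/

def toBits : ℕ → ℕ → List Bool
  | 0, _ => []
  | len+1, x => (decide (x % 2 = 1)) :: toBits len (x / 2)

def ofBits : List Bool → ℕ
  | [] => 0
  | b :: t => (if b then 1 else 0) + 2 * ofBits t

@[simp] lemma toBits_length (len x : ℕ) : (toBits len x).length = len := by
  induction len generalizing x with
  | zero => rfl
  | succ l ih => simp [toBits, ih]

lemma ofBits_toBits (len x : ℕ) (h : x < 2 ^ len) : ofBits (toBits len x) = x := by
  induction len generalizing x with
  | zero => simp at h; simp [h, toBits, ofBits]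
  | succ l ih =>
      have h2 : x / 2 < 2 ^ l := by
        have : 2 ^ (l + 1) = 2 ^ l * 2 := by ring
        omega
      have := ih (x / 2) h2
      simp only [toBits, ofBits, this]
      rcases Nat.mod_two_eq_zero_or_one x with h0 | h1
      · simp [h0]; omega
      · simp [h1]; omega

/-! ### Splice / unsplice -/

def splice (s ℓ W : ℕ) : ℕ := (s / 2 ^ ((ℓ+1) * W)) * 2 ^ (ℓ * W) + s % 2 ^ (ℓ * W)

def unsplice (v ℓ W : ℕ) : ℕ := (v / 2 ^ (ℓ * W)) * 2 ^ ((ℓ+1) * W) + v % 2 ^ (ℓ * W)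

/-- band condition : bits `[ℓW, (ℓ+1)W)` of `s` vanish -/
def BandZero (s ℓ W : ℕ) : Prop := s % 2 ^ ((ℓ+1) * W) < 2 ^ (ℓ * W)

lemma div_mul_add_eq {P : ℕ} (hP : 0 < P) (hi lo : ℕ) (hlo : lo < P) :
    (hi * P + lo) / P = hi ∧ (hi * P + lo) % P = lo := by
  constructor
  · rw [add_comm, Nat.add_mul_div_right _ _ hP, Nat.div_eq_of_lt hlo]; omega
  · rw [add_comm, Nat.add_mul_mod_self_right, Nat.mod_eq_of_lt hlo]

lemma unsplice_splice {s ℓ W : ℕ} (h : BandZero s ℓ W) :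
    unsplice (splice s ℓ W) ℓ W = s := by
  have hP : (0:ℕ) < 2 ^ (ℓ * W) := by positivity
  have hdvd : (2:ℕ) ^ (ℓ * W) ∣ 2 ^ ((ℓ+1) * W) :=
    pow_dvd_pow 2 (by nlinarith)
  have hmm : s % 2 ^ ((ℓ+1) * W) % 2 ^ (ℓ * W) = s % 2 ^ (ℓ * W) :=
    Nat.mod_mod_of_dvd s hdvd
  have hmid : s % 2 ^ ((ℓ+1) * W) = s % 2 ^ (ℓ * W) := by
    rw [← hmm]; exact (Nat.mod_eq_of_lt h).symm
  have hlo : s % 2 ^ (ℓ * W) < 2 ^ (ℓ * W) := Nat.mod_lt _ hP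
  unfold splice unsplice
  obtain ⟨h1, h2⟩ := div_mul_add_eq hP (s / 2 ^ ((ℓ+1) * W)) _ hlo
  rw [h1, h2, ← hmid, Nat.div_add_mod']

lemma splice_lt {s ℓ W Λ : ℕ} (hs : s < 2 ^ Λ) (hW : (ℓ+1) * W ≤ Λ) :
    splice s ℓ W < 2 ^ (Λ - W) := by
  have hP : (0:ℕ) < 2 ^ (ℓ * W) := by positivity
  have hhi : s / 2 ^ ((ℓ+1) * W) < 2 ^ (Λ - (ℓ+1) * W) := by
    rw [Nat.div_lt_iff_lt_mul (by positivity)]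
    calc s < 2 ^ Λ := hs
    _ = 2 ^ (Λ - (ℓ+1) * W) * 2 ^ ((ℓ+1) * W) := by
          rw [← pow_add]; congr 1; omega
  have hlo : s % 2 ^ (ℓ * W) < 2 ^ (ℓ * W) := Nat.mod_lt _ hP
  have : splice s ℓ W < (s / 2 ^ ((ℓ+1) * W) + 1) * 2 ^ (ℓ * W) := by
    unfold splice; nlinarith
  calc splice s ℓ W < (s / 2 ^ ((ℓ+1) * W) + 1) * 2 ^ (ℓ * W) := this
  _ ≤ 2 ^ (Λ - (ℓ+1) * W) * 2 ^ (ℓ * W) := by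
        have : s / 2 ^ ((ℓ+1) * W) + 1 ≤ 2 ^ (Λ - (ℓ+1) * W) := hhi
        exact Nat.mul_le_mul_right _ this
  _ = 2 ^ (Λ - (ℓ+1) * W + ℓ * W) := by rw [← pow_add]
  _ ≤ 2 ^ (Λ - W) := by
        apply Nat.pow_le_pow_right (by norm_num)
        have h1 : ℓ * W + W = (ℓ+1) * W := by ring
        omega

/-! ### The shift construction -/

def corr (W ℓ x t : ℕ) : ℕ :=
  2 ^ (ℓ * W) * (2 ^ W - ((x + t) % 2 ^ ((ℓ+1) * W)) / 2 ^ (ℓ * W))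

def buildShift (W : ℕ) : List ℕ → ℕ → ℕ → ℕ
  | [], _, t => t
  | x :: rest, ℓ, t => buildShift W rest (ℓ+1) (t + corr W ℓ x t)

lemma corr_works (W ℓ x t : ℕ) :
    (x + t + corr W ℓ x t) % 2 ^ ((ℓ+1) * W) = (x + t) % 2 ^ (ℓ * W) := by
  have hP : (0:ℕ) < 2 ^ (ℓ * W) := by positivity
  have hPQ : (0:ℕ) < 2 ^ ((ℓ+1) * W) := by positivity
  have hdvd : (2:ℕ) ^ (ℓ * W) ∣ 2 ^ ((ℓ+1) * W) := pow_dvd_pow 2 (by nlinarith)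
  set A := x + t with hA
  set q := (A % 2 ^ ((ℓ+1) * W)) / 2 ^ (ℓ * W) with hq
  have hqlt : q < 2 ^ W := by
    rw [hq, Nat.div_lt_iff_lt_mul hP]
    calc A % 2 ^ ((ℓ+1) * W) < 2 ^ ((ℓ+1) * W) := Nat.mod_lt _ hPQ
    _ = 2 ^ W * 2 ^ (ℓ * W) := by rw [← pow_add]; congr 1; ring
  have hr : A % 2 ^ ((ℓ+1) * W) % 2 ^ (ℓ * W) = A % 2 ^ (ℓ * W) := Nat.mod_mod_of_dvd _ hdvd
  have hdecomp : A % 2 ^ ((ℓ+1) * W) = q * 2 ^ (ℓ * W) + A % 2 ^ (ℓ * W) := by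
    rw [hq, ← hr]
    exact (Nat.div_add_mod' _ _).symm
  have hpow : (2:ℕ) ^ ((ℓ+1) * W) = 2 ^ (ℓ * W) * 2 ^ W := by
    rw [← pow_add]; congr 1; ring
  set P := (2:ℕ) ^ (ℓ * W)
  set Q := (2:ℕ) ^ W
  have hcorr : corr W ℓ x t = P * Q - P * q := by
    unfold corr
    rw [Nat.mul_sub]
  have hrP : A % P < P := Nat.mod_lt _ hP
  calc (A + corr W ℓ x t) % 2 ^ ((ℓ+1) * W)
      = (A % 2 ^ ((ℓ+1) * W) + corr W ℓ x t) % 2 ^ ((ℓ+1) * W) := by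
        rw [Nat.mod_add_mod]
    _ = (q * P + A % P + (P * Q - P * q)) % 2 ^ ((ℓ+1) * W) := by rw [hdecomp, hcorr]
    _ = (A % P + P * Q) % 2 ^ ((ℓ+1) * W) := by
        congr 1
        have hqQ : P * q ≤ P * Q := Nat.mul_le_mul_left _ (le_of_lt hqlt)
        have : q * P = P * q := Nat.mul_comm _ _
        omega
    _ = (A % P + P * Q) % (P * Q) := by rw [hpow]
    _ = A % P % (P * Q) := Nat.add_mod_right _ _
    _ = A % P := by
        apply Nat.mod_eq_of_lt
        calc A % P < P := hrP
        _ ≤ P * Q := Nat.le_mul_of_pos_right _ (by positivity)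


/-- `buildShift` starting at level ℓ only adds multiples of `2^(ℓ*W)`. -/
lemma buildShift_mod (W : ℕ) (l : List ℕ) (ℓ t : ℕ) :
    ∃ k, buildShift W l ℓ t = t + 2 ^ (ℓ * W) * k := by
  induction l generalizing ℓ t with
  | nil => exact ⟨0, by simp [buildShift]⟩
  | cons x rest ih =>
      obtain ⟨k, hk⟩ := ih (ℓ+1) (t + corr W ℓ x t)
      refine ⟨(2 ^ W - ((x + t) % 2 ^ ((ℓ+1) * W)) / 2 ^ (ℓ * W)) + 2 ^ W * k, ?_⟩
      show buildShift W rest (ℓ+1) (t + corr W ℓ x t) = _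
      rw [hk]
      have : (2:ℕ) ^ ((ℓ+1) * W) = 2 ^ (ℓ * W) * 2 ^ W := by
        rw [← pow_add]; congr 1; ring
      unfold corr
      rw [this]; ring

/-- main invariant: the final shift zeroes the band of each element. -/
lemma buildShift_bands (W : ℕ) (l : List ℕ) (ℓ₀ t₀ : ℕ) :
    ∀ j (hj : j < l.length),
      (l.get ⟨j, hj⟩ + buildShift W l ℓ₀ t₀) % 2 ^ ((ℓ₀ + j + 1) * W)
        < 2 ^ ((ℓ₀ + j) * W) := by
  induction l generalizing ℓ₀ t₀ with
  | nil => intro j hj; simp at hj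
  | cons x rest ih =>
      intro j hj
      have hstep : buildShift W (x :: rest) ℓ₀ t₀
          = buildShift W rest (ℓ₀+1) (t₀ + corr W ℓ₀ x t₀) := rfl
      match j with
      | 0 =>
          obtain ⟨k, hk⟩ := buildShift_mod W rest (ℓ₀+1) (t₀ + corr W ℓ₀ x t₀)
          simp only [List.get, Nat.add_zero]
          rw [hstep, hk]
          rw [show x + (t₀ + corr W ℓ₀ x t₀ + 2 ^ ((ℓ₀+1) * W) * k)
              = (x + t₀ + corr W ℓ₀ x t₀) + 2 ^ ((ℓ₀+1) * W) * k by ring]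
          rw [Nat.add_mul_mod_self_left]
          rw [corr_works W ℓ₀ x t₀]
          exact Nat.mod_lt _ (by positivity)
      | j + 1 =>
          have hj' : j < rest.length := by simpa using hj
          have := ih (ℓ₀ + 1) (t₀ + corr W ℓ₀ x t₀) j hj'
          rw [hstep]
          simp only [List.get]
          convert this using 3 <;> ring

/-- decoder arithmetic -/
lemma decode_dist {M : ℕ} (t i j : ℕ) (hi : 2 * i < M) (hj : 2 * j < M) :
    min (((i + t) % M + (M - (j + t) % M)) % M)
        (M - ((i + t) % M + (M - (j + t) % M)) % M) = Nat.dist i j := by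
  have hM : 0 < M := by omega
  set a := (i + t) % M with ha
  set b := (j + t) % M with hb
  have haM : a < M := Nat.mod_lt _ hM
  have hbM : b < M := Nat.mod_lt _ hM
  have key : (a + (M - b)) % M = if j ≤ i then i - j else M - (j - i) := by
    rcases le_or_gt j i with hji | hij
    · have h1 : i + t = (j + t) + (i - j) := by omega
      have h2 : a = (b + (i - j)) % M := by
        rw [ha, h1, Nat.mod_add_mod]
      rw [h2, Nat.mod_add_mod]
      have h3 : b + (i - j) + (M - b) = (i - j) + M := by omega
      rw [h3, Nat.add_mod_right, Nat.mod_eq_of_lt (by omega)]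
      simp [hji]
    · have hd : j + t = (i + t) + (j - i) := by omega
      have h2 : b = (a + (j - i)) % M := by rw [hb, hd, Nat.mod_add_mod]
      set d := j - i with hdd
      have hdM : d < M := by omega
      have hdpos : 0 < d := by omega
      rcases lt_or_ge (a + d) M with hlt | hge
      · have hbval : b = a + d := by rw [h2, Nat.mod_eq_of_lt hlt]
        have h3 : a + (M - b) = M - d := by omega
        rw [h3, Nat.mod_eq_of_lt (by omega)]
        simp [Nat.not_le.mpr hij]
      · have hbval : b = a + d - M := by
          rw [h2, Nat.mod_eq_sub_mod hge, Nat.mod_eq_of_lt (by omega)]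
        have h3 : a + (M - b) = 2 * M - d := by omega
        rw [h3, show 2 * M - d = (M - d) + M by omega, Nat.add_mod_right,
          Nat.mod_eq_of_lt (by omega)]
        simp [Nat.not_le.mpr hij]
  rw [key]
  have hdist : Nat.dist i j = (i - j) + (j - i) := rfl
  rcases le_or_gt j i with hji | hij
  · simp only [if_pos hji]
    omega
  · simp only [if_neg (Nat.not_le.mpr hij)]
    omega




variable {n m : ℕ} {G : SimpleGraph (Fin n)}

structure Spine (G : SimpleGraph (Fin n)) (m : ℕ) : Type where
  p' : ℕ → Fin n
  inj : ∀ x y, x < m → y < m → p' x = p' y → x = y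
  adj : ∀ x, x + 1 < m → G.Adj (p' x) (p' (x+1))
  leaf : ∀ v : Fin n, (∀ i, i < m → p' i ≠ v) → (G.neighborSet v).ncard = 1

def walkUp (S : Spine G m) : (d : ℕ) → (i : ℕ) → (h : i + d < m) → G.Walk (S.p' i) (S.p' (i + d))
  | 0, _, _ => Walk.nil
  | d+1, i, h => (walkUp S d i (by omega)).concat (S.adj (i+d) h)

lemma walkUp_length (S : Spine G m) (d i : ℕ) (h : i + d < m) :
    (walkUp S d i h).length = d := by
  induction d with
  | zero => rfl
  | succ d ih => rw [walkUp, Walk.length_concat, ih]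

lemma walkUp_support (S : Spine G m) (d i : ℕ) (h : i + d < m) :
    (walkUp S d i h).support = (List.range' i (d+1)).map S.p' := by
  induction d with
  | zero => simp [walkUp]
  | succ d ih =>
      rw [walkUp, Walk.support_concat, ih]
      have h1 : List.range' i (d+1+1) = List.range' i (d+1) ++ [i + (d+1)] := by
        simpa using List.range'_concat (step := 1) (s := i) (n := d+1)
      rw [h1, List.map_append]
      simp

lemma walkUp_isPath (S : Spine G m) (d i : ℕ) (h : i + d < m) :
    (walkUp S d i h).IsPath := by
  rw [Walk.isPath_def, walkUp_support]
  apply List.Nodup.map_on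
  · intro x hx y hy hxy
    rw [List.mem_range'_1] at hx hy
    exact S.inj x y (by omega) (by omega) hxy
  · exact List.nodup_range' _

lemma dist_spine (hT : G.IsTree) (S : Spine G m) (d i : ℕ) (h : i + d < m) :
    G.dist (S.p' i) (S.p' (i + d)) = d := by
  obtain ⟨q, hqp, hql⟩ := hT.isConnected.exists_path_of_dist (S.p' i) (S.p' (i+d))
  have huniq := isAcyclic_iff_path_unique.mp hT.IsAcyclic
    (⟨q, hqp⟩ : G.Path _ _) (⟨walkUp S d i h, walkUp_isPath S d i h⟩ : G.Path _ _)
  have hq : q = walkUp S d i h := congrArg Subtype.val huniq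
  rw [← hql, hq, walkUp_length]

lemma dist_spine' (hT : G.IsTree) (S : Spine G m) (i j : ℕ) (hi : i < m) (hj : j < m) :
    G.dist (S.p' i) (S.p' j) = Nat.dist i j := by
  rcases le_total i j with hij | hji
  · have h2 := dist_spine hT S (j - i) i (by omega)
    rw [show i + (j - i) = j by omega] at h2
    rw [h2]; simp [Nat.dist]; omega
  · have h2 := dist_spine hT S (i - j) j (by omega)
    rw [show j + (i - j) = i by omega] at h2
    rw [SimpleGraph.dist_comm, h2]; simp [Nat.dist]; omega

/-- the unique neighbor of a leaf is on the spine -/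
lemma leaf_nbr_spine (hT : G.IsTree) (hm : 1 ≤ m) (S : Spine G m) (v : Fin n)
    (hv : ∀ i, i < m → S.p' i ≠ v) {b : Fin n} (hb : G.neighborSet v = {b}) :
    ∃ i, i < m ∧ S.p' i = b := by
  by_contra hcon
  push_neg at hcon
  have hbleaf : ∀ i, i < m → S.p' i ≠ b := fun i hi => hcon i hi
  obtain ⟨b', hb'⟩ := Set.ncard_eq_one.mp (S.leaf b hbleaf)
  have hadjvb : G.Adj v b := by
    have : b ∈ G.neighborSet v := by rw [hb]; rfl
    exact this
  have hvb' : b' = v := by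
    have h3 : v ∈ G.neighborSet b := hadjvb.symm
    rw [hb'] at h3
    exact (Set.mem_singleton_iff.mp h3).symm
  rw [hvb'] at hb'
  -- trap: any walk starting in {v, b} ends in {v, b}
  have trap : ∀ (N : ℕ) (s t : Fin n) (W : G.Walk s t), W.length ≤ N →
      (s = v ∨ s = b) → (t = v ∨ t = b) := by
    intro N
    induction N with
    | zero =>
        intro s t W hlen hs
        cases W with
        | nil => exact hs
        | cons hadj q => simp [SimpleGraph.Walk.length_cons] at hlen
    | succ N ihN =>
        intro s t W hlen hs
        cases W with
        | nil => exact hs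
        | cons hadj q =>
            refine ihN _ _ q ?_ ?_
            · have := SimpleGraph.Walk.length_cons hadj q
              omega
            · rcases hs with rfl | rfl
              · have h3 : _ ∈ G.neighborSet s := hadj
                rw [hb] at h3
                exact Or.inr h3
              · have h3 : _ ∈ G.neighborSet s := hadj
                rw [hb'] at h3
                exact Or.inl h3
  obtain ⟨Wk⟩ := hT.isConnected.preconnected v (S.p' 0)
  have htrap := trap Wk.length v (S.p' 0) Wk le_rfl (Or.inl rfl)
  rcases htrap with h | h
  · exact hv 0 hm h
  · exact hbleaf 0 hm h


/-- distance from a leaf goes through its unique neighbor -/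
lemma dist_leaf_step (hT : G.IsTree) {v b x : Fin n}
    (hb : G.neighborSet v = {b}) (hx : x ≠ v) :
    G.dist v x = 1 + G.dist b x := by
  have hadj : G.Adj v b := by
    have : b ∈ G.neighborSet v := by rw [hb]; rfl
    exact this
  have hne : v ≠ b := G.ne_of_adj hadj
  have hle : G.dist v x ≤ 1 + G.dist b x := by
    have h1 : G.dist v b = 1 := SimpleGraph.dist_eq_one_iff_adj.mpr hadj
    have := hT.isConnected.dist_triangle (u := v) (v := b) (w := x)
    omega
  have hge : 1 + G.dist b x ≤ G.dist v x := by
    have hvx : v ≠ x := fun h => hx h.symm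
    have hpos : G.dist v x ≠ 0 := by
      have := hT.isConnected.pos_dist_of_ne hvx
      omega
    obtain ⟨W, hW⟩ := SimpleGraph.exists_walk_of_dist_ne_zero hpos
    cases W with
    | nil => exact absurd rfl hvx
    | cons hadj2 q =>
        rename_i c
        have h3 : c ∈ G.neighborSet v := hadj2
        rw [hb, Set.mem_singleton_iff] at h3
        have hq : G.dist b x ≤ q.length := by
          rw [← h3]; exact SimpleGraph.dist_le q
        have hlc := SimpleGraph.Walk.length_cons hadj2 q
        omega
  omega

/-- The main structural extraction from a caterpillar. -/
lemma cat_positions (hT : G.IsTree) (hm : 1 ≤ m) (S : Spine G m) :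
    ∃ pos k : Fin n → ℕ,
      (∀ u, pos u < m) ∧
      (∀ u v : Fin n, pos u = pos v → k u = k v → u = v) ∧
      (∀ u, k u < (Finset.univ.filter (fun x => pos x = pos u)).card) ∧
      (∀ u v : Fin n, u ≠ v →
        G.dist u v = Nat.dist (pos u) (pos v) + min (k u) 1 + min (k v) 1) := by
  classical
  set IsSpine : Fin n → Prop := fun u => ∃ i, i < m ∧ S.p' i = u with hSpineDef
  have exS : ∀ u : Fin n, ∃ i, i < m ∧
      ((S.p' i = u) ∨ (¬ IsSpine u ∧ G.neighborSet u = {S.p' i})) := by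
    intro u
    by_cases hu : IsSpine u
    · obtain ⟨i, hi, hpi⟩ := hu
      exact ⟨i, hi, Or.inl hpi⟩
    · have hleaf : ∀ i, i < m → S.p' i ≠ u := by
        intro i hi hc
        exact hu ⟨i, hi, hc⟩
      obtain ⟨b, hb⟩ := Set.ncard_eq_one.mp (S.leaf u hleaf)
      obtain ⟨i, hi, hpi⟩ := leaf_nbr_spine hT hm S u hleaf hb
      exact ⟨i, hi, Or.inr ⟨hu, by rw [hpi]; exact hb⟩⟩
  set pos : Fin n → ℕ := fun u => (exS u).choose with hposDef
  have posLt : ∀ u, pos u < m := fun u => (exS u).choose_spec.1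
  have posSpec : ∀ u, (S.p' (pos u) = u) ∨
      (¬ IsSpine u ∧ G.neighborSet u = {S.p' (pos u)}) := fun u => (exS u).choose_spec.2
  have key1 : ∀ u, IsSpine u → S.p' (pos u) = u := by
    intro u hu
    rcases posSpec u with h | h
    · exact h
    · exact absurd hu h.1
  have key2 : ∀ u, ¬ IsSpine u → G.neighborSet u = {S.p' (pos u)} := by
    intro u hu
    rcases posSpec u with h | h
    · exact absurd ⟨pos u, posLt u, h⟩ hu
    · exact h.2
  have posP : ∀ i, i < m → pos (S.p' i) = i := by
    intro i hi
    have hsp : IsSpine (S.p' i) := ⟨i, hi, rfl⟩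
    exact S.inj _ _ (posLt _) hi (key1 _ hsp)
  set k : Fin n → ℕ := fun u =>
    if IsSpine u then 0
    else 1 + (Finset.univ.filter (fun x => ¬ IsSpine x ∧ pos x = pos u ∧ x < u)).card
    with hkDef
  have kSpine : ∀ u, IsSpine u → k u = 0 := by
    intro u hu; simp only [hkDef, if_pos hu]
  have kLeaf : ∀ u, ¬ IsSpine u → k u =
      1 + (Finset.univ.filter (fun x => ¬ IsSpine x ∧ pos x = pos u ∧ x < u)).card := by
    intro u hu; simp only [hkDef, if_neg hu]
  refine ⟨pos, k, posLt, ?_, ?_, ?_⟩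
  · -- injectivity
    intro u v hpos hk
    by_cases hu : IsSpine u <;> by_cases hv : IsSpine v
    · rw [← key1 u hu, ← key1 v hv, hpos]
    · exfalso
      rw [kSpine u hu, kLeaf v hv] at hk
      omega
    · exfalso
      rw [kSpine v hv, kLeaf u hu] at hk
      omega
    · -- both leaves
      by_contra hne
      have main : ∀ a c : Fin n, ¬ IsSpine a → ¬ IsSpine c → pos a = pos c → a < c →
          (Finset.univ.filter (fun x => ¬ IsSpine x ∧ pos x = pos a ∧ x < a)).card
          < (Finset.univ.filter (fun x => ¬ IsSpine x ∧ pos x = pos c ∧ x < c)).card := by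
        intro a c ha hc hac hlt
        apply Finset.card_lt_card
        constructor
        · intro x hx
          simp only [Finset.mem_filter] at hx ⊢
          refine ⟨hx.1, hx.2.1, ?_, ?_⟩
          · rw [← hac]; exact hx.2.2.1
          · exact lt_trans hx.2.2.2 hlt
        · intro hsub
          have : a ∈ (Finset.univ.filter (fun x => ¬ IsSpine x ∧ pos x = pos c ∧ x < c)) := by
            simp only [Finset.mem_filter]
            exact ⟨Finset.mem_univ _, ha, hac, hlt⟩
          have h2 := hsub this
          simp only [Finset.mem_filter] at h2
          exact absurd h2.2.2.2 (lt_irrefl a)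
      rcases lt_or_gt_of_ne hne with hlt | hlt
      · have := main u v hu hv hpos hlt
        rw [kLeaf u hu, kLeaf v hv] at hk
        omega
      · have := main v u hv hu hpos.symm hlt
        rw [kLeaf u hu, kLeaf v hv] at hk
        omega
  · -- k bound by fiber card
    intro u
    by_cases hu : IsSpine u
    · rw [kSpine u hu]
      apply Finset.card_pos.mpr
      exact ⟨u, by simp⟩
    · rw [kLeaf u hu]
      set A := Finset.univ.filter (fun x => ¬ IsSpine x ∧ pos x = pos u ∧ x < u) with hA
      have hsub : insert u (insert (S.p' (pos u)) A)
          ⊆ Finset.univ.filter (fun x => pos x = pos u) := by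
        intro x hx
        simp only [Finset.mem_insert, hA, Finset.mem_filter] at hx ⊢
        rcases hx with rfl | rfl | hx
        · exact ⟨Finset.mem_univ _, rfl⟩
        · exact ⟨Finset.mem_univ _, posP _ (posLt u)⟩
        · exact ⟨Finset.mem_univ _, hx.2.2.1⟩
      have hu_ne : u ∉ insert (S.p' (pos u)) A := by
        intro hc
        rcases Finset.mem_insert.mp hc with hc1 | hc2
        · exact hu ⟨pos u, posLt u, hc1.symm⟩
        · rw [hA] at hc2
          simp only [Finset.mem_filter] at hc2
          exact lt_irrefl u hc2.2.2.2
      have hp_ne : S.p' (pos u) ∉ A := by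
        simp only [hA, Finset.mem_filter]
        push_neg
        intro _ hc
        exact absurd ⟨pos u, posLt u, rfl⟩ hc
      calc 1 + A.card < 2 + A.card := by omega
      _ = (insert u (insert (S.p' (pos u)) A)).card := by
          rw [Finset.card_insert_of_notMem hu_ne, Finset.card_insert_of_notMem hp_ne]
          omega
      _ ≤ _ := Finset.card_le_card hsub
  · -- distance formula
    intro u v huv
    by_cases hu : IsSpine u <;> by_cases hv : IsSpine v
    · rw [kSpine u hu, kSpine v hv]
      have := dist_spine' hT S (pos u) (pos v) (posLt u) (posLt v)
      rw [key1 u hu, key1 v hv] at this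
      simpa using this
    · -- u spine, v leaf
      rw [kSpine u hu, kLeaf v hv]
      rw [SimpleGraph.dist_comm]
      rw [dist_leaf_step hT (key2 v hv) huv]
      have := dist_spine' hT S (pos v) (pos u) (posLt v) (posLt u)
      rw [key1 u hu] at this
      rw [this, Nat.dist_comm]
      simp [Nat.dist]
      omega
    · -- u leaf, v spine
      rw [kSpine v hv, kLeaf u hu]
      rw [dist_leaf_step hT (key2 u hu) (Ne.symm huv)]
      have := dist_spine' hT S (pos u) (pos v) (posLt u) (posLt v)
      rw [key1 v hv] at this
      rw [this]
      simp [Nat.dist]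
      omega
    · -- both leaves
      have hbu : ¬ IsSpine v → S.p' (pos u) ≠ v := by
        intro hv' hc
        exact hv' ⟨pos u, posLt u, hc⟩
      rw [dist_leaf_step hT (key2 u hu) (Ne.symm huv)]
      rw [SimpleGraph.dist_comm (u := S.p' (pos u))]
      rw [dist_leaf_step hT (key2 v hv) (hbu hv)]
      have := dist_spine' hT S (pos v) (pos u) (posLt v) (posLt u)
      rw [this, kLeaf u hu, kLeaf v hv, Nat.dist_comm]
      simp [Nat.dist]
      omega



/-! ### Scheme constants (functions of `n` only) -/

def Lg (n : ℕ) : ℕ := Nat.log 2 n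
def LLg (n : ℕ) : ℕ := Nat.log 2 (Lg n)
def LLLg (n : ℕ) : ℕ := Nat.log 2 (LLg n)
def Bcap (n : ℕ) : ℕ := 2 * Lg n + 2 + 100 * LLLg n - LLg n
def Lam (n : ℕ) : ℕ := Lg n + 3
def Mod' (n : ℕ) : ℕ := 2 ^ Lam n
def E1 (n : ℕ) : ℕ := LLg n + 4 - 100 * LLLg n
def L1 (n : ℕ) : ℕ := E1 n + 1
def Wd (n : ℕ) : ℕ := L1 n + LLg n + 3 - 100 * LLLg n

def parseLab (n : ℕ) (z : List Bool) : ℕ × ℕ :=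
  match z with
  | true :: rest =>
      (1, unsplice (ofBits ((rest.drop (L1 n)).take (Lam n - Wd n)))
            (ofBits (rest.take (L1 n))) (Wd n))
  | false :: fb :: rest => ((if fb then 1 else 0), ofBits (rest.take (Lam n)))
  | _ => (0, 0)

def dec (n : ℕ) (x y : List Bool) : ℕ :=
  if x = y then 0
  else
    (min ((((parseLab n x).2) + (Mod' n - (parseLab n y).2)) % Mod' n)
         (Mod' n - (((parseLab n x).2) + (Mod' n - (parseLab n y).2)) % Mod' n))
      + (parseLab n x).1 + (parseLab n y).1

lemma base_facts (n : ℕ) (hn : 16 ≤ n) :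
    4 ≤ Lg n ∧ 2 ≤ LLg n ∧ 1 ≤ LLLg n ∧ 2 ^ Lg n ≤ n ∧ n < 2 ^ (Lg n + 1) ∧
      LLg n ≤ Lg n ∧ 2 ^ LLg n ≤ Lg n ∧ Lg n < 2 ^ (LLg n + 1) ∧ LLg n < 2 ^ (LLLg n + 1) := by
  have h1 : 4 ≤ Lg n := by
    have : (2:ℕ) ^ 4 ≤ n := by omega
    exact (Nat.le_log_iff_pow_le (by norm_num) (by omega)).mpr this
  have h2 : 2 ≤ LLg n := by
    have : (2:ℕ) ^ 2 ≤ Lg n := by omega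
    exact (Nat.le_log_iff_pow_le (by norm_num) (by omega)).mpr this
  have h3 : 1 ≤ LLLg n := by
    have : (2:ℕ) ^ 1 ≤ LLg n := by omega
    exact (Nat.le_log_iff_pow_le (by norm_num) (by omega)).mpr this
  refine ⟨h1, h2, h3, ?_, ?_, ?_, ?_, ?_, ?_⟩
  · exact Nat.pow_log_le_self 2 (by omega)
  · exact Nat.lt_pow_succ_log_self (by norm_num) n
  · exact Nat.log_le_self 2 (Lg n)
  · exact Nat.pow_log_le_self 2 (by omega)
  · exact Nat.lt_pow_succ_log_self (by norm_num) (Lg n)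
  · exact Nat.lt_pow_succ_log_self (by norm_num) (LLg n)

lemma band_space (n : ℕ) (hn : 16 ≤ n) (hkey : 100 * LLLg n ≤ LLg n + 3) :
    2 ^ E1 n * Wd n ≤ Lam n := by
  obtain ⟨h1, h2, h3, h4, h5, h6, h7, h8, h9⟩ := base_facts n hn
  have hW : Wd n ≤ 2 * LLg n + 8 := by
    unfold Wd L1 E1; omega
  have hWb : 2 * LLg n + 8 ≤ 2 ^ (LLLg n + 3) := by
    have e1 : (2:ℕ) ^ (LLLg n + 3) = 4 * 2 ^ (LLLg n + 1) := by
      rw [pow_add, pow_add]; ring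
    omega
  have hE : E1 n + (LLLg n + 3) ≤ LLg n := by
    unfold E1; omega
  calc 2 ^ E1 n * Wd n ≤ 2 ^ E1 n * 2 ^ (LLLg n + 3) := by
        exact Nat.mul_le_mul_left _ (le_trans hW hWb)
  _ = 2 ^ (E1 n + (LLLg n + 3)) := by rw [← pow_add]
  _ ≤ 2 ^ LLg n := Nat.pow_le_pow_right (by norm_num) hE
  _ ≤ Lg n := h7
  _ ≤ Lam n := by unfold Lam; omega

lemma scheme_exists {n m : ℕ} {G : SimpleGraph (Fin n)} (hn : 16 ≤ n)
    (hmn : m ≤ n) (pos k : Fin n → ℕ)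
    (posLt : ∀ u, pos u < m)
    (kinj : ∀ u v : Fin n, pos u = pos v → k u = k v → u = v)
    (kLt : ∀ u, k u < (Finset.univ.filter (fun x => pos x = pos u)).card)
    (hdist : ∀ u v : Fin n, u ≠ v →
      G.dist u v = Nat.dist (pos u) (pos v) + min (k u) 1 + min (k v) 1) :
    ∃ e : Fin n → List Bool,
      (∀ u v, dec n (e u) (e v) = G.dist u v) ∧
      (∀ u, (e u).length ≤ Bcap n) := by
  classical
  obtain ⟨hb1, hb2, hb3, hb4, hb5, hb6, hb7, hb8, hb9⟩ := base_facts n hn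
  set w : ℕ → ℕ := fun i => (Finset.univ.filter (fun x : Fin n => pos x = i)).card with hw
  set sz : ℕ → ℕ := fun i => Nat.size (w i - 1) with hsz
  set hFS : Finset ℕ := (Finset.range m).filter (fun i => Bcap n < 2 + Lam n + sz i) with hhFS
  set hl : List ℕ := hFS.sort (· ≤ ·) with hhl
  set t : ℕ := buildShift (Wd n) hl 0 0 with ht
  set sf : ℕ → ℕ := fun i => (i + t) % Mod' n with hsf
  have hBL : Bcap n + LLg n = 2 * Lg n + 2 + 100 * LLLg n := by
    unfold Bcap; omega
  have hMpos : 0 < Mod' n := by unfold Mod'; positivity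
  have hwn : ∀ i, w i ≤ n := by
    intro i
    calc w i ≤ (Finset.univ : Finset (Fin n)).card := Finset.card_filter_le _ _
    _ = n := by simp
  have hkw : ∀ u : Fin n, k u < w (pos u) := kLt
  have hszn : ∀ i, sz i ≤ Lg n + 1 := by
    intro i
    rw [hsz]
    apply Nat.size_le.mpr
    have := hwn i
    omega
  have hBcapΛ : Lam n + 2 ≤ Bcap n := by
    unfold Lam; omega
  -- counting heavies
  have hsum : ∑ i ∈ Finset.range m, w i = n := by
    have h := Finset.card_eq_sum_card_fiberwise
      (f := pos) (s := (Finset.univ : Finset (Fin n))) (t := Finset.range m)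
      (fun u _ => Finset.mem_range.mpr (posLt u))
    rw [Finset.card_univ, Fintype.card_fin] at h
    exact h.symm
  have hheavy_w : ∀ i ∈ hFS, 2 ^ (Bcap n - Lam n - 2) ≤ w i - 1 := by
    intro i hi
    rw [hhFS, Finset.mem_filter] at hi
    by_contra hc
    push_neg at hc
    have h2 : sz i ≤ Bcap n - Lam n - 2 := Nat.size_le.mpr (by omega)
    omega
  have hcard2 : hFS.card * 2 ^ (Bcap n - Lam n - 2) ≤ n := by
    have h1 : ∑ _i ∈ hFS, 2 ^ (Bcap n - Lam n - 2) ≤ ∑ i ∈ hFS, (w i - 1) :=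
      Finset.sum_le_sum hheavy_w
    rw [Finset.sum_const, smul_eq_mul] at h1
    have h2 : ∑ i ∈ hFS, (w i - 1) ≤ ∑ i ∈ hFS, w i :=
      Finset.sum_le_sum (fun i _ => Nat.sub_le _ _)
    have h3 : ∑ i ∈ hFS, w i ≤ ∑ i ∈ Finset.range m, w i := by
      apply Finset.sum_le_sum_of_subset
      rw [hhFS]
      exact Finset.filter_subset _ _
    omega
  have hkey : hFS.Nonempty → 100 * LLLg n ≤ LLg n + 3 := by
    rintro ⟨i, hi⟩
    rw [hhFS, Finset.mem_filter] at hi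
    have h1 := hszn i
    have hΛ : Lam n = Lg n + 3 := rfl
    omega
  have hKcard : hFS.Nonempty → hFS.card ≤ 2 ^ E1 n := by
    intro hne
    have hk := hkey hne
    have hθE : (Bcap n - Lam n - 2) + E1 n = Lg n + 1 := by
      have hΛ : Lam n = Lg n + 3 := rfl
      have hE : E1 n = LLg n + 4 - 100 * LLLg n := rfl
      omega
    have hpow : 2 ^ (Bcap n - Lam n - 2) * 2 ^ E1 n = 2 ^ (Lg n + 1) := by
      rw [← pow_add, hθE]
    by_contra hc
    push_neg at hc
    have h7 : 2 ^ (Lg n + 1) + 2 ^ (Bcap n - Lam n - 2)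
        ≤ hFS.card * 2 ^ (Bcap n - Lam n - 2) := by
      calc 2 ^ (Lg n + 1) + 2 ^ (Bcap n - Lam n - 2)
          = (2 ^ E1 n + 1) * 2 ^ (Bcap n - Lam n - 2) := by rw [← hpow]; ring
      _ ≤ hFS.card * 2 ^ (Bcap n - Lam n - 2) := Nat.mul_le_mul_right _ (by omega)
    have h8 := le_trans h7 hcard2
    have h9 : (0:ℕ) < 2 ^ (Bcap n - Lam n - 2) := by positivity
    omega
  have hband : hFS.Nonempty → hFS.card * Wd n ≤ Lam n := by
    intro hne
    calc hFS.card * Wd n ≤ 2 ^ E1 n * Wd n :=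
      Nat.mul_le_mul_right _ (hKcard hne)
    _ ≤ Lam n := band_space n hn (hkey hne)
  have hl_len : hl.length = hFS.card := Finset.length_sort _
  have hlev : ∀ i ∈ hFS, hl.idxOf i < hl.length := by
    intro i hi
    exact List.idxOf_lt_length_iff.mpr ((Finset.mem_sort _).mpr hi)
  have hget : ∀ i (hi : i ∈ hFS), hl.get ⟨hl.idxOf i, hlev i hi⟩ = i := by
    intro i hi
    exact List.getElem_idxOf (hlev i hi)
  have hlevW : ∀ i ∈ hFS, (hl.idxOf i + 1) * Wd n ≤ Lam n := by
    intro i hi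
    have h1 : hl.idxOf i + 1 ≤ hFS.card := by
      have := hlev i hi
      omega
    calc (hl.idxOf i + 1) * Wd n ≤ hFS.card * Wd n := Nat.mul_le_mul_right _ h1
    _ ≤ Lam n := hband ⟨i, hi⟩
  have hbandzero : ∀ i ∈ hFS, BandZero (sf i) (hl.idxOf i) (Wd n) := by
    intro i hi
    have hb := buildShift_bands (Wd n) hl 0 0 (hl.idxOf i) (hlev i hi)
    rw [hget i hi, ← ht] at hb
    simp only [Nat.zero_add] at hb
    unfold BandZero
    have hdvd : (2:ℕ) ^ ((hl.idxOf i + 1) * Wd n) ∣ Mod' n := by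
      unfold Mod'
      exact pow_dvd_pow 2 (hlevW i hi)
    simp only [hsf]
    rw [Nat.mod_mod_of_dvd _ hdvd]
    exact hb
  -- the encoder
  set enc : Fin n → List Bool := fun u =>
    if Bcap n < 2 + Lam n + sz (pos u) ∧ k u ≠ 0 then
      true :: (toBits (L1 n) (hl.idxOf (pos u)) ++
        (toBits (Lam n - Wd n) (splice (sf (pos u)) (hl.idxOf (pos u)) (Wd n)) ++
          toBits (Nat.size (k u)) (k u)))
    else
      false :: decide (k u ≠ 0) :: (toBits (Lam n) (sf (pos u)) ++ toBits (Nat.size (k u)) (k u))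
    with henc
  have hsflt : ∀ i, sf i < Mod' n := fun i => Nat.mod_lt _ hMpos
  have hparse : ∀ u, parseLab n (enc u) = (min (k u) 1, sf (pos u)) := by
    intro u
    by_cases hcase : Bcap n < 2 + Lam n + sz (pos u) ∧ k u ≠ 0
    · have hencu : enc u = true :: (toBits (L1 n) (hl.idxOf (pos u)) ++
          (toBits (Lam n - Wd n) (splice (sf (pos u)) (hl.idxOf (pos u)) (Wd n)) ++
            toBits (Nat.size (k u)) (k u))) := by
        simp only [henc]
        rw [if_pos hcase]
      have hiFS : pos u ∈ hFS := by
        rw [hhFS, Finset.mem_filter, Finset.mem_range]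
        exact ⟨posLt u, hcase.1⟩
      have hidx : hl.idxOf (pos u) < 2 ^ L1 n := by
        have h1 := hlev _ hiFS
        have h2 : hFS.card ≤ 2 ^ E1 n := hKcard ⟨_, hiFS⟩
        have h3 : (2:ℕ) ^ L1 n = 2 * 2 ^ E1 n := by
          show (2:ℕ) ^ (E1 n + 1) = _
          rw [pow_succ]; ring
        omega
      have hsplt : splice (sf (pos u)) (hl.idxOf (pos u)) (Wd n) < 2 ^ (Lam n - Wd n) := by
        apply splice_lt
        · have h4 := hsflt (pos u)
          unfold Mod' at h4
          exact h4
        · exact hlevW _ hiFS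
      rw [hencu]
      simp only [parseLab]
      rw [List.take_left' (toBits_length _ _), List.drop_left' (toBits_length _ _),
          List.take_left' (toBits_length _ _)]
      rw [ofBits_toBits _ _ hidx, ofBits_toBits _ _ hsplt,
          unsplice_splice (hbandzero _ hiFS)]
      have hm1 : min (k u) 1 = 1 := by
        have := hcase.2
        omega
      rw [hm1]
    · have hencu : enc u = false :: decide (k u ≠ 0) ::
          (toBits (Lam n) (sf (pos u)) ++ toBits (Nat.size (k u)) (k u)) := by
        simp only [henc]
        rw [if_neg hcase]
      rw [hencu]
      simp only [parseLab]
      rw [List.take_left' (toBits_length _ _)]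
      rw [ofBits_toBits _ _ (by have h4 := hsflt (pos u); unfold Mod' at h4; exact h4)]
      by_cases hk0 : k u = 0
      · simp [hk0]
      · simp [hk0]
        omega
  have hposM : ∀ u : Fin n, 2 * pos u < Mod' n := by
    intro u
    have h1 : pos u < m := posLt u
    have hM3 : Mod' n = 2 ^ (Lg n + 1) * 4 := by
      show (2:ℕ) ^ Lam n = _
      have : Lam n = (Lg n + 1) + 2 := by
        show Lg n + 3 = _
        omega
      rw [this, pow_add]
      norm_num
    omega
  have hinj : ∀ u v : Fin n, enc u = enc v → u = v := by
    intro u v heq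
    have hps : (min (k u) 1, sf (pos u)) = (min (k v) 1, sf (pos v)) := by
      rw [← hparse u, ← hparse v, heq]
    have hs : sf (pos u) = sf (pos v) := congrArg Prod.snd hps
    have hposuv : pos u = pos v := by
      have h1 : (pos u + t) % Mod' n = (pos v + t) % Mod' n := by
        simpa [hsf] using hs
      have h2 : pos u ≡ pos v [MOD Mod' n] := Nat.ModEq.add_right_cancel' t h1
      have h3 : pos u < Mod' n := by have := hposM u; omega
      have h4 : pos v < Mod' n := by have := hposM v; omega
      have h5 : pos u % Mod' n = pos v % Mod' n := h2
      rw [Nat.mod_eq_of_lt h3, Nat.mod_eq_of_lt h4] at h5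
      exact h5
    apply kinj u v hposuv
    have hktoBits : toBits (Nat.size (k u)) (k u) = toBits (Nat.size (k v)) (k v) → k u = k v := by
      intro h
      have hk1 : ofBits (toBits (Nat.size (k u)) (k u))
          = ofBits (toBits (Nat.size (k v)) (k v)) := by rw [h]
      rwa [ofBits_toBits _ _ (Nat.lt_size_self _), ofBits_toBits _ _ (Nat.lt_size_self _)] at hk1
    simp only [henc] at heq
    by_cases hcase : Bcap n < 2 + Lam n + sz (pos u) ∧ k u ≠ 0 <;>
      by_cases hcase2 : Bcap n < 2 + Lam n + sz (pos v) ∧ k v ≠ 0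
    · rw [if_pos hcase, if_pos hcase2] at heq
      injection heq with _ heq2
      obtain ⟨-, heq3⟩ := List.append_inj heq2 (by simp)
      obtain ⟨-, heq4⟩ := List.append_inj heq3 (by simp)
      exact hktoBits heq4
    · rw [if_pos hcase, if_neg hcase2] at heq
      injection heq with h1 _
      exact absurd h1 (by simp)
    · rw [if_neg hcase, if_pos hcase2] at heq
      injection heq with h1 _
      exact absurd h1 (by simp)
    · rw [if_neg hcase, if_neg hcase2] at heq
      injection heq with _ heq2
      injection heq2 with _ heq3
      obtain ⟨-, heq4⟩ := List.append_inj heq3 (by simp)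
      exact hktoBits heq4
  have hlen : ∀ u, (enc u).length ≤ Bcap n := by
    intro u
    simp only [henc]
    have hszk0 : Nat.size (k u) ≤ sz (pos u) := by
      have h1 : k u < w (pos u) := hkw u
      have h2 : k u ≤ w (pos u) - 1 := by omega
      exact Nat.size_le_size h2
    by_cases hcase : Bcap n < 2 + Lam n + sz (pos u) ∧ k u ≠ 0
    · rw [if_pos hcase]
      simp only [List.length_cons, List.length_append, toBits_length]
      have hiFS : pos u ∈ hFS := by
        rw [hhFS, Finset.mem_filter, Finset.mem_range]
        exact ⟨posLt u, hcase.1⟩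
      have hne2 : hFS.Nonempty := ⟨_, hiFS⟩
      have h100 := hkey hne2
      have hWΛ : Wd n ≤ Lam n := by
        have h1 := hband hne2
        have h2 : 1 ≤ hFS.card := Finset.card_pos.mpr hne2
        calc Wd n = 1 * Wd n := (one_mul _).symm
        _ ≤ hFS.card * Wd n := Nat.mul_le_mul_right _ h2
        _ ≤ Lam n := h1
      have hszk : Nat.size (k u) ≤ Lg n + 1 := le_trans hszk0 (hszn _)
      have hΛ : Lam n = Lg n + 3 := rfl
      have hL1 : L1 n = E1 n + 1 := rfl
      have hE1eq : E1 n = LLg n + 4 - 100 * LLLg n := rfl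
      have hWeq : Wd n = L1 n + LLg n + 3 - 100 * LLLg n := rfl
      omega
    · rw [if_neg hcase]
      simp only [List.length_cons, List.length_append, toBits_length]
      push_neg at hcase
      by_cases hh : Bcap n < 2 + Lam n + sz (pos u)
      · have hk0 : k u = 0 := hcase hh
        rw [hk0]
        simp only [Nat.size_zero]
        omega
      · push_neg at hh
        omega
  refine ⟨enc, ?_, hlen⟩
  intro u v
  by_cases huv : u = v
  · subst huv
    rw [dec, if_pos rfl]
    exact (SimpleGraph.dist_self).symm
  · have hne : enc u ≠ enc v := fun h => huv (hinj u v h)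
    rw [dec, if_neg hne, hparse, hparse]
    simp only
    rw [hdist u v huv]
    congr 1
    congr 1
    exact decode_dist t (pos u) (pos v) (hposM u) (hposM v)

/-! ### Real-log bound for `Bcap` -/

lemma logb_nat_pow_le {a : ℕ} {x : ℝ} (h : (2:ℝ) ^ a ≤ x) : (a : ℝ) ≤ Real.logb 2 x := by
  have h2 : (0:ℝ) < 2 ^ a := by positivity
  calc (a : ℝ) = Real.logb 2 ((2:ℝ) ^ a) := by
        rw [Real.logb_pow, Real.logb_self_eq_one (by norm_num)]
        ring
  _ ≤ Real.logb 2 x := Real.logb_le_logb_of_le (by norm_num) h2 h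

lemma logb_le_nat_pow {a : ℕ} {x : ℝ} (hx : 0 < x) (h : x ≤ (2:ℝ) ^ a) :
    Real.logb 2 x ≤ (a : ℝ) := by
  calc Real.logb 2 x ≤ Real.logb 2 ((2:ℝ) ^ a) := Real.logb_le_logb_of_le (by norm_num) hx h
  _ = (a : ℝ) := by
        rw [Real.logb_pow, Real.logb_self_eq_one (by norm_num)]
        ring

lemma bcap_le_real (n : ℕ) (hn : 16 ≤ n) :
    (Bcap n : ℝ) ≤ 2 * Real.logb 2 n - Real.logb 2 (Real.logb 2 n)
      + 110 * Real.logb 2 (Real.logb 2 (Real.logb 2 n)) := by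
  obtain ⟨hb1, hb2, hb3, hb4, hb5, hb6, hb7, hb8, hb9⟩ := base_facts n hn
  have hnpos : (0:ℝ) < n := by
    have : (0:ℕ) < n := by omega
    exact_mod_cast this
  have hxL : (Lg n : ℝ) ≤ Real.logb 2 n := by
    apply logb_nat_pow_le
    calc ((2:ℝ) ^ Lg n) = ((2 ^ Lg n : ℕ) : ℝ) := by push_cast; ring
    _ ≤ n := by exact_mod_cast hb4
  have hxU : Real.logb 2 n ≤ (Lg n : ℝ) + 1 := by
    have h := logb_le_nat_pow (a := Lg n + 1) hnpos (by
      calc (n:ℝ) ≤ ((2 ^ (Lg n + 1) : ℕ) : ℝ) := by exact_mod_cast (le_of_lt hb5)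
      _ = (2:ℝ) ^ (Lg n + 1) := by push_cast; ring)
    push_cast at h
    linarith
  have hxpos : (0:ℝ) < Real.logb 2 n := by
    have h4 : (4:ℝ) ≤ (Lg n : ℝ) := by exact_mod_cast hb1
    linarith
  have hyL : (LLg n : ℝ) ≤ Real.logb 2 (Real.logb 2 n) := by
    apply logb_nat_pow_le
    calc ((2:ℝ) ^ LLg n) = ((2 ^ LLg n : ℕ) : ℝ) := by push_cast; ring
    _ ≤ (Lg n : ℝ) := by exact_mod_cast hb7
    _ ≤ Real.logb 2 n := hxL
  have hyU : Real.logb 2 (Real.logb 2 n) ≤ (LLg n : ℝ) + 1 := by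
    have h := logb_le_nat_pow (a := LLg n + 1) hxpos (by
      calc Real.logb 2 n ≤ (Lg n : ℝ) + 1 := hxU
      _ ≤ ((2 ^ (LLg n + 1) : ℕ) : ℝ) := by exact_mod_cast hb8
      _ = (2:ℝ) ^ (LLg n + 1) := by push_cast; ring)
    push_cast at h
    linarith
  have hypos : (0:ℝ) < Real.logb 2 (Real.logb 2 n) := by
    have h4 : (2:ℝ) ≤ (LLg n : ℝ) := by exact_mod_cast hb2
    linarith
  have hzL : (LLLg n : ℝ) ≤ Real.logb 2 (Real.logb 2 (Real.logb 2 n)) := by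
    apply logb_nat_pow_le
    calc ((2:ℝ) ^ LLLg n) = ((2 ^ LLLg n : ℕ) : ℝ) := by push_cast; ring
    _ ≤ (LLg n : ℝ) := by exact_mod_cast Nat.pow_log_le_self 2 (show LLg n ≠ 0 by omega)
    _ ≤ Real.logb 2 (Real.logb 2 n) := hyL
  have hcast : (Bcap n : ℝ) = 2 * (Lg n : ℝ) + 2 + 100 * (LLLg n : ℝ) - (LLg n : ℝ) := by
    have h1 : LLg n ≤ 2 * Lg n + 2 + 100 * LLLg n := by omega
    unfold Bcap
    push_cast [Nat.cast_sub h1]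
    ring
  rw [hcast]
  have h3 : (1:ℝ) ≤ (LLLg n : ℝ) := by exact_mod_cast hb3
  linarith

end CatLab

theorem caterpillar_upper_bound :
    ∃ C : ℝ, 0 < C ∧ ∀ n : ℕ, 16 ≤ n →
      ∃ d : List Bool → List Bool → ℕ,
        ∀ G : SimpleGraph (Fin n), IsCaterpillar G →
          ∃ e : Fin n → List Bool,
            (∀ u v : Fin n, d (e u) (e v) = G.dist u v) ∧
            ∀ u : Fin n, ((e u).length : ℝ) ≤
              2 * Real.logb 2 n - Real.logb 2 (Real.logb 2 n) +
                C * Real.logb 2 (Real.logb 2 (Real.logb 2 n)) := by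
  classical
  refine ⟨110, by norm_num, ?_⟩
  intro n hn
  refine ⟨CatLab.dec n, ?_⟩
  intro G hG
  obtain ⟨hT, m, hm, p, hpinj, hpadj, hleaf⟩ := hG
  have hmn : m ≤ n := by
    have h := Fintype.card_le_of_injective p hpinj
    simpa using h
  have hp'def : ∀ x : ℕ, min x (m-1) < m := by
    intro x; omega
  set p' : ℕ → Fin n := fun x => p ⟨min x (m-1), hp'def x⟩ with hp'
  have hp'eq : ∀ i : Fin m, p' (i : ℕ) = p i := by
    intro i
    simp only [hp']
    congr 1
    apply Fin.ext
    have := i.isLt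
    simp only
    omega
  have S : CatLab.Spine G m := {
    p' := p'
    inj := by
      intro x y hx hy hxy
      simp only [hp'] at hxy
      have h2 := congrArg Fin.val (hpinj hxy)
      simp only at h2
      omega
    adj := by
      intro x hx
      have h := hpadj ⟨x, by omega⟩ hx
      have e1 : p' x = p ⟨x, by omega⟩ := by
        simp only [hp']
        congr 1
        apply Fin.ext
        simp only
        omega
      have e2 : p' (x+1) = p ⟨x+1, hx⟩ := by
        simp only [hp']
        congr 1
        apply Fin.ext
        simp only
        omega
      rw [e1, e2]
      exact h
    leaf := by
      intro v hv
      apply hleaf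
      intro hvr
      obtain ⟨i, hi⟩ := hvr
      exact hv (i : ℕ) i.isLt (by rw [hp'eq i, hi]) }
  obtain ⟨pos, k, posLt, kinj, kLt, hdist⟩ := CatLab.cat_positions hT hm S
  obtain ⟨e, hcorr, hlen⟩ := CatLab.scheme_exists hn hmn pos k posLt kinj kLt hdist
  refine ⟨e, hcorr, ?_⟩
  intro u
  calc ((e u).length : ℝ) ≤ (CatLab.Bcap n : ℝ) := by exact_mod_cast hlen u
  _ ≤ _ := CatLab.bcap_le_real n hn
end

section
/- There exists a constant C > 0 such that for every integer n ≥ 2 there is a distance labeling scheme for trees on n vertices with all labels of length at most (1/2)·(log₂ n)² + C·log₂ n. Precisely: there exists a decoder d : List Bool → List Bool → ℕ such that for every simple graph G : SimpleGraph (Fin n) with G.IsTree there exists an encoder e : Fin n → List Bool with d (e u) (e v) = G.dist u v for all u, v, and (e u).length ≤ (1/2)·(log₂ n)² + C·log₂ n for all u. -/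
namespace TreeLab

def toBits (w δ : ℕ) : List Bool := (List.range w).map δ.testBit

lemma toBits_length (w δ : ℕ) : (toBits w δ).length = w := by simp [toBits]

lemma toBits_inj {w δ1 δ2 : ℕ} (h1 : δ1 < 2 ^ w) (h2 : δ2 < 2 ^ w)
    (h : toBits w δ1 = toBits w δ2) : δ1 = δ2 := by
  apply Nat.eq_of_testBit_eq
  intro i
  by_cases hi : i < w
  · have := List.map_inj_left.mp h i (List.mem_range.mpr hi)
    exact this
  · push_neg at hi
    have e1 : δ1.testBit i = false :=
      Nat.testBit_lt_two_pow (lt_of_lt_of_le h1 (Nat.pow_le_pow_right (by norm_num) hi))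
    have e2 : δ2.testBit i = false :=
      Nat.testBit_lt_two_pow (lt_of_lt_of_le h2 (Nat.pow_le_pow_right (by norm_num) hi))
    rw [e1, e2]

def gamma (j : ℕ) : List Bool :=
  List.replicate (Nat.log 2 j) false ++ true :: toBits (Nat.log 2 j) (j % 2 ^ Nat.log 2 j)

lemma gamma_length (j : ℕ) : (gamma j).length = 2 * Nat.log 2 j + 1 := by
  simp [gamma, toBits_length]; ring

lemma replicate_true_inj : ∀ (k1 k2 : ℕ) (t1 t2 : List Bool),
    List.replicate k1 false ++ true :: t1 = List.replicate k2 false ++ true :: t2 →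
    k1 = k2 ∧ t1 = t2 := by
  intro k1
  induction k1 with
  | zero => intro k2 t1 t2 h; cases k2 with
    | zero => simpa using h
    | succ m => simp [List.replicate_succ] at h
  | succ m ih => intro k2 t1 t2 h; cases k2 with
    | zero => simp [List.replicate_succ] at h
    | succ m2 =>
        simp only [List.replicate_succ, List.cons_append, List.cons.injEq] at h
        obtain ⟨h1, h2⟩ := ih m2 t1 t2 h.2
        exact ⟨by omega, h2⟩

lemma gamma_prefix_inj {j1 j2 : ℕ} (h1 : 1 ≤ j1) (h2 : 1 ≤ j2) {r1 r2 : List Bool}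
    (h : gamma j1 ++ r1 = gamma j2 ++ r2) : j1 = j2 ∧ r1 = r2 := by
  unfold gamma at h
  simp only [List.append_assoc, List.cons_append] at h
  obtain ⟨hk, ht⟩ := replicate_true_inj _ _ _ _ h
  rw [hk] at ht
  have hlen : (toBits (Nat.log 2 j2) (j1 % 2 ^ Nat.log 2 j2)).length
      = (toBits (Nat.log 2 j2) (j2 % 2 ^ Nat.log 2 j2)).length := by
    simp [toBits_length]
  obtain ⟨hb, hr⟩ := List.append_inj ht hlen
  have hmod : j1 % 2 ^ Nat.log 2 j2 = j2 % 2 ^ Nat.log 2 j2 :=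
    toBits_inj (Nat.mod_lt _ (Nat.pow_pos (by norm_num))) (Nat.mod_lt _ (Nat.pow_pos (by norm_num))) hb
  -- recover j from log and mod
  have p1 : 2 ^ Nat.log 2 j1 ≤ j1 := Nat.pow_log_le_self 2 (by omega)
  have p2 : 2 ^ Nat.log 2 j2 ≤ j2 := Nat.pow_log_le_self 2 (by omega)
  have q1 : j1 < 2 ^ (Nat.log 2 j1 + 1) := Nat.lt_pow_succ_log_self (by norm_num) j1
  have q2 : j2 < 2 ^ (Nat.log 2 j2 + 1) := Nat.lt_pow_succ_log_self (by norm_num) j2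
  rw [hk] at p1 q1
  have e1 : j1 % 2 ^ Nat.log 2 j2 = j1 - 2 ^ Nat.log 2 j2 := by
    rw [Nat.mod_eq_sub_mod p1, Nat.mod_eq_of_lt (by
      have : (2:ℕ) ^ (Nat.log 2 j2 + 1) = 2 ^ Nat.log 2 j2 * 2 := by ring
      omega)]
  have e2 : j2 % 2 ^ Nat.log 2 j2 = j2 - 2 ^ Nat.log 2 j2 := by
    rw [Nat.mod_eq_sub_mod p2, Nat.mod_eq_of_lt (by
      have : (2:ℕ) ^ (Nat.log 2 j2 + 1) = 2 ^ Nat.log 2 j2 * 2 := by ring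
      omega)]
  rw [e1, e2] at hmod
  constructor
  · omega
  · exact hr

def encodeAux : ℕ → List (ℕ × ℕ) → List Bool
  | _, [] => [false]
  | B, (j, δ) :: r => true :: (gamma j ++ (toBits (Nat.log 2 B + 1) δ ++ encodeAux (B / max 2 j) r))

def Valid : ℕ → List (ℕ × ℕ) → Prop
  | _, [] => True
  | B, (j, δ) :: r => 1 ≤ j ∧ j ≤ B ∧ 2 ≤ B ∧ δ < B ∧ Valid (B / max 2 j) r

lemma encode_inj : ∀ (l1 l2 : List (ℕ × ℕ)) (B : ℕ), Valid B l1 → Valid B l2 →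
    encodeAux B l1 = encodeAux B l2 → l1 = l2 := by
  intro l1
  induction l1 with
  | nil => intro l2 B _ _ h; cases l2 with
    | nil => rfl
    | cons p r => obtain ⟨j, δ⟩ := p; simp [encodeAux] at h
  | cons p r ih =>
    obtain ⟨j, δ⟩ := p
    intro l2 B hv1 hv2 h
    cases l2 with
    | nil => simp [encodeAux] at h
    | cons p2 r2 =>
      obtain ⟨j2, δ2⟩ := p2
      simp only [encodeAux, List.cons.injEq, true_and] at h
      rw [← List.append_assoc, ← List.append_assoc] at h
      obtain ⟨hj, hrest⟩ := gamma_prefix_inj hv1.1 hv2.1 (by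
        rw [List.append_assoc, List.append_assoc] at h; exact h)
      obtain ⟨hb, henc⟩ := List.append_inj hrest (by simp [toBits_length])
      have hδ : δ = δ2 := by
        apply toBits_inj _ _ hb
        · exact lt_trans hv1.2.2.2.1 (Nat.lt_pow_succ_log_self (by norm_num) B)
        · exact lt_trans hv2.2.2.2.1 (Nat.lt_pow_succ_log_self (by norm_num) B)
      subst hj hδ
      have := ih r2 (B / max 2 j) hv1.2.2.2.2 hv2.2.2.2.2 henc
      rw [this]

lemma encode_len : ∀ (l : List (ℕ × ℕ)) (B : ℕ), Valid B l →
    2 * (encodeAux B l).length ≤ 2 + Nat.log 2 B * (Nat.log 2 B + 1) + 10 * Nat.log 2 B := by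
  intro l
  induction l with
  | nil => intro B _; simp [encodeAux]; omega
  | cons p r ih =>
    obtain ⟨j, δ⟩ := p
    intro B hv
    obtain ⟨hj1, hjB, hB2, hδ, hvr⟩ := hv
    set m := max 2 j with hm
    set b := Nat.log 2 B with hbdef
    set k := Nat.log 2 j with hkdef
    set μ := Nat.log 2 m with hμdef
    have hμ1 : 1 ≤ μ := by
      have h22 : Nat.log 2 2 = 1 := Nat.log_eq_one_iff'.mpr (by norm_num)
      have : Nat.log 2 2 ≤ μ := Nat.log_mono_right (le_max_left _ _)
      omega
    have hkμ : k ≤ μ := Nat.log_mono_right (le_max_right _ _)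
    have hmB : m ≤ B := by omega
    have hBm1 : 1 ≤ B / m := Nat.one_le_div_iff (by omega) |>.mpr hmB
    set b' := Nat.log 2 (B / m) with hb'def
    have hsum : b' + μ ≤ b := by
      have h1 : 2 ^ b' ≤ B / m := Nat.pow_log_le_self 2 (by omega)
      have h2 : 2 ^ μ ≤ m := Nat.pow_log_le_self 2 (by omega)
      have h3 : 2 ^ (b' + μ) ≤ B := by
        calc 2 ^ (b' + μ) = 2 ^ b' * 2 ^ μ := by rw [pow_add]
        _ ≤ (B / m) * m := Nat.mul_le_mul h1 h2
        _ ≤ B := Nat.div_mul_le_self B m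
      exact (Nat.le_log_iff_pow_le (by norm_num) (by omega)).mpr h3
    have hlen : (encodeAux B ((j, δ) :: r)).length
        = 3 + 2 * k + b + (encodeAux (B / m) r).length := by
      simp only [encodeAux, List.length_cons, List.length_append, gamma_length,
        toBits_length, List.length_singleton, ← hkdef, ← hbdef, ← hm]
      omega
    have hrec := ih (B / m) hvr
    rw [hlen]
    have hμb : μ ≤ b := by omega
    nlinarith [hrec, hμ1, hkμ, hsum, Nat.zero_le b', sq_nonneg (b - μ)]

end TreeLab
namespace TreeLab
open SimpleGraph

variable {V : Type*} [DecidableEq V] {G : SimpleGraph V} {u v w c a b : V}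

/-- A walk whose length equals the distance is a path. -/
lemma isPath_of_length_eq_dist : ∀ {u : V} (w : G.Walk u v), w.length = G.dist u v → w.IsPath := by
  intro u w
  induction w with
  | nil => intro _; simp
  | @cons u x v ha w' ih =>
    intro h
    have hx : G.Reachable x v := ⟨w'⟩
    obtain ⟨q, hq⟩ := hx.exists_walk_length_eq_dist
    have h1 : G.dist u v ≤ 1 + G.dist x v := by
      have := G.dist_le (SimpleGraph.Walk.cons ha q)
      simpa [hq, Nat.add_comm] using this
    have h2 : G.dist x v ≤ w'.length := G.dist_le w'
    have hlen : w'.length = G.dist x v := by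
      simp only [SimpleGraph.Walk.length_cons] at h
      omega
    have hp' := ih hlen
    rw [SimpleGraph.Walk.cons_isPath_iff]
    refine ⟨hp', fun hu => ?_⟩
    have := G.dist_le (w'.dropUntil u hu)
    have hd := SimpleGraph.Walk.length_dropUntil_le w' hu
    simp only [SimpleGraph.Walk.length_cons] at h
    omega

/-- In a tree, every path realizes the distance. -/
lemma path_length_eq_dist (ht : G.IsTree) (p : G.Walk u v) (hp : p.IsPath) :
    p.length = G.dist u v := by
  obtain ⟨q, hq⟩ := ht.isConnected.exists_walk_length_eq_dist u v
  have hqp : q.bypass.IsPath := SimpleGraph.Walk.bypass_isPath q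
  have hql : q.bypass.length = G.dist u v :=
    le_antisymm (le_trans (SimpleGraph.Walk.length_bypass_le q) (le_of_eq hq)) (G.dist_le _)
  have := ht.existsUnique_path u v
  obtain ⟨r, -, hr⟩ := this
  have e1 : p = r := hr p hp
  have e2 : q.bypass = r := hr q.bypass hqp
  rw [e1, ← e2, hql]

/-- `Sep c u v`: `c` lies between `u` and `v`. -/
def Sep (G : SimpleGraph V) (c u v : V) : Prop := G.dist u c + G.dist c v = G.dist u v

lemma sep_symm (h : Sep G c u v) : Sep G c v u := by
  unfold Sep at *
  have e1 : G.dist v c = G.dist c v := SimpleGraph.dist_comm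
  have e2 : G.dist c u = G.dist u c := SimpleGraph.dist_comm
  have e3 : G.dist v u = G.dist u v := SimpleGraph.dist_comm
  omega

lemma sep_of_mem_support (ht : G.IsTree) (p : G.Walk u v) (hp : p.IsPath)
    (hc : c ∈ p.support) : Sep G c u v := by
  have h1 := path_length_eq_dist ht (p.takeUntil c hc) (hp.takeUntil hc)
  have h2 := path_length_eq_dist ht (p.dropUntil c hc) (hp.dropUntil hc)
  have h3 := path_length_eq_dist ht p hp
  have h4 := congrArg SimpleGraph.Walk.length (p.take_spec hc)
  rw [SimpleGraph.Walk.length_append] at h4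
  unfold Sep
  omega

lemma mem_support_of_sep (ht : G.IsTree) (h : Sep G c u v) (p : G.Walk u v) (hp : p.IsPath) :
    c ∈ p.support := by
  obtain ⟨q1, hq1⟩ := ht.isConnected.exists_walk_length_eq_dist u c
  obtain ⟨q2, hq2⟩ := ht.isConnected.exists_walk_length_eq_dist c v
  have hW : (q1.append q2).length = G.dist u v := by
    rw [SimpleGraph.Walk.length_append, hq1, hq2]; exact h
  have hWp : (q1.append q2).IsPath := isPath_of_length_eq_dist _ hW
  obtain ⟨r, -, hr⟩ := ht.existsUnique_path u v
  have e1 : p = r := hr p hp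
  have e2 : q1.append q2 = r := hr _ hWp
  rw [e1, ← e2]
  rw [SimpleGraph.Walk.mem_support_append_iff]
  exact Or.inl (SimpleGraph.Walk.end_mem_support q1)

/-- The unique path between two vertices in a tree. -/
noncomputable def tpath (ht : G.IsTree) (u v : V) : G.Walk u v :=
  (ht.isConnected.exists_walk_length_eq_dist u v).choose

lemma tpath_isPath (ht : G.IsTree) (u v : V) : (tpath ht u v).IsPath :=
  isPath_of_length_eq_dist _ (ht.isConnected.exists_walk_length_eq_dist u v).choose_spec

lemma sep_iff_mem_tpath (ht : G.IsTree) :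
    Sep G c u v ↔ c ∈ (tpath ht u v).support :=
  ⟨fun h => mem_support_of_sep ht h _ (tpath_isPath ht u v),
   fun h => sep_of_mem_support ht _ (tpath_isPath ht u v) h⟩

lemma sep_self_left : Sep G u u v := by simp [Sep]

lemma sep_self_iff (ht : G.IsTree) : Sep G c u u ↔ c = u := by
  constructor
  · intro h
    unfold Sep at h
    simp only [SimpleGraph.dist_self] at h
    have : G.dist u c = 0 := by omega
    exact ((ht.isConnected.dist_eq_zero_iff).mp (by rwa [G.dist_comm] at this))
  · rintro rfl; simp [Sep]

/-- Transitivity of "same side of c". -/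
lemma not_sep_trans (ht : G.IsTree) (h1 : ¬ Sep G c u v) (h2 : ¬ Sep G c v w) :
    ¬ Sep G c u w := by
  intro h
  have hc1 : c ∉ (tpath ht u v).support := fun hc => h1 ((sep_iff_mem_tpath ht).mpr hc)
  have hc2 : c ∉ (tpath ht v w).support := fun hc => h2 ((sep_iff_mem_tpath ht).mpr hc)
  set W := ((tpath ht u v).append (tpath ht v w)).bypass with hW
  have hWp : W.IsPath := SimpleGraph.Walk.bypass_isPath _
  have hcW : c ∉ W.support := by
    intro hc
    have := SimpleGraph.Walk.support_bypass_subset _ hc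
    rw [SimpleGraph.Walk.mem_support_append_iff] at this
    rcases this with h' | h'
    · exact hc1 h'
    · exact hc2 h'
  exact hcW (mem_support_of_sep ht h W hWp)

lemma not_sep_symm (h : ¬ Sep G c u v) : ¬ Sep G c v u := fun h' => h (sep_symm h')

/-- Extraction of the neighbor of `c` towards `u`. -/
lemma exists_nbr (ht : G.IsTree) (h : u ≠ c) :
    ∃ a, G.Adj c a ∧ ¬ Sep G c a u ∧ G.dist c u = G.dist a u + 1 := by
  obtain ⟨p, hp⟩ := ht.isConnected.exists_walk_length_eq_dist c u
  have hpp : p.IsPath := isPath_of_length_eq_dist _ hp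
  have hpos : 0 < G.dist c u := ht.isConnected.pos_dist_of_ne (Ne.symm h)
  cases p with
  | nil => simp at hpos
  | @cons _ x _ ha w' =>
    rw [SimpleGraph.Walk.cons_isPath_iff] at hpp
    refine ⟨x, ha, ?_, ?_⟩
    · intro hsep
      exact hpp.2 (mem_support_of_sep ht hsep w' hpp.1)
    · have := path_length_eq_dist ht w' hpp.1
      simp only [SimpleGraph.Walk.length_cons] at hp
      omega

/-- Distinct neighbors of `c` are separated by `c`. -/
lemma sep_of_adj_adj (ht : G.IsTree) (hca : G.Adj c a) (hcb : G.Adj c b) (hab : a ≠ b) :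
    Sep G c a b := by
  have hpath : (SimpleGraph.Walk.cons hca.symm (SimpleGraph.Walk.cons hcb SimpleGraph.Walk.nil)).IsPath := by
    simp [SimpleGraph.Walk.cons_isPath_iff, hca.ne, hca.ne', hcb.ne, hcb.ne', hab]
  exact sep_of_mem_support ht _ hpath (by simp)

/-- The neighbor towards `u` is unique per side. -/
lemma nbr_unique (ht : G.IsTree) (hca : G.Adj c a) (hcb : G.Adj c b)
    (h1 : ¬ Sep G c a u) (h2 : ¬ Sep G c b u) : a = b := by
  by_contra hab
  exact (not_sep_trans ht h1 (not_sep_symm h2)) (sep_of_adj_adj ht hca hcb hab)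

/-- For `v` on the `a`-side of `c` (with `a ~ c`): `dist c v = dist a v + 1`. -/
lemma dist_of_same_side (ht : G.IsTree) (hca : G.Adj c a) (h : ¬ Sep G c a v) :
    G.dist c v = G.dist a v + 1 := by
  have hc : c ∉ (tpath ht a v).support := fun hc => h ((sep_iff_mem_tpath ht).mpr hc)
  have hpath : (SimpleGraph.Walk.cons hca (tpath ht a v)).IsPath := by
    rw [SimpleGraph.Walk.cons_isPath_iff]
    exact ⟨tpath_isPath ht a v, hc⟩
  have := path_length_eq_dist ht _ hpath
  simp only [SimpleGraph.Walk.length_cons] at this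
  have h2 := path_length_eq_dist ht _ (tpath_isPath ht a v)
  omega

/-- For `v` on the other side: `dist a v = dist c v + 1`. -/
lemma dist_of_other_side (ht : G.IsTree) (hca : G.Adj c a) (h : Sep G c a v) :
    G.dist a v = G.dist c v + 1 := by
  have h1 : G.dist a c = 1 := SimpleGraph.dist_eq_one_iff_adj.mpr hca.symm
  unfold Sep at h
  omega

/-- Distance within a convex set is bounded by its size. -/
lemma dist_lt_card (ht : G.IsTree) [DecidableEq V] (S : Finset V)
    (hconv : ∀ w, Sep G w u v → w ∈ S) : G.dist u v < S.card := by
  have hsub : ∀ x ∈ (tpath ht u v).support, x ∈ S := by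
    intro x hx
    exact hconv x (sep_of_mem_support ht _ (tpath_isPath ht u v) hx)
  have hnodup := (tpath_isPath ht u v).support_nodup
  have hlen : (tpath ht u v).support.length = (tpath ht u v).length + 1 :=
    SimpleGraph.Walk.length_support _
  have hcard : (tpath ht u v).support.toFinset.card = (tpath ht u v).support.length :=
    List.toFinset_card_of_nodup hnodup
  have hle : (tpath ht u v).support.toFinset ⊆ S := by
    intro x hx
    exact hsub x (List.mem_toFinset.mp hx)
  have := Finset.card_le_card hle
  have hd := path_length_eq_dist ht _ (tpath_isPath ht u v)
  omega

end TreeLab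
namespace TreeLab
open SimpleGraph

section PartC

variable {V : Type*} [LinearOrder V] [Nonempty V] {G : SimpleGraph V}
variable {S : Finset V} {u v c a : V}

/-- The neighbor of `c` in the direction of `u`. -/
noncomputable def nbr (ht : G.IsTree) (c u : V) : V :=
  if h : u ≠ c then (exists_nbr ht h).choose else u

lemma nbr_spec (ht : G.IsTree) (h : u ≠ c) :
    G.Adj c (nbr ht c u) ∧ ¬ Sep G c (nbr ht c u) u ∧
      G.dist c u = G.dist (nbr ht c u) u + 1 := by
  rw [nbr, dif_pos h]
  exact (exists_nbr ht h).choose_spec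

lemma nbr_eq_iff (ht : G.IsTree) (hu : u ≠ c) (hv : v ≠ c) :
    nbr ht c u = nbr ht c v ↔ ¬ Sep G c u v := by
  constructor
  · intro h
    obtain ⟨_, hnsu, _⟩ := nbr_spec ht hu
    obtain ⟨_, hnsv, _⟩ := nbr_spec ht hv
    rw [← h] at hnsv
    exact not_sep_trans ht (not_sep_symm hnsu) hnsv
  · intro h
    obtain ⟨hadju, hnsu, _⟩ := nbr_spec ht hu
    obtain ⟨hadjv, hnsv, _⟩ := nbr_spec ht hv
    exact nbr_unique ht hadju hadjv hnsu (not_sep_trans ht hnsv (not_sep_symm h))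

/-- The class (branch) of `u` with respect to removing `c` from `S`. -/
noncomputable def cls (ht : G.IsTree) (S : Finset V) (c u : V) : Finset V :=
  (S.erase c).filter (fun x => nbr ht c x = nbr ht c u)

lemma mem_cls (ht : G.IsTree) (hu : u ∈ S) (hne : u ≠ c) : u ∈ cls ht S c u :=
  Finset.mem_filter.mpr ⟨Finset.mem_erase.mpr ⟨hne, hu⟩, rfl⟩

lemma cls_subset (ht : G.IsTree) : cls ht S c u ⊆ S.erase c := Finset.filter_subset _ _

/-- Convexity (path-closedness) of a vertex set. -/
def Convex (G : SimpleGraph V) (S : Finset V) : Prop :=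
  ∀ x ∈ S, ∀ y ∈ S, ∀ w, Sep G w x y → w ∈ S

lemma convex_univ [Fintype V] : Convex G (Finset.univ : Finset V) := by
  intro x _ y _ w _; exact Finset.mem_univ w

lemma cls_convex (ht : G.IsTree) (hconv : Convex G S) :
    Convex G (cls ht S c u) := by
  intro x hx y hy w hw
  obtain ⟨hx1, hx2⟩ := Finset.mem_filter.mp hx
  obtain ⟨hy1, hy2⟩ := Finset.mem_filter.mp hy
  have hxS : x ∈ S := Finset.mem_of_mem_erase hx1
  have hyS : y ∈ S := Finset.mem_of_mem_erase hy1
  have hxc : x ≠ c := Finset.ne_of_mem_erase hx1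
  have hyc : y ≠ c := Finset.ne_of_mem_erase hy1
  have hwS : w ∈ S := hconv x hxS y hyS w hw
  have hnsxy : ¬ Sep G c x y := (nbr_eq_iff ht hxc hyc).mp (hx2.trans hy2.symm)
  have hwc : w ≠ c := by rintro rfl; exact hnsxy hw
  -- c is not on the path from x to y, w is; the path from x to w avoids c
  have hcp : c ∉ (tpath ht x y).support := fun hc => hnsxy ((sep_iff_mem_tpath ht).mpr hc)
  have hwp : w ∈ (tpath ht x y).support := (sep_iff_mem_tpath ht).mp hw
  have hq : ((tpath ht x y).takeUntil w hwp).IsPath := (tpath_isPath ht x y).takeUntil hwp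
  have hcq : c ∉ ((tpath ht x y).takeUntil w hwp).support := fun hc =>
    hcp (SimpleGraph.Walk.support_takeUntil_subset _ hwp hc)
  have hnsxw : ¬ Sep G c x w := fun hsep => hcq (mem_support_of_sep ht hsep _ hq)
  refine Finset.mem_filter.mpr ⟨Finset.mem_erase.mpr ⟨hwc, hwS⟩, ?_⟩
  exact ((nbr_eq_iff ht hwc hxc).mpr (not_sep_symm hnsxw)).trans hx2

/-- The centroid: a vertex minimizing the sum of distances. -/
noncomputable def cent (G : SimpleGraph V) (S : Finset V) : V :=
  if h : S.Nonempty then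
    (S.exists_min_image (fun c => ∑ v ∈ S, G.dist c v) h).choose
  else Classical.arbitrary V

lemma cent_mem (h : S.Nonempty) : cent G S ∈ S := by
  rw [cent, dif_pos h]
  exact (S.exists_min_image (fun c => ∑ v ∈ S, G.dist c v) h).choose_spec.1

lemma cent_min (h : S.Nonempty) (ha : a ∈ S) :
    ∑ v ∈ S, G.dist (cent G S) v ≤ ∑ v ∈ S, G.dist a v := by
  rw [cent, dif_pos h]
  exact (S.exists_min_image (fun c => ∑ v ∈ S, G.dist c v) h).choose_spec.2 a ha

/-- The centroid property: every branch has size at most half. -/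
theorem two_mul_cls_card_le (ht : G.IsTree) (hconv : Convex G S)
    (hu : u ∈ S) (hne : u ≠ cent G S) :
    2 * (cls ht S (cent G S) u).card ≤ S.card := by
  set c := cent G S with hcdef
  have hS : S.Nonempty := ⟨u, hu⟩
  have hc : c ∈ S := cent_mem hS
  obtain ⟨hadj, hnsep, hdistu⟩ := nbr_spec ht (c := c) (u := u) hne
  set a := nbr ht c u with hadef
  have haS : a ∈ S := by
    refine hconv c hc u hu a ?_
    show G.dist c a + G.dist a u = G.dist c u
    have h1 : G.dist c a = 1 := SimpleGraph.dist_eq_one_iff_adj.mpr hadj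
    omega
  set A := cls ht S c u with hA
  have hAsub : A ⊆ S := fun x hx => Finset.mem_of_mem_erase (cls_subset ht hx)
  have h1 : ∀ v ∈ A, G.dist c v = G.dist a v + 1 := by
    intro v hv
    obtain ⟨hv1, hv2⟩ := Finset.mem_filter.mp hv
    have hvne : v ≠ c := Finset.ne_of_mem_erase hv1
    have hns := (nbr_spec ht hvne).2.1
    rw [hv2, ← hadef] at hns
    exact dist_of_same_side ht hadj hns
  have h2 : ∀ v ∈ S \ A, G.dist a v = G.dist c v + 1 := by
    intro v hv
    rw [Finset.mem_sdiff] at hv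
    by_cases hvc : v = c
    · subst hvc
      have e1 : G.dist a c = 1 := SimpleGraph.dist_eq_one_iff_adj.mpr hadj.symm
      simp [e1, SimpleGraph.dist_self]
    · have hsep : Sep G c a v := by
        by_contra hns
        apply hv.2
        refine Finset.mem_filter.mpr ⟨Finset.mem_erase.mpr ⟨hvc, hv.1⟩, ?_⟩
        have h3 := (nbr_spec ht hvc).2.1
        have h4 := (nbr_spec ht hvc).1
        have := nbr_unique ht h4 hadj h3 hns
        rw [this, hadef]
      exact dist_of_other_side ht hadj hsep
  have hsum1 : ∑ v ∈ A, G.dist c v = (∑ v ∈ A, G.dist a v) + A.card := by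
    rw [Finset.sum_congr rfl h1, Finset.sum_add_distrib]
    simp
  have hsum2 : ∑ v ∈ S \ A, G.dist a v = (∑ v ∈ S \ A, G.dist c v) + (S \ A).card := by
    rw [Finset.sum_congr rfl h2, Finset.sum_add_distrib]
    simp
  have hsplit1 : (∑ v ∈ S \ A, G.dist c v) + (∑ v ∈ A, G.dist c v) = ∑ v ∈ S, G.dist c v :=
    Finset.sum_sdiff hAsub
  have hsplit2 : (∑ v ∈ S \ A, G.dist a v) + (∑ v ∈ A, G.dist a v) = ∑ v ∈ S, G.dist a v :=
    Finset.sum_sdiff hAsub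
  have hmin : ∑ v ∈ S, G.dist c v ≤ ∑ v ∈ S, G.dist a v := cent_min hS haS
  have hcard : (S \ A).card = S.card - A.card := Finset.card_sdiff_of_subset hAsub
  have hAle : A.card ≤ S.card := Finset.card_le_card hAsub
  omega

/-- The fiber size of the key `k`. -/
noncomputable def fsz (ht : G.IsTree) (S : Finset V) (c k : V) : ℕ :=
  ((S.erase c).filter (fun x => nbr ht c x = k)).card

/-- Strict order on keys: by fiber size descending, then by key ascending. -/
def rkP (ht : G.IsTree) (S : Finset V) (c k k' : V) : Prop :=
  fsz ht S c k' < fsz ht S c k ∨ (fsz ht S c k = fsz ht S c k' ∧ k < k')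

noncomputable instance (ht : G.IsTree) (S : Finset V) (c k k' : V) :
    Decidable (rkP ht S c k k') := Classical.dec _

lemma rkP_trans {ht : G.IsTree} {k1 k2 k3 : V} (h1 : rkP ht S c k1 k2) (h2 : rkP ht S c k2 k3) :
    rkP ht S c k1 k3 := by
  rcases h1 with h1 | ⟨h1, h1'⟩ <;> rcases h2 with h2 | ⟨h2, h2'⟩
  · exact Or.inl (lt_trans h2 h1)
  · exact Or.inl (h2 ▸ h1)
  · exact Or.inl (lt_of_lt_of_le h2 (le_of_eq h1.symm))
  · exact Or.inr ⟨h1.trans h2, lt_trans h1' h2'⟩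

lemma rkP_irrefl {ht : G.IsTree} {k : V} : ¬ rkP ht S c k k := by
  rintro (h | ⟨-, h⟩) <;> exact absurd h (lt_irrefl _)

lemma rkP_total {ht : G.IsTree} {k1 k2 : V} (h : k1 ≠ k2) :
    rkP ht S c k1 k2 ∨ rkP ht S c k2 k1 := by
  rcases Nat.lt_trichotomy (fsz ht S c k1) (fsz ht S c k2) with h1 | h1 | h1
  · exact Or.inr (Or.inl h1)
  · rcases lt_or_gt_of_ne h with h2 | h2
    · exact Or.inl (Or.inr ⟨h1, h2⟩)
    · exact Or.inr (Or.inr ⟨h1.symm, h2⟩)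
  · exact Or.inl (Or.inl h1)

/-- The rank of `u`'s class. -/
noncomputable def rk (ht : G.IsTree) (S : Finset V) (c u : V) : ℕ :=
  (((S.erase c).image (nbr ht c)).filter (fun k => rkP ht S c k (nbr ht c u))).card + 1

lemma rk_pos (ht : G.IsTree) : 1 ≤ rk ht S c u := Nat.le_add_left 1 _

lemma rk_congr (ht : G.IsTree) (h : nbr ht c u = nbr ht c v) : rk ht S c u = rk ht S c v := by
  unfold rk
  rw [h]

lemma rk_lt_of_rkP (ht : G.IsTree) (hu : u ∈ S.erase c)
    (h : rkP ht S c (nbr ht c u) (nbr ht c v)) : rk ht S c u < rk ht S c v := by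
  unfold rk
  have hsub : ((S.erase c).image (nbr ht c)).filter (fun k => rkP ht S c k (nbr ht c u)) ⊆
      ((S.erase c).image (nbr ht c)).filter (fun k => rkP ht S c k (nbr ht c v)) := by
    intro k hk
    obtain ⟨hk1, hk2⟩ := Finset.mem_filter.mp hk
    exact Finset.mem_filter.mpr ⟨hk1, rkP_trans hk2 h⟩
  have hmem : nbr ht c u ∈ ((S.erase c).image (nbr ht c)).filter
      (fun k => rkP ht S c k (nbr ht c v)) :=
    Finset.mem_filter.mpr ⟨Finset.mem_image_of_mem _ hu, h⟩
  have hnmem : nbr ht c u ∉ ((S.erase c).image (nbr ht c)).filter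
      (fun k => rkP ht S c k (nbr ht c u)) := by
    intro hmem'
    exact rkP_irrefl (Finset.mem_filter.mp hmem').2
  have := Finset.card_lt_card (Finset.ssubset_iff_of_subset hsub |>.mpr ⟨_, hmem, hnmem⟩)
  omega

lemma nbr_eq_of_rk_eq (ht : G.IsTree) (hu : u ∈ S.erase c) (hv : v ∈ S.erase c)
    (h : rk ht S c u = rk ht S c v) : nbr ht c u = nbr ht c v := by
  by_contra hne
  rcases rkP_total (ht := ht) (S := S) (c := c) hne with hp | hp
  · exact absurd h (Nat.ne_of_lt (rk_lt_of_rkP ht hu hp))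
  · exact absurd h.symm (Nat.ne_of_lt (rk_lt_of_rkP ht hv hp))

lemma rk_mul_le (ht : G.IsTree) (hu : u ∈ S.erase c) :
    rk ht S c u * (cls ht S c u).card ≤ (S.erase c).card := by
  classical
  set k0 := nbr ht c u with hk0
  set keyset := (S.erase c).image (nbr ht c) with hks
  set T := keyset.filter (fun k => rkP ht S c k k0) with hT
  have hk0T : k0 ∉ T := fun h => rkP_irrefl (Finset.mem_filter.mp h).2
  have hk0ks : k0 ∈ keyset := Finset.mem_image_of_mem _ hu
  have hcardT : (insert k0 T).card = rk ht S c u := by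
    rw [Finset.card_insert_of_notMem hk0T]
    rfl
  have hTsub : insert k0 T ⊆ keyset := by
    intro k hk
    rcases Finset.mem_insert.mp hk with rfl | hk
    · exact hk0ks
    · exact Finset.mem_of_mem_filter _ hk
  have hfsz : ∀ k ∈ insert k0 T, fsz ht S c k0 ≤ fsz ht S c k := by
    intro k hk
    rcases Finset.mem_insert.mp hk with rfl | hk
    · exact le_refl _
    · rcases (Finset.mem_filter.mp hk).2 with h | ⟨h, -⟩
      · exact le_of_lt h
      · exact le_of_eq h.symm
  have hclscard : (cls ht S c u).card = fsz ht S c k0 := rfl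
  have hsum1 : (insert k0 T).card • fsz ht S c k0 ≤ ∑ k ∈ insert k0 T, fsz ht S c k :=
    Finset.card_nsmul_le_sum _ _ _ hfsz
  have hsum2 : ∑ k ∈ insert k0 T, fsz ht S c k ≤ ∑ k ∈ keyset, fsz ht S c k :=
    Finset.sum_le_sum_of_subset hTsub
  have hsum3 : ∑ k ∈ keyset, fsz ht S c k = (S.erase c).card := by
    rw [hks]
    exact (Finset.card_eq_sum_card_fiberwise (fun x hx => Finset.mem_image_of_mem _ hx)).symm
  rw [hclscard, ← hcardT]
  have hfin := le_trans hsum1 (le_trans hsum2 (le_of_eq hsum3))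
  simpa [smul_eq_mul] using hfin

end PartC
end TreeLab
namespace TreeLab
open SimpleGraph

/-- The decoder on ideal labels. -/
def Dd : List (ℕ × ℕ) → List (ℕ × ℕ) → ℕ
  | [], [] => 0
  | [], (_, δ) :: _ => δ
  | (_, δ) :: _, [] => δ
  | (j1, δ1) :: r1, (j2, δ2) :: r2 => if j1 = j2 then Dd r1 r2 else δ1 + δ2

section PartD

variable {V : Type*} [LinearOrder V] [Nonempty V] {G : SimpleGraph V}
variable {S : Finset V} {u v c a : V}

/-- The recursive labeling via centroid decomposition. -/
noncomputable def label (ht : G.IsTree) (S : Finset V) (u : V) : List (ℕ × ℕ) :=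
  if h : u ∈ S ∧ u ≠ cent G S then
    (rk ht S (cent G S) u, G.dist u (cent G S)) ::
      label ht (cls ht S (cent G S) u) u
  else []
  termination_by S.card
  decreasing_by
    have hc : cent G S ∈ S := cent_mem ⟨u, h.1⟩
    have h1 := Finset.card_le_card (cls_subset ht (S := S) (c := cent G S) (u := u))
    have h2 := Finset.card_erase_lt_of_mem hc
    omega

lemma label_cons (ht : G.IsTree) (h1 : u ∈ S) (h2 : u ≠ cent G S) :
    label ht S u = (rk ht S (cent G S) u, G.dist u (cent G S)) ::
      label ht (cls ht S (cent G S) u) u := by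
  rw [label, dif_pos ⟨h1, h2⟩]

lemma label_nil (ht : G.IsTree) (h : ¬ (u ∈ S ∧ u ≠ cent G S)) :
    label ht S u = [] := by
  rw [label, dif_neg h]

theorem label_dist (ht : G.IsTree) (S : Finset V) :
    Convex G S → ∀ u ∈ S, ∀ v ∈ S, Dd (label ht S u) (label ht S v) = G.dist u v := by
  induction S using Finset.strongInduction with
  | _ S ih =>
    intro hconv u hu v hv
    set c := cent G S with hcdef
    have hS : S.Nonempty := ⟨u, hu⟩
    have hc : c ∈ S := cent_mem hS
    by_cases huc : u = c <;> by_cases hvc : v = c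
    · subst huc; subst hvc
      rw [label_nil (S := S) (u := c) ht (by simp [← hcdef])]
      simp [Dd, SimpleGraph.dist_self]
    · subst huc
      rw [label_nil (S := S) (u := c) ht (by simp [← hcdef]), label_cons ht hv hvc]
      show G.dist v c = G.dist c v
      exact SimpleGraph.dist_comm
    · subst hvc
      rw [label_cons ht hu huc, label_nil (S := S) (u := c) ht (by simp [← hcdef])]
      rfl
    · rw [label_cons ht hu huc, label_cons ht hv hvc]
      simp only [← hcdef]
      have hue : u ∈ S.erase c := Finset.mem_erase.mpr ⟨huc, hu⟩
      have hve : v ∈ S.erase c := Finset.mem_erase.mpr ⟨hvc, hv⟩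
      by_cases hk : nbr ht c u = nbr ht c v
      · have hrk : rk ht S c u = rk ht S c v := rk_congr ht hk
        have hclseq : cls ht S c u = cls ht S c v := by
          unfold cls; rw [hk]
        simp only [Dd, hrk, if_pos rfl]
        rw [hclseq]
        have hssub : cls ht S c v ⊂ S := by
          refine Finset.ssubset_of_subset_of_ssubset (cls_subset ht) ?_
          exact Finset.erase_ssubset hc
        refine ih _ hssub (cls_convex ht hconv) u ?_ v ?_
        · rw [← hclseq]; exact mem_cls ht hu huc
        · exact mem_cls ht hv hvc
      · have hrk : rk ht S c u ≠ rk ht S c v := fun h => hk (nbr_eq_of_rk_eq ht hue hve h)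
        simp only [Dd, if_neg hrk]
        have hsep : Sep G c u v := by
          by_contra hns
          exact hk ((nbr_eq_iff ht huc hvc).mpr hns)
        have := hsep
        unfold Sep at this
        have e1 : G.dist v c = G.dist c v := SimpleGraph.dist_comm
        omega

theorem label_valid (ht : G.IsTree) (S : Finset V) :
    Convex G S → ∀ u ∈ S, ∀ B : ℕ, S.card ≤ B → Valid B (label ht S u) := by
  induction S using Finset.strongInduction with
  | _ S ih =>
    intro hconv u hu B hB
    set c := cent G S with hcdef
    have hS : S.Nonempty := ⟨u, hu⟩
    have hc : c ∈ S := cent_mem hS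
    by_cases huc : u = c
    · rw [label_nil ht (by simp [huc, ← hcdef])]; trivial
    · rw [label_cons ht hu huc]
      simp only [← hcdef]
      have hue : u ∈ S.erase c := Finset.mem_erase.mpr ⟨huc, hu⟩
      have hu_cls : u ∈ cls ht S c u := mem_cls ht hu huc
      have hcls1 : 1 ≤ (cls ht S c u).card := Finset.card_pos.mpr ⟨u, hu_cls⟩
      have hrkmul := rk_mul_le ht hue
      have herase : (S.erase c).card = S.card - 1 := Finset.card_erase_of_mem hc
      have hcent := two_mul_cls_card_le ht hconv hu huc
      rw [← hcdef] at hcent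
      have hcard2 : 2 ≤ S.card := by
        have : ({u, c} : Finset V) ⊆ S := by
          intro x hx
          rcases Finset.mem_insert.mp hx with rfl | hx
          · exact hu
          · rw [Finset.mem_singleton.mp hx]; exact hc
        have := Finset.card_le_card this
        rwa [Finset.card_insert_of_notMem (by simpa using huc), Finset.card_singleton] at this
      have hdlt : G.dist u c < S.card := dist_lt_card ht S (fun w hw => hconv u hu c hc w hw)
      refine ⟨rk_pos ht, ?_, by omega, by omega, ?_⟩
      · -- rk ≤ B
        have : rk ht S c u ≤ rk ht S c u * (cls ht S c u).card := Nat.le_mul_of_pos_right _ hcls1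
        omega
      · -- recursive validity
        have hssub : cls ht S c u ⊂ S :=
          Finset.ssubset_of_subset_of_ssubset (cls_subset ht) (Finset.erase_ssubset hc)
        refine ih _ hssub (cls_convex ht hconv) u hu_cls _ ?_
        -- card cls ≤ B / max 2 (rk ...)
        rw [Nat.le_div_iff_mul_le (by omega)]
        rcases max_cases 2 (rk ht S c u) with ⟨hm, hm2⟩ | ⟨hm, hm2⟩
        · rw [hm]
          calc (cls ht S c u).card * 2 = 2 * (cls ht S c u).card := by ring
          _ ≤ S.card := hcent
          _ ≤ B := hB
        · rw [hm]
          calc (cls ht S c u).card * rk ht S c u = rk ht S c u * (cls ht S c u).card := by ring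
          _ ≤ (S.erase c).card := hrkmul
          _ ≤ S.card := by omega
          _ ≤ B := hB

end PartD
end TreeLab
namespace TreeLab

open Classical in
/-- Decoding a bit string back to a valid ideal label. -/
noncomputable def decf (n : ℕ) (l : List Bool) : List (ℕ × ℕ) :=
  if h : ∃ x, Valid n x ∧ encodeAux n x = l then h.choose else []

lemma decf_encode {n : ℕ} {x : List (ℕ × ℕ)} (hx : Valid n x) :
    decf n (encodeAux n x) = x := by
  have hex : ∃ y, Valid n y ∧ encodeAux n y = encodeAux n x := ⟨x, hx, rfl⟩
  rw [decf, dif_pos hex]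
  exact encode_inj _ _ n hex.choose_spec.1 hx hex.choose_spec.2

end TreeLab

theorem tree_distance_upper_bound :
    ∃ C : ℝ, 0 < C ∧ ∀ n : ℕ, 2 ≤ n →
      ∃ d : List Bool → List Bool → ℕ,
        ∀ G : SimpleGraph (Fin n), G.IsTree →
          ∃ e : Fin n → List Bool,
            (∀ u v : Fin n, d (e u) (e v) = G.dist u v) ∧
            ∀ u : Fin n, ((e u).length : ℝ) ≤
              (1 / 2) * (Real.logb 2 n) ^ 2 + C * Real.logb 2 n := by
  refine ⟨7, by norm_num, ?_⟩
  intro n hn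
  haveI : Nonempty (Fin n) := ⟨⟨0, by omega⟩⟩
  refine ⟨fun l1 l2 => TreeLab.Dd (TreeLab.decf n l1) (TreeLab.decf n l2), ?_⟩
  intro G hG
  refine ⟨fun u => TreeLab.encodeAux n (TreeLab.label hG Finset.univ u), ?_, ?_⟩
  · intro u v
    show TreeLab.Dd (TreeLab.decf n (TreeLab.encodeAux n (TreeLab.label hG Finset.univ u)))
      (TreeLab.decf n (TreeLab.encodeAux n (TreeLab.label hG Finset.univ v))) = G.dist u v
    have hvu : TreeLab.Valid n (TreeLab.label hG Finset.univ u) :=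
      TreeLab.label_valid hG Finset.univ TreeLab.convex_univ u (Finset.mem_univ u) n
        (by simp)
    have hvv : TreeLab.Valid n (TreeLab.label hG Finset.univ v) :=
      TreeLab.label_valid hG Finset.univ TreeLab.convex_univ v (Finset.mem_univ v) n
        (by simp)
    rw [TreeLab.decf_encode hvu, TreeLab.decf_encode hvv]
    exact TreeLab.label_dist hG Finset.univ TreeLab.convex_univ u (Finset.mem_univ u) v
      (Finset.mem_univ v)
  · intro u
    have hvu : TreeLab.Valid n (TreeLab.label hG Finset.univ u) :=
      TreeLab.label_valid hG Finset.univ TreeLab.convex_univ u (Finset.mem_univ u) n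
        (by simp)
    have hlen := TreeLab.encode_len _ n hvu
    set b := Nat.log 2 n with hbdef
    set L := Real.logb 2 n with hLdef
    have hL1 : 1 ≤ L := by
      rw [hLdef]
      have : Real.logb 2 2 ≤ Real.logb 2 n :=
        Real.logb_le_logb_of_le (by norm_num) (by norm_num) (by exact_mod_cast hn)
      simpa using this
    have hbL : (b : ℝ) ≤ L := by
      have h1 : (2 : ℕ) ^ b ≤ n := Nat.pow_log_le_self 2 (by omega)
      have h2 : ((2 : ℝ)) ^ b ≤ (n : ℝ) := by exact_mod_cast h1
      have h3 : Real.logb 2 ((2 : ℝ) ^ b) ≤ Real.logb 2 n :=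
        Real.logb_le_logb_of_le (by norm_num) (by positivity) h2
      rwa [Real.logb_pow, Real.logb_self_eq_one (by norm_num), mul_one] at h3
    have hcast : 2 * ((TreeLab.encodeAux n (TreeLab.label hG Finset.univ u)).length : ℝ) ≤
        2 + (b : ℝ) * ((b : ℝ) + 1) + 10 * (b : ℝ) := by
      exact_mod_cast hlen
    have hb0 : (0 : ℝ) ≤ (b : ℝ) := Nat.cast_nonneg b
    have hbb : (b : ℝ) * (b : ℝ) ≤ L * L := mul_le_mul hbL hbL hb0 (by linarith)
    have goal : ((TreeLab.encodeAux n (TreeLab.label hG Finset.univ u)).length : ℝ) ≤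
        (1 / 2) * L ^ 2 + 7 * L := by
      nlinarith [hcast, hbb, hbL, hL1]
    exact goal
end

section
/- Let G be a simple graph on a finite vertex type with G.IsTree, and let r, u, v be vertices. Then there exists a vertex w (the nearest common ancestor of u and v with respect to root r) such that G.dist r u = G.dist r w + G.dist w u, G.dist r v = G.dist r w + G.dist w v, and G.dist u v = G.dist u w + G.dist w v. -/
open SimpleGraph

/-- If `p` is a shortest walk from `u` to `v` and `x` lies on it, then distances split. -/
lemma dist_split {V : Type*} [DecidableEq V] {G : SimpleGraph V} (hconn : G.Connected) {u v x : V} (p : G.Walk u v)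
    (hp : p.length = G.dist u v) (hx : x ∈ p.support) :
    G.dist u x + G.dist x v = G.dist u v ∧
    G.dist u x = (p.takeUntil x hx).length ∧ G.dist x v = (p.dropUntil x hx).length := by
  have hsplit : (p.takeUntil x hx).length + (p.dropUntil x hx).length = p.length := by
    have := congr_arg SimpleGraph.Walk.length (p.take_spec hx)
    rwa [SimpleGraph.Walk.length_append] at this
  have h1 : G.dist u x ≤ (p.takeUntil x hx).length := SimpleGraph.dist_le _
  have h2 : G.dist x v ≤ (p.dropUntil x hx).length := SimpleGraph.dist_le _
  have htri : G.dist u v ≤ G.dist u x + G.dist x v := hconn.dist_triangle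
  omega

theorem exists_nca {V : Type*} [Fintype V] (G : SimpleGraph V) (hG : G.IsTree)
    (r u v : V) :
    ∃ w : V,
      G.dist r u = G.dist r w + G.dist w u ∧
      G.dist r v = G.dist r w + G.dist w v ∧
      G.dist u v = G.dist u w + G.dist w v := by
  classical
  have hconn := hG.isConnected
  -- the set of vertices lying on shortest walks from r to both u and v
  let S : Finset V := Finset.univ.filter fun x =>
    G.dist r u = G.dist r x + G.dist x u ∧ G.dist r v = G.dist r x + G.dist x v
  have hrS : r ∈ S := by
    simp [S, SimpleGraph.dist_self]
  have hSne : S.Nonempty := ⟨r, hrS⟩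
  -- pick w in S maximizing dist r w
  obtain ⟨w, hwS, hwmax⟩ := S.exists_max_image (fun x => G.dist r x) hSne
  simp only [S, Finset.mem_filter] at hwS
  obtain ⟨-, hwu, hwv⟩ := hwS
  refine ⟨w, hwu, hwv, ?_⟩
  -- shortest paths from w to u and from w to v
  obtain ⟨p1, hp1path, hp1len⟩ := hconn.exists_path_of_dist w u
  obtain ⟨p2, hp2path, hp2len⟩ := hconn.exists_path_of_dist w v
  -- their supports meet only at w
  have hmeet : ∀ x, x ∈ p1.support → x ∈ p2.support → x = w := by
    intro x hx1 hx2
    obtain ⟨hsum1, -, -⟩ := dist_split hconn p1 hp1len hx1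
    obtain ⟨hsum2, -, -⟩ := dist_split hconn p2 hp2len hx2
    have htru : G.dist r u ≤ G.dist r x + G.dist x u := hconn.dist_triangle
    have htrx : G.dist r x ≤ G.dist r w + G.dist w x := hconn.dist_triangle
    have hx1' : G.dist r u = G.dist r x + G.dist x u := by omega
    have hrx : G.dist r x = G.dist r w + G.dist w x := by omega
    have htrv : G.dist r v ≤ G.dist r x + G.dist x v := hconn.dist_triangle
    have hx2' : G.dist r v = G.dist r x + G.dist x v := by omega
    have hxS : x ∈ S := by simp [S, hx1', hx2']
    have := hwmax x hxS
    have hwx0 : G.dist w x = 0 := by omega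
    have hreach : G.Reachable w x := SimpleGraph.Walk.reachable (p1.takeUntil x hx1)
    exact ((SimpleGraph.Reachable.dist_eq_zero_iff hreach).mp hwx0).symm
  -- the concatenation u → w → v is a path
  have hpath : (p1.reverse.append p2).IsPath := by
    rw [SimpleGraph.Walk.isPath_def, SimpleGraph.Walk.support_append]
    apply List.Nodup.append
    · rw [SimpleGraph.Walk.support_reverse]
      exact List.nodup_reverse.mpr hp1path.support_nodup
    · have hnd := hp2path.support_nodup
      rw [SimpleGraph.Walk.support_eq_cons] at hnd
      exact hnd.of_cons
    · intro x hx1 hx2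
      rw [SimpleGraph.Walk.support_reverse, List.mem_reverse] at hx1
      have hx2' : x ∈ p2.support := List.mem_of_mem_tail hx2
      have hxw : x = w := hmeet x hx1 hx2'
      subst hxw
      have : p2.support = x :: p2.support.tail := SimpleGraph.Walk.support_eq_cons p2
      have hnd := hp2path.support_nodup
      rw [this] at hnd
      exact (List.nodup_cons.mp hnd).1 hx2
  -- in a tree, any path realizes the distance
  obtain ⟨q, hqpath, hqlen⟩ := hconn.exists_path_of_dist u v
  have huniq := (hG.existsUnique_path u v).unique hpath hqpath
  have : (p1.reverse.append p2).length = G.dist u v := by rw [huniq, hqlen]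
  rw [SimpleGraph.Walk.length_append, SimpleGraph.Walk.length_reverse, hp1len, hp2len,
    SimpleGraph.dist_comm (u := w) (v := u)] at this
  omega
end

section
/- Let h ≥ 1, W ≥ 2 and a ≥ 1 be integers with a^h ∣ W. If the (h,W,a)-family admits a leaf distance labeling scheme with N labels, then the (h−1, W²/a², a²)-family admits a leaf distance labeling scheme with M labels for some natural number M with W·M ≤ N². -/
/-- Longest common prefix of two binary strings. -/
def lcp : List Bool → List Bool → List Bool
  | [], _ => []
  | _, [] => []
  | a :: u, b :: v => if a = b then a :: lcp u v else []

/-- An `(h,W,a)`-configuration: it assigns to each binary string `s` of length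
`j < h` a natural number `x s < W / a ^ j`. -/
def IsConfig (h W a : ℕ) (x : List Bool → ℕ) : Prop :=
  ∀ s : List Bool, s.length < h → x s < W / a ^ s.length

/-- The leaf distance induced by an `(h,W,a)`-configuration `x` on binary
strings of length `h`. -/
def leafDist (h W a : ℕ) (x : List Bool → ℕ) (u v : List Bool) : ℕ :=
  if u = v then 0
  else 2 * x (lcp u v) + 2 * ∑ i ∈ Finset.Ico ((lcp u v).length + 1) h, W / a ^ i

lemma lcp_cons (b : Bool) (u v : List Bool) : lcp (b :: u) (b :: v) = b :: lcp u v := by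
  simp [lcp]

lemma lcp_cons_ne (b c : Bool) (u v : List Bool) (hbc : b ≠ c) :
    lcp (b :: u) (c :: v) = [] := by simp [lcp, hbc]

lemma lcp_length_lt : ∀ u v : List Bool, u.length = v.length → u ≠ v →
    (lcp u v).length < u.length
  | [], [], _, hne => absurd rfl hne
  | [], _ :: _, hl, _ => by simp at hl
  | _ :: _, [], hl, _ => by simp at hl
  | a :: u, b :: v, hl, hne => by
    by_cases hab : a = b
    · subst hab
      rw [lcp_cons]
      have hne' : u ≠ v := fun h => hne (by rw [h])
      have := lcp_length_lt u v (by simpa using hl) hne'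
      simpa using this
    · rw [lcp_cons_ne _ _ _ _ hab]; simp

namespace HWA

/-- Tail sums `∑_{i=k}^{h-1} W / a^i`. -/
def T (h W a k : ℕ) : ℕ := ∑ i ∈ Finset.Ico k h, W / a ^ i

lemma T_exists (h W a n : ℕ) : ∃ j, T h W a (j + 2) ≤ n :=
  ⟨h, by simp [T, Finset.Ico_eq_empty (by omega : ¬ h + 2 < h)]⟩

noncomputable def jOf (h W a n : ℕ) : ℕ := Nat.find (T_exists h W a n)

noncomputable def decode (h W a n₁ n₂ : ℕ) : ℕ :=
  2 * ((n₁ / 2 - T h W a (jOf h W a (n₁ / 2) + 2)) * (W / a ^ (jOf h W a (n₁ / 2) + 1))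
      + (n₂ / 2 - T h W a (jOf h W a (n₁ / 2) + 2)))
    + 2 * ∑ i ∈ Finset.Ico (jOf h W a (n₁ / 2) + 1) (h - 1), (W ^ 2 / a ^ 2) / (a ^ 2) ^ i

lemma T_anti (h W a : ℕ) {k l : ℕ} (hkl : k ≤ l) : T h W a l ≤ T h W a k :=
  Finset.sum_le_sum_of_subset (Finset.Ico_subset_Ico hkl le_rfl)

lemma T_split (h W a k : ℕ) (hk : k < h) :
    T h W a k = W / a ^ k + T h W a (k + 1) := by
  rw [T, T, Finset.sum_eq_sum_Ico_succ_bot hk]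

lemma Q_pos (W a i : ℕ) (ha : 1 ≤ a) (hW : 1 ≤ W) (hdvd : a ^ i ∣ W) :
    0 < W / a ^ i :=
  Nat.div_pos (Nat.le_of_dvd hW hdvd) (pow_pos ha i)

lemma jOf_eq (h W a j α : ℕ) (hj2 : j + 2 ≤ h) (hα : α < W / a ^ (j + 1)) :
    jOf h W a (T h W a (j + 2) + α) = j := by
  rw [jOf, Nat.find_eq_iff]
  refine ⟨Nat.le_add_right _ _, fun j' hj' => ?_⟩
  have h1 : T h W a (j + 1) = W / a ^ (j + 1) + T h W a (j + 2) :=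
    T_split h W a (j + 1) (by omega)
  have h2 : T h W a (j + 1) ≤ T h W a (j' + 2) := T_anti h W a (by omega)
  omega

lemma decode_eq (h W a j α β : ℕ) (hj2 : j + 2 ≤ h) (hα : α < W / a ^ (j + 1)) :
    decode h W a (2 * (T h W a (j + 2) + α)) (2 * (T h W a (j + 2) + β))
      = 2 * (α * (W / a ^ (j + 1)) + β)
        + 2 * ∑ i ∈ Finset.Ico (j + 1) (h - 1), (W ^ 2 / a ^ 2) / (a ^ 2) ^ i := by
  rw [decode, Nat.mul_div_cancel_left _ (by norm_num : 0 < 2),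
    Nat.mul_div_cancel_left _ (by norm_num : 0 < 2), jOf_eq h W a j α hj2 hα,
    Nat.add_sub_cancel_left, Nat.add_sub_cancel_left]

lemma decode_zero (h W a : ℕ) (ha : 1 ≤ a) (hW : 1 ≤ W) (hdvd : a ^ h ∣ W) :
    decode h W a 0 0 = 0 := by
  have h02 : (0:ℕ) / 2 = 0 := rfl
  set j₀ := jOf h W a 0 with hj₀
  have h0 : T h W a (j₀ + 2) ≤ 0 := Nat.find_spec (T_exists h W a 0)
  have hge : h ≤ j₀ + 2 := by
    by_contra hc
    push_neg at hc
    have hs : T h W a (j₀ + 2) = W / a ^ (j₀ + 2) + T h W a (j₀ + 3) :=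
      T_split h W a (j₀ + 2) hc
    have hq : 0 < W / a ^ (j₀ + 2) :=
      Q_pos W a _ ha hW (dvd_trans (pow_dvd_pow a (by omega)) hdvd)
    omega
  have hico : Finset.Ico (j₀ + 1) (h - 1) = ∅ := Finset.Ico_eq_empty (by omega)
  rw [decode, h02, ← hj₀, hico]
  simp [h0, Nat.le_zero.mp h0]

lemma pow_div_sq (W a j : ℕ) (ha : 1 ≤ a) (hj : a ^ (j + 1) ∣ W) :
    (W ^ 2 / a ^ 2) / (a ^ 2) ^ j = (W / a ^ (j + 1)) ^ 2 := by
  obtain ⟨m, hm⟩ := hj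
  subst hm
  rw [Nat.mul_div_cancel_left _ (pow_pos ha _), Nat.div_div_eq_div_mul]
  have key : (a ^ (j + 1) * m) ^ 2 = (a ^ 2 * (a ^ 2) ^ j) * m ^ 2 := by ring
  rw [key, Nat.mul_div_cancel_left _ (by positivity)]

end HWA

theorem hWa_scheme_step (h W a : ℕ) (hh : 1 ≤ h) (hW : 2 ≤ W) (ha : 1 ≤ a)
    (hdvd : a ^ h ∣ W) (N : ℕ)
    (hscheme : ∃ d : Fin N → Fin N → ℕ,
      ∀ x : List Bool → ℕ, IsConfig h W a x →
        ∃ e : List Bool → Fin N,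
          ∀ u v : List Bool, u.length = h → v.length = h →
            d (e u) (e v) = leafDist h W a x u v) :
    ∃ M : ℕ, W * M ≤ N ^ 2 ∧
      ∃ d' : Fin M → Fin M → ℕ,
        ∀ x : List Bool → ℕ, IsConfig (h - 1) (W ^ 2 / a ^ 2) (a ^ 2) x →
          ∃ e' : List Bool → Fin M,
            ∀ u v : List Bool, u.length = h - 1 → v.length = h - 1 →
              d' (e' u) (e' v) = leafDist (h - 1) (W ^ 2 / a ^ 2) (a ^ 2) x u v := by
  obtain ⟨d, hd⟩ := hscheme
  have hdvd' : ∀ i, i ≤ h → a ^ i ∣ W := fun i hi => dvd_trans (pow_dvd_pow a hi) hdvd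
  have hQpos : ∀ i, i ≤ h → 0 < W / a ^ i := fun i hi =>
    HWA.Q_pos W a i ha (by omega) (hdvd' i hi)
  set T1 := HWA.T h W a 1 with hT1
  set f : ℕ → Finset (Fin N × Fin N) :=
    fun c => Finset.univ.filter (fun p => d p.1 p.2 = 2 * c + 2 * T1) with hf
  have hWpos : 0 < W := by omega
  obtain ⟨c₀, hc₀mem, hc₀min⟩ := Finset.exists_min_image (Finset.range W)
    (fun c => (f c).card) ⟨0, Finset.mem_range.mpr hWpos⟩
  have hc₀W : c₀ < W := Finset.mem_range.mp hc₀mem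
  have hdisj : ∀ c ∈ Finset.range W, ∀ c' ∈ Finset.range W, c ≠ c' →
      Disjoint (f c) (f c') := by
    intro c _ c' _ hcc
    simp only [Finset.disjoint_left, hf, Finset.mem_filter, Finset.mem_univ, true_and]
    intro p h1 h2
    omega
  have hsum : ∑ c ∈ Finset.range W, (f c).card ≤ N ^ 2 := by
    rw [← Finset.card_biUnion hdisj]
    calc ((Finset.range W).biUnion f).card ≤ Fintype.card (Fin N × Fin N) :=
          Finset.card_le_univ _
      _ = N ^ 2 := by simp [sq]
  have hMbound : W * (f c₀).card ≤ N ^ 2 := by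
    calc W * (f c₀).card = ∑ _c ∈ Finset.range W, (f c₀).card := by
          simp [Finset.sum_const, mul_comm]
      _ ≤ ∑ c ∈ Finset.range W, (f c).card := Finset.sum_le_sum (fun c hc => hc₀min c hc)
      _ ≤ N ^ 2 := hsum
  refine ⟨(f c₀).card, hMbound, ?_⟩
  set M := (f c₀).card with hM
  let eqv : {p // p ∈ f c₀} ≃ Fin M := (f c₀).equivFin
  refine ⟨fun l l' => HWA.decode h W a
      (d (eqv.symm l).1.1 (eqv.symm l').1.1) (d (eqv.symm l).1.2 (eqv.symm l').1.2), ?_⟩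
  intro x' hx'
  -- the induced (h,W,a)-configuration with root value c₀
  set x : List Bool → ℕ := fun s =>
    match s with
    | [] => c₀
    | b :: t => bif b then x' t % (W / a ^ (t.length + 1)) else x' t / (W / a ^ (t.length + 1))
    with hx
  have hbound : ∀ t : List Bool, t.length < h - 1 →
      x' t < (W / a ^ (t.length + 1)) * (W / a ^ (t.length + 1)) := by
    intro t ht
    have := hx' t ht
    rwa [HWA.pow_div_sq W a t.length ha (hdvd' _ (by omega)), sq] at this
  have hxconf : IsConfig h W a x := by
    intro s hs
    match s with
    | [] =>
      show c₀ < W / a ^ (0:ℕ)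
      simpa using hc₀W
    | b :: t =>
      have ht : t.length < h - 1 := by
        simp only [List.length_cons] at hs; omega
      have hq := hQpos (t.length + 1) (by omega)
      have hb := hbound t ht
      cases b
      · show x' t / (W / a ^ (t.length + 1)) < W / a ^ (t.length + 1)
        exact (Nat.div_lt_iff_lt_mul hq).mpr hb
      · show x' t % (W / a ^ (t.length + 1)) < W / a ^ (t.length + 1)
        exact Nat.mod_lt _ hq
  obtain ⟨e, he⟩ := hd x hxconf
  set pad : List Bool → List Bool :=
    fun w => if w.length = h - 1 then w else List.replicate (h - 1) false with hpad
  have hpadlen : ∀ w : List Bool, (pad w).length = h - 1 := by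
    intro w
    show (if w.length = h - 1 then w else List.replicate (h - 1) false).length = h - 1
    split <;> simp [*]
  have hmem : ∀ w : List Bool, (e (false :: pad w), e (true :: pad w)) ∈ f c₀ := by
    intro w
    have h1 : (false :: pad w).length = h := by simp [hpadlen w]; omega
    have h2 : (true :: pad w).length = h := by simp [hpadlen w]; omega
    have hev := he (false :: pad w) (true :: pad w) h1 h2
    simp only [hf, Finset.mem_filter, Finset.mem_univ, true_and]
    rw [hev, leafDist, if_neg (by simp), lcp_cons_ne _ _ _ _ (by simp)]
    show 2 * c₀ + 2 * ∑ i ∈ Finset.Ico (0 + 1) h, W / a ^ i = 2 * c₀ + 2 * T1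
    rfl
  refine ⟨fun w => eqv ⟨(e (false :: pad w), e (true :: pad w)), hmem w⟩, ?_⟩
  intro u v hu hv
  have hpu : pad u = u := by rw [hpad]; exact if_pos hu
  have hpv : pad v = v := by rw [hpad]; exact if_pos hv
  simp only [Equiv.symm_apply_apply, hpu, hpv]
  have hlu : (false :: u).length = h := by simp [hu]; omega
  have hlv : (false :: v).length = h := by simp [hv]; omega
  have hlu' : (true :: u).length = h := by simp [hu]; omega
  have hlv' : (true :: v).length = h := by simp [hv]; omega
  by_cases huv : u = v
  · subst huv
    have e1 : d (e (false :: u)) (e (false :: u)) = 0 := by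
      rw [he _ _ hlu hlu, leafDist, if_pos rfl]
    have e2 : d (e (true :: u)) (e (true :: u)) = 0 := by
      rw [he _ _ hlu' hlu', leafDist, if_pos rfl]
    rw [e1, e2, HWA.decode_zero h W a ha (by omega) hdvd, leafDist, if_pos rfl]
  · set s := lcp u v with hs
    have hsl : s.length < h - 1 := by
      have h3 := lcp_length_lt u v (by rw [hu, hv]) huv
      rw [← hs, hu] at h3
      exact h3
    have hq := hQpos (s.length + 1) (by omega)
    have hα : x' s / (W / a ^ (s.length + 1)) < W / a ^ (s.length + 1) :=
      (Nat.div_lt_iff_lt_mul hq).mpr (hbound s hsl)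
    have hne1 : (false :: u) ≠ (false :: v) := by simpa using huv
    have hne2 : (true :: u) ≠ (true :: v) := by simpa using huv
    have e1 : d (e (false :: u)) (e (false :: v)) =
        2 * (HWA.T h W a (s.length + 2) + x' s / (W / a ^ (s.length + 1))) := by
      rw [he _ _ hlu hlv, leafDist, if_neg hne1, lcp_cons, ← hs]
      show 2 * (x' s / (W / a ^ (s.length + 1)))
          + 2 * ∑ i ∈ Finset.Ico (s.length + 1 + 1) h, W / a ^ i = _
      rw [show s.length + 1 + 1 = s.length + 2 from rfl]
      show 2 * (x' s / (W / a ^ (s.length + 1))) + 2 * HWA.T h W a (s.length + 2) = _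
      ring
    have e2 : d (e (true :: u)) (e (true :: v)) =
        2 * (HWA.T h W a (s.length + 2) + x' s % (W / a ^ (s.length + 1))) := by
      rw [he _ _ hlu' hlv', leafDist, if_neg hne2, lcp_cons, ← hs]
      show 2 * (x' s % (W / a ^ (s.length + 1)))
          + 2 * ∑ i ∈ Finset.Ico (s.length + 1 + 1) h, W / a ^ i = _
      rw [show s.length + 1 + 1 = s.length + 2 from rfl]
      show 2 * (x' s % (W / a ^ (s.length + 1))) + 2 * HWA.T h W a (s.length + 2) = _
      ring
    rw [e1, e2, HWA.decode_eq h W a s.length _ _ (by omega) hα,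
      leafDist, if_neg huv, ← hs]
    have hdm : x' s / (W / a ^ (s.length + 1)) * (W / a ^ (s.length + 1))
        + x' s % (W / a ^ (s.length + 1)) = x' s := Nat.div_add_mod' _ _
    rw [hdm]
end
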